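/- arXiv:1504.01941 — 10 statements merged into one kernel-verified Lean document; each statement's English description precedes it below -/
import Mathlib

section
/- For every g ∈ S_n and all indices a, b ∈ Fin n, the matrix identity P(g)·Q_{a,b} = Q_{g(a),g(b)}·P(g) holds. (This is the matrix form of the defining relation g·X_{a,b} = X_{g(a),g(b)}·g of the twisted group algebra A(S_n), and shows that the map ρ(p·g) = ρ₁(p)·ρ₂(g) is a representation of A(S_n).) -/
/-- The square complex matrices indexed by the symmetric group `Equiv.Perm (Fin n)`. -/
abbrev PermMatrix (n : ℕ) := Matrix (Equiv.Perm (Fin n)) (Equiv.Perm (Fin n)) ℂ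

/-- The permutation matrix `P(g)` of the right regular representation:
`P(g) σ τ = 1` if `σ = τ ∘ g⁻¹` and `0` otherwise. -/
def permMat (n : ℕ) (g : Equiv.Perm (Fin n)) : PermMatrix n :=
  fun σ τ => if σ = τ * g⁻¹ then 1 else 0

/-- The diagonal matrix `Q_{a,b}` whose diagonal entry at `τ` is `q (τ a) (τ b)`. -/
def Qmat (n : ℕ) (q : Fin n → Fin n → ℂ) (a b : Fin n) : PermMatrix n :=
  Matrix.diagonal fun τ => q (τ a) (τ b)

/-- The matrix form `P(g) · Q_{a,b} = Q_{g(a),g(b)} · P(g)` of the defining relation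
`g · X_{a,b} = X_{g(a),g(b)} · g` of the twisted group algebra `A(S_n)`. -/
theorem permMat_mul_Qmat (n : ℕ) (hn : 1 ≤ n) (q : Fin n → Fin n → ℂ)
    (g : Equiv.Perm (Fin n)) (a b : Fin n) :
    permMat n g * Qmat n q a b = Qmat n q (g a) (g b) * permMat n g := by
  ext σ τ
  simp only [permMat, Qmat, Matrix.mul_apply, Matrix.diagonal, Matrix.of_apply,
    ite_mul, mul_ite, one_mul, mul_one, zero_mul, mul_zero]
  rw [Finset.sum_eq_single τ, Finset.sum_eq_single σ] <;>
    simp +contextual [eq_comm, Equiv.Perm.mul_apply, eq_mul_inv_iff_mul_eq]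
end

section
/- For every g ∈ S_n, the product of the diagonal matrices Q_{a,b} over all inversions (a,b) ∈ I(g⁻¹), multiplied on the right by the permutation matrix P(g), equals M_q(g); that is, (∏_{(a,b)∈I(g⁻¹)} Q_{a,b})·P(g) = M_q(g). Equivalently, the representation ρ applied to the element g* = (∏_{(a,b)∈I(g⁻¹)} X_{a,b})·g of the twisted group algebra sends the basis vector indexed by τ to ∏_{(a,b)∈I(g)} q(τ(b), τ(a)) times the basis vector indexed by τ∘g⁻¹. -/
/-- The set of inversions `I(g) = {(a,b) : a < b and g(a) > g(b)}` of a permutation. -/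
def invSet {n : ℕ} (g : Equiv.Perm (Fin n)) : Finset (Fin n × Fin n) :=
  Finset.univ.filter fun p => p.1 < p.2 ∧ g p.2 < g p.1

/-- The matrix `M_q(g)` of `ρ(g*)`, with `(σ,τ)`-entry `∏_{(a,b) ∈ I(g)} q (τ b) (τ a)`
if `σ = τ ∘ g⁻¹` and `0` otherwise. -/
def twistMat (n : ℕ) (q : Fin n → Fin n → ℂ) (g : Equiv.Perm (Fin n)) : PermMatrix n :=
  fun σ τ => if σ = τ * g⁻¹ then ∏ p ∈ invSet g, q (τ p.2) (τ p.1) else 0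

/-- The (pairwise commuting) diagonal matrices `Q_{a,b}`, multiplied over all inversions
`(a,b) ∈ I(g⁻¹)` and then multiplied on the right by the permutation matrix `P(g)`,
give exactly the matrix `M_q(g)` of `ρ(g*)`. -/
theorem prod_Qmat_mul_permMat (n : ℕ) (hn : 1 ≤ n) (q : Fin n → Fin n → ℂ)
    (g : Equiv.Perm (Fin n)) :
    (invSet g⁻¹).noncommProd (fun p => Qmat n q p.1 p.2)
        (fun x _ y _ _ => by
          show _ * _ = _ * _
          unfold Qmat
          rw [Matrix.diagonal_mul_diagonal, Matrix.diagonal_mul_diagonal]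
          exact congrArg Matrix.diagonal (funext fun τ => mul_comm _ _)) *
      permMat n g = twistMat n q g := by
  have key : (invSet g⁻¹).noncommProd (fun p => Qmat n q p.1 p.2)
        (fun x _ y _ _ => by
          show _ * _ = _ * _
          unfold Qmat
          rw [Matrix.diagonal_mul_diagonal, Matrix.diagonal_mul_diagonal]
          exact congrArg Matrix.diagonal (funext fun τ => mul_comm _ _)) =
      Matrix.diagonal (fun τ => ∏ p ∈ invSet g⁻¹, q (τ p.1) (τ p.2)) := by
    set D : ((Equiv.Perm (Fin n)) → ℂ) →* PermMatrix n :=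
      (Matrix.diagonalRingHom (Equiv.Perm (Fin n)) ℂ).toMonoidHom with hD
    have h2 := Finset.map_noncommProd (invSet g⁻¹)
      (fun p : Fin n × Fin n => (fun τ : Equiv.Perm (Fin n) => q (τ p.1) (τ p.2)))
      (fun x _ y _ _ => mul_comm _ _) D
    rw [Finset.noncommProd_eq_prod] at h2
    have h3 : D (∏ p ∈ invSet g⁻¹,
        (fun τ : Equiv.Perm (Fin n) => q (τ p.1) (τ p.2))) =
        Matrix.diagonal (fun τ => ∏ p ∈ invSet g⁻¹, q (τ p.1) (τ p.2)) := by
      show Matrix.diagonal _ = _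
      refine congrArg Matrix.diagonal (funext fun τ => ?_)
      exact Finset.prod_apply τ (invSet g⁻¹) _
    rw [h3] at h2
    exact h2.symm
  rw [key]
  ext σ τ
  rw [Matrix.diagonal_mul]
  simp only [permMat, twistMat]
  by_cases h : σ = τ * g⁻¹
  · rw [if_pos h, if_pos h, mul_one]
    show (∏ p ∈ invSet g⁻¹, q ((σ : Equiv.Perm (Fin n)) p.1) (σ p.2)) = _
    subst h
    refine Finset.prod_nbij' (fun p => (g⁻¹ p.2, g⁻¹ p.1)) (fun p => (g p.2, g p.1))
      ?_ ?_ ?_ ?_ ?_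
    · intro p hp
      simp only [invSet, Finset.mem_filter, Finset.mem_univ, true_and] at hp ⊢
      exact ⟨hp.2, by simpa using hp.1⟩
    · intro p hp
      simp only [invSet, Finset.mem_filter, Finset.mem_univ, true_and] at hp ⊢
      exact ⟨hp.2, by simpa using hp.1⟩
    · intro p _; simp
    · intro p _; simp
    · intro p _
      simp [Equiv.Perm.mul_apply]
  · simp [h]
end

section
/- In the polynomial ring R_n = MvPolynomial ((Fin n) × (Fin n)) ℂ with variables X_{a,b}, let S_n act by permuting variables via g • X_{a,b} = X_{g(a),g(b)}. Then for all g₁, g₂ ∈ S_n: (∏_{(a,b)∈I(g₁⁻¹)} X_{a,b}) · (g₁ • ∏_{(a,b)∈I(g₂⁻¹)} X_{a,b}) = (∏_{(a,b)∈I(g₁⁻¹)∖I((g₁g₂)⁻¹)} X_{a,b}) · (∏_{(a,b)∈I((g₁g₂)⁻¹)} X_{a,b}). (This is the multiplication rule g₁*·g₂* = X(g₁,g₂)·(g₁g₂)* in the twisted group algebra A(S_n).) -/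
open MvPolynomial

lemma mem_invSet {n : ℕ} {g : Equiv.Perm (Fin n)} {p : Fin n × Fin n} :
    p ∈ invSet g ↔ p.1 < p.2 ∧ g p.2 < g p.1 := by
  simp [invSet]

/-- In the polynomial ring `R_n = MvPolynomial ((Fin n) × (Fin n)) ℂ`, where `S_n` acts by
permuting variables via `g • X_{a,b} = X_{g(a),g(b)}` (i.e. by `rename`), the product
`g₁* · g₂* = X(g₁,g₂) · (g₁g₂)*` rule of the twisted group algebra `A(S_n)` holds:
`(∏_{(a,b)∈I(g₁⁻¹)} X_{a,b}) · (g₁ • ∏_{(a,b)∈I(g₂⁻¹)} X_{a,b})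
  = (∏_{(a,b)∈I(g₁⁻¹)∖I((g₁g₂)⁻¹)} X_{{a,b}}) · (∏_{(a,b)∈I((g₁g₂)⁻¹)} X_{a,b})`,
where `X_{{a,b}} = X_{a,b} · X_{b,a}` is the product of the two orientations of the
variable indexed by the unordered pair `{a,b}`. -/
theorem twisted_mul_rule (n : ℕ) (hn : 1 ≤ n) (g₁ g₂ : Equiv.Perm (Fin n)) :
    (∏ p ∈ invSet g₁⁻¹, (X p : MvPolynomial (Fin n × Fin n) ℂ)) *
        MvPolynomial.rename (fun p : Fin n × Fin n => (g₁ p.1, g₁ p.2))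
          (∏ p ∈ invSet g₂⁻¹, (X p : MvPolynomial (Fin n × Fin n) ℂ)) =
      (∏ p ∈ invSet g₁⁻¹ \ invSet (g₁ * g₂)⁻¹,
          (X p * X (p.2, p.1) : MvPolynomial (Fin n × Fin n) ℂ)) *
        ∏ p ∈ invSet (g₁ * g₂)⁻¹, (X p : MvPolynomial (Fin n × Fin n) ℂ) := by
  classical
  set A := invSet g₁⁻¹ with hA
  set B := invSet g₂⁻¹ with hB
  set C := invSet (g₁ * g₂)⁻¹ with hC
  set f : Fin n × Fin n → Fin n × Fin n := fun p => (g₁ p.1, g₁ p.2) with hf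
  set r : Fin n × Fin n → Fin n × Fin n := fun p => (p.2, p.1) with hr
  have hfinj : ∀ p ∈ B, ∀ q ∈ B, f p = f q → p = q := by
    intro p _ q _ h
    simp only [hf, Prod.mk.injEq] at h
    exact Prod.ext (g₁.injective h.1) (g₁.injective h.2)
  have hrinj : ∀ p ∈ A \ C, ∀ q ∈ A \ C, r p = r q → p = q := by
    intro p _ q _ h
    simp only [hr, Prod.mk.injEq] at h
    exact Prod.ext h.2 h.1
  have hCapp : ∀ x, (g₁ * g₂)⁻¹ x = g₂⁻¹ (g₁⁻¹ x) := by
    intro x; simp [Equiv.Perm.mul_apply]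
  -- key set identity
  have hset : A ∪ B.image f = ((A \ C) ∪ (A \ C).image r) ∪ C := by
    ext q
    obtain ⟨x, y⟩ := q
    simp only [hA, hB, hC, Finset.mem_union, Finset.mem_image, Finset.mem_sdiff, mem_invSet,
      hCapp, hr, hf, Prod.mk.injEq, Prod.exists]
    constructor
    · rintro (hq | ⟨a, b, ⟨hab, hba⟩, hx, hy⟩)
      · by_cases hc : x < y ∧ g₂⁻¹ (g₁⁻¹ y) < g₂⁻¹ (g₁⁻¹ x)
        · exact Or.inr hc
        · exact Or.inl (Or.inl ⟨hq, hc⟩)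
      · subst hx; subst hy
        rcases lt_trichotomy (g₁ a) (g₁ b) with hlt | heq | hgt
        · refine Or.inr ⟨hlt, ?_⟩
          simpa using hba
        · exact absurd (g₁.injective heq) hab.ne
        · refine Or.inl (Or.inr ⟨g₁ b, g₁ a, ⟨⟨hgt, by simpa using hab⟩, ?_⟩, rfl, rfl⟩)
          rintro ⟨-, h2⟩
          simp only [Equiv.Perm.coe_inv, Equiv.symm_apply_apply] at h2
          exact absurd h2 (not_lt.mpr hba.le)
    · rintro ((⟨hq, -⟩ | ⟨a, b, ⟨⟨hab, hba⟩, hnc⟩, hx, hy⟩) | ⟨hxy, hc⟩)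
      · exact Or.inl hq
      · -- q = (b, a) with (a,b) ∈ A \ C
        subst hx; subst hy
        refine Or.inr ⟨g₁⁻¹ b, g₁⁻¹ a, ⟨hba, ?_⟩,
          g₁.apply_symm_apply b, g₁.apply_symm_apply a⟩
        by_contra hle
        exact hnc ⟨hab, lt_of_le_of_ne (not_lt.mp hle)
          (fun h => hab.ne (g₁⁻¹.injective (g₂⁻¹.injective h)).symm)⟩
      · -- q = (x,y) ∈ C
        by_cases hq : g₁⁻¹ y < g₁⁻¹ x
        · exact Or.inl ⟨hxy, hq⟩
        · refine Or.inr ⟨g₁⁻¹ x, g₁⁻¹ y, ⟨?_, hc⟩, by simp, by simp⟩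
          exact lt_of_le_of_ne (not_lt.mp hq)
            (fun h => hxy.ne (g₁⁻¹.injective h))
    -- disjointness facts
  have hd1 : Disjoint A (B.image f) := by
    rw [Finset.disjoint_left]
    rintro q hq hq'
    simp only [Finset.mem_image, Prod.exists] at hq'
    obtain ⟨a, b, hab, hq'⟩ := hq'
    rw [hA, mem_invSet] at hq
    rw [hB, mem_invSet] at hab
    subst hq'
    simp only [hf, Equiv.Perm.coe_inv, Equiv.symm_apply_apply] at hq
    exact absurd hq.2 (not_lt.mpr hab.1.le)
  have hd2 : Disjoint (A \ C) ((A \ C).image r) := by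
    rw [Finset.disjoint_left]
    rintro q hq hq'
    simp only [Finset.mem_image, Prod.exists] at hq'
    obtain ⟨a, b, hab, hq'⟩ := hq'
    rw [hA, hC, Finset.mem_sdiff, mem_invSet] at hq hab
    subst hq'
    exact absurd hq.1.1 (not_lt.mpr hab.1.1.le)
  have hd3 : Disjoint ((A \ C) ∪ (A \ C).image r) C := by
    rw [Finset.disjoint_left]
    rintro q hq hq'
    rcases Finset.mem_union.mp hq with h | h
    · exact (Finset.mem_sdiff.mp h).2 hq'
    · simp only [Finset.mem_image, Prod.exists] at h
      obtain ⟨a, b, hab, heq⟩ := h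
      rw [hA, hC, Finset.mem_sdiff, mem_invSet] at hab
      rw [hC, mem_invSet] at hq'
      subst heq
      exact absurd hq'.1 (not_lt.mpr hab.1.1.le)
  -- now compute products
  calc (∏ p ∈ A, (X p : MvPolynomial (Fin n × Fin n) ℂ)) *
        MvPolynomial.rename f (∏ p ∈ B, (X p : MvPolynomial (Fin n × Fin n) ℂ))
      = (∏ p ∈ A, (X p : MvPolynomial (Fin n × Fin n) ℂ)) *
        ∏ p ∈ B.image f, (X p : MvPolynomial (Fin n × Fin n) ℂ) := by
        rw [map_prod, Finset.prod_image hfinj]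
        simp [rename_X]
    _ = ∏ p ∈ A ∪ B.image f, (X p : MvPolynomial (Fin n × Fin n) ℂ) :=
        (Finset.prod_union hd1).symm
    _ = ∏ p ∈ ((A \ C) ∪ (A \ C).image r) ∪ C, (X p : MvPolynomial (Fin n × Fin n) ℂ) := by
        rw [hset]
    _ = ((∏ p ∈ A \ C, (X p : MvPolynomial (Fin n × Fin n) ℂ)) *
          ∏ p ∈ (A \ C).image r, (X p : MvPolynomial (Fin n × Fin n) ℂ)) *
          ∏ p ∈ C, (X p : MvPolynomial (Fin n × Fin n) ℂ) := by
        rw [Finset.prod_union hd3, Finset.prod_union hd2]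
    _ = (∏ p ∈ A \ C, (X p * X (p.2, p.1) : MvPolynomial (Fin n × Fin n) ℂ)) *
          ∏ p ∈ C, (X p : MvPolynomial (Fin n × Fin n) ℂ) := by
        rw [Finset.prod_mul_distrib, Finset.prod_image hrinj]
end

section
/- Every permutation g ∈ S_n can be written uniquely as an ordered product of cycles g = t_{k_n,n} · t_{k_{n-1},n-1} ⋯ t_{k_2,2} · t_{k_1,1}, where for each j the index k_j satisfies j ≤ k_j ≤ n. That is, the map sending a tuple (k_1, …, k_n) with j ≤ k_j ≤ n to the product t_{k_n,n}·t_{k_{n-1},n-1}⋯t_{k_1,1} is a bijection onto S_n. -/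
/-- `IsTCycle a b s` says that `s` is the cycle `t_{b,a}` (for `a ≤ b`):
`s i = i + 1` for `a ≤ i ≤ b - 1`, `s b = a`, and `s i = i` otherwise
(in particular `t_{b,b} = id`). -/
def IsTCycle {n : ℕ} (a b : Fin n) (s : Equiv.Perm (Fin n)) : Prop :=
  (∀ i : Fin n, a ≤ i → i < b → (s i : ℕ) = (i : ℕ) + 1) ∧ s b = a ∧
    ∀ i : Fin n, ¬(a ≤ i ∧ i ≤ b) → s i = i

section Aux

variable {n : ℕ} (t : Fin n → Fin n → Equiv.Perm (Fin n))

/-- The partial product `t_{k_{n-1},n-1} ⋯ t_{k_m,m}`. -/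
private def Fprod (k : Fin n → Fin n) (m : ℕ) : Equiv.Perm (Fin n) :=
  (((List.finRange n).drop m).reverse.map (fun j => t (k j) j)).prod

private lemma Fprod_top (k : Fin n → Fin n) (m : ℕ) (h : n ≤ m) : Fprod t k m = 1 := by
  unfold Fprod
  rw [List.drop_eq_nil_of_le (by simpa using h)]
  simp

private lemma Fprod_succ (k : Fin n → Fin n) (m : ℕ) (h : m < n) :
    Fprod t k m = Fprod t k (m + 1) * t (k ⟨m, h⟩) ⟨m, h⟩ := by
  unfold Fprod
  rw [List.drop_eq_getElem_cons (by simpa using h), List.reverse_cons, List.map_append,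
    List.prod_append]
  simp

private lemma Fprod_congr (k k' : Fin n → Fin n) :
    ∀ d m, m + d = n → (∀ j : Fin n, m ≤ (j : ℕ) → k j = k' j) →
      Fprod t k m = Fprod t k' m := by
  intro d
  induction d with
  | zero =>
    intro m hm _
    rw [Fprod_top t k m (by omega), Fprod_top t k' m (by omega)]
  | succ d ih =>
    intro m hm hj
    have hmn : m < n := by omega
    rw [Fprod_succ t k m hmn, Fprod_succ t k' m hmn,
      ih (m + 1) (by omega) (fun j hj' => hj j (by omega)), hj ⟨m, hmn⟩ (le_refl _)]

private lemma Fprod_fix (ht : ∀ a b : Fin n, a ≤ b → IsTCycle a b (t b a)) (k : Fin n → Fin n) (hk : ∀ j, j ≤ k j) :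
    ∀ d m, m + d = n → ∀ i : Fin n, (i : ℕ) < m → Fprod t k m i = i := by
  intro d
  induction d with
  | zero =>
    intro m hm i hi
    rw [Fprod_top t k m (by omega)]
    rfl
  | succ d ih =>
    intro m hm i hi
    have hmn : m < n := by omega
    rw [Fprod_succ t k m hmn]
    have h1 : t (k ⟨m, hmn⟩) ⟨m, hmn⟩ i = i := by
      apply (ht _ _ (hk _)).2.2
      rintro ⟨h, -⟩
      have h2 : m ≤ (i : ℕ) := h
      omega
    rw [Equiv.Perm.mul_apply, h1]
    exact ih (m + 1) (by omega) i (by omega)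

private lemma Fprod_surj (ht : ∀ a b : Fin n, a ≤ b → IsTCycle a b (t b a)) :
    ∀ d m, m + d = n → ∀ g : Equiv.Perm (Fin n), (∀ i : Fin n, (i : ℕ) < m → g i = i) →
      ∃ k : Fin n → Fin n, (∀ j, j ≤ k j) ∧ Fprod t k m = g := by
  intro d
  induction d with
  | zero =>
    intro m hm g hg
    refine ⟨id, fun j => le_refl _, ?_⟩
    have hg1 : g = 1 := by
      ext i
      have := hg i (by omega)
      simpa using congrArg Fin.val this
    rw [hg1, Fprod_top t id m (by omega)]
  | succ d ih =>
    intro m hm g hg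
    have hmn : m < n := by omega
    set b := g.symm ⟨m, hmn⟩ with hb
    have hgb : g b = ⟨m, hmn⟩ := Equiv.apply_symm_apply g _
    have hmb : (⟨m, hmn⟩ : Fin n) ≤ b := by
      rw [Fin.le_def]
      show m ≤ (b : ℕ)
      by_contra hlt
      push_neg at hlt
      have hfix := hg b hlt
      rw [hfix] at hgb
      have hbm : (b : ℕ) = m := congrArg Fin.val hgb
      omega
    have hg' : ∀ i : Fin n, (i : ℕ) < m + 1 → (g * (t b ⟨m, hmn⟩)⁻¹) i = i := by
      intro i hi
      rcases Nat.lt_or_ge (i : ℕ) m with hlt | hge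
      · have hfix : t b ⟨m, hmn⟩ i = i := by
          apply (ht _ _ hmb).2.2
          rintro ⟨h, -⟩
          have h2 : m ≤ (i : ℕ) := h
          omega
        have hfix' : (t b ⟨m, hmn⟩)⁻¹ i = i := by
          rw [Equiv.Perm.inv_eq_iff_eq]
          exact hfix.symm
        rw [Equiv.Perm.mul_apply, hfix']
        exact hg i hlt
      · have him : i = ⟨m, hmn⟩ := Fin.ext (show (i : ℕ) = m by omega)
        have htb : t b ⟨m, hmn⟩ b = ⟨m, hmn⟩ := (ht _ _ hmb).2.1
        have hinv : (t b ⟨m, hmn⟩)⁻¹ ⟨m, hmn⟩ = b := by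
          rw [Equiv.Perm.inv_eq_iff_eq]
          exact htb.symm
        rw [him, Equiv.Perm.mul_apply, hinv, hgb]
    obtain ⟨k', hk', hF'⟩ := ih (m + 1) (by omega) (g * (t b ⟨m, hmn⟩)⁻¹) hg'
    refine ⟨Function.update k' ⟨m, hmn⟩ b, ?_, ?_⟩
    · intro j
      by_cases hj : j = ⟨m, hmn⟩
      · subst hj
        rw [Function.update_self]
        exact hmb
      · rw [Function.update_of_ne hj]
        exact hk' j
    · have hcong : Fprod t (Function.update k' ⟨m, hmn⟩ b) (m + 1) = Fprod t k' (m + 1) := by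
        apply Fprod_congr t _ k' d (m + 1) (by omega)
        intro j hjm
        apply Function.update_of_ne
        intro h
        have := congrArg Fin.val h
        simp at this
        omega
      rw [Fprod_succ t _ m hmn, Function.update_self, hcong, hF']
      group

private lemma Fprod_inj (ht : ∀ a b : Fin n, a ≤ b → IsTCycle a b (t b a)) :
    ∀ d m, m + d = n → ∀ k k' : Fin n → Fin n, (∀ j, j ≤ k j) → (∀ j, j ≤ k' j) →
      Fprod t k m = Fprod t k' m → ∀ j : Fin n, m ≤ (j : ℕ) → k j = k' j := by
  intro d
  induction d with
  | zero =>
    intro m hm k k' _ _ _ j hj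
    exact absurd j.isLt (by omega)
  | succ d ih =>
    intro m hm k k' hk hk' heq j hj
    have hmn : m < n := by omega
    have key : ∀ c : Fin n → Fin n, (∀ j, j ≤ c j) → Fprod t c m (c ⟨m, hmn⟩) = ⟨m, hmn⟩ := by
      intro c hc
      rw [Fprod_succ t c m hmn, Equiv.Perm.mul_apply, (ht _ _ (hc ⟨m, hmn⟩)).2.1]
      exact Fprod_fix t ht c hc d (m + 1) (by omega) _ (by simp)
    have h1 := key k hk
    have h2 := key k' hk'
    rw [heq] at h1
    have hkm : k ⟨m, hmn⟩ = k' ⟨m, hmn⟩ := (Fprod t k' m).injective (h1.trans h2.symm)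
    have heq' : Fprod t k (m + 1) = Fprod t k' (m + 1) := by
      have := heq
      rw [Fprod_succ t k m hmn, Fprod_succ t k' m hmn, hkm] at this
      exact mul_right_cancel this
    rcases Nat.lt_or_ge (j : ℕ) (m + 1) with hlt | hge
    · have : j = ⟨m, hmn⟩ := Fin.ext (show (j : ℕ) = m by omega)
      rw [this]
      exact hkm
    · exact ih (m + 1) (by omega) k k' hk hk' heq' j hge

end Aux

/-- Every permutation `g ∈ S_n` can be written uniquely as an ordered product of cycles
`g = t_{k_n,n} · t_{k_{n-1},n-1} ⋯ t_{k_2,2} · t_{k_1,1}` with `j ≤ k_j ≤ n` for each `j`: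
the map sending such a tuple `(k_1, …, k_n)` to this product is a bijection onto `S_n`. -/
theorem cycle_decomposition_bijective (n : ℕ) (hn : 1 ≤ n)
    (t : Fin n → Fin n → Equiv.Perm (Fin n))
    (ht : ∀ a b : Fin n, a ≤ b → IsTCycle a b (t b a)) :
    Function.Bijective
      (fun k : {f : Fin n → Fin n // ∀ j, j ≤ f j} =>
        ((List.finRange n).reverse.map fun j => t (k.1 j) j).prod) := by
  have hFeq : ∀ k : {f : Fin n → Fin n // ∀ j, j ≤ f j},
      ((List.finRange n).reverse.map fun j => t (k.1 j) j).prod = Fprod t k.1 0 := by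
    intro k
    unfold Fprod
    rw [List.drop_zero]
  constructor
  · rintro ⟨k, hk⟩ ⟨k', hk'⟩ h
    simp only [hFeq] at h
    exact Subtype.ext (funext fun j =>
      Fprod_inj t ht n 0 (by omega) k k' hk hk' h j (Nat.zero_le _))
  · intro g
    obtain ⟨k, hk, hF⟩ := Fprod_surj t ht n 0 (by omega) g (fun i hi => absurd hi (by omega))
    exact ⟨⟨k, hk⟩, (hFeq ⟨k, hk⟩).trans hF⟩
end

section
/- Let F_k := ∑_{m=k}^{n} M_q(t_{m,k}) for 1 ≤ k ≤ n (so F_n = I). Then the sum of the matrices M_q(g) over all permutations factors as the ordered product ∑_{g∈S_n} M_q(g) = F_n · F_{n-1} ⋯ F_2 · F_1, with the factor F_k appearing to the left of F_{k'} whenever k > k'. (This is the matrix form of the factorization α*_n = β*_1·β*_2⋯β*_n in the twisted group algebra A(S_n), where β*_{n-k+1} = ∑_{m=k}^{n} t*_{m,k}.) -/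
theorem Equiv.Perm.inv_apply_self {α : Type*} (f : Equiv.Perm α) (x : α) : f⁻¹ (f x) = x :=
  f.symm_apply_apply x

theorem Equiv.Perm.apply_inv_self {α : Type*} (f : Equiv.Perm α) (x : α) : f (f⁻¹ x) = x :=
  f.apply_symm_apply x

namespace TwistAux

variable {n : ℕ}

lemma mem_invSet {g : Equiv.Perm (Fin n)} {p : Fin n × Fin n} :
    p ∈ invSet g ↔ p.1 < p.2 ∧ g p.2 < g p.1 := by
  simp [invSet]

lemma invSet_one : invSet (1 : Equiv.Perm (Fin n)) = ∅ := by
  ext p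
  simp only [mem_invSet, Equiv.Perm.one_apply, Finset.notMem_empty, iff_false, not_and]
  exact fun h1 => not_lt.2 h1.le

lemma twistMat_one (q : Fin n → Fin n → ℂ) : twistMat n q 1 = 1 := by
  ext σ τ
  simp [twistMat, invSet_one, Matrix.one_apply]


variable {k m : Fin n} {s g' : Equiv.Perm (Fin n)}

lemma inv_fix {s : Equiv.Perm (Fin n)} {i : Fin n} (h : s i = i) : s⁻¹ i = i := by
  conv_lhs => rw [← h]
  exact Equiv.Perm.inv_apply_self s i

lemma tfix (hs : IsTCycle k m s) {i : Fin n} (h : (i : ℕ) < k ∨ (m : ℕ) < i) : s i = i := by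
  refine hs.2.2 i fun hc => ?_
  have h1 := Fin.le_def.1 hc.1
  have h2 := Fin.le_def.1 hc.2
  omega

lemma sinv_k (hs : IsTCycle k m s) : s⁻¹ k = m := by
  rw [← hs.2.1]; exact Equiv.Perm.inv_apply_self s m

lemma sval_le (hkm : k ≤ m) (hs : IsTCycle k m s) {i : Fin n} (h : (i : ℕ) ≤ m) :
    (s i : ℕ) ≤ m := by
  rcases lt_or_ge (i : ℕ) (k : ℕ) with h1 | h1
  · rw [tfix hs (Or.inl h1)]; omega
  · rcases eq_or_lt_of_le h with h2 | h2
    · have : i = m := Fin.ext h2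
      rw [this, hs.2.1]; exact Fin.le_def.1 hkm
    · rw [hs.1 i (Fin.le_def.2 h1) (Fin.lt_def.2 h2)]; omega

lemma sinv_val (hs : IsTCycle k m s) {d : Fin n} (h1 : k < d) (h2 : d ≤ m) :
    (s⁻¹ d : ℕ) = (d : ℕ) - 1 := by
  have h1' := Fin.lt_def.1 h1
  have h2' := Fin.le_def.1 h2
  have hd : (d : ℕ) - 1 < n := by omega
  have hkj : k ≤ (⟨(d : ℕ) - 1, hd⟩ : Fin n) := Fin.le_def.2 (show (k : ℕ) ≤ (d : ℕ) - 1 by omega)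
  have hjm : (⟨(d : ℕ) - 1, hd⟩ : Fin n) < m := Fin.lt_def.2 (show (d : ℕ) - 1 < (m : ℕ) by omega)
  have hsj : s ⟨(d : ℕ) - 1, hd⟩ = d :=
    Fin.ext (by rw [hs.1 _ hkj hjm]; show (d : ℕ) - 1 + 1 = d; omega)
  have h5 : s⁻¹ (s ⟨(d : ℕ) - 1, hd⟩) = ⟨(d : ℕ) - 1, hd⟩ := Equiv.Perm.inv_apply_self s _
  rw [hsj] at h5
  rw [h5]

lemma sinv_fix (hs : IsTCycle k m s) {d : Fin n} (h : (m : ℕ) < d) : s⁻¹ d = d := by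
  have h' := tfix hs (i := d) (Or.inr h)
  conv_lhs => rw [← h']
  rw [Equiv.Perm.inv_apply_self]

lemma sinv_mono (hs : IsTCycle k m s) {c d : Fin n} (hc : k < c) (hcd : c < d) :
    s⁻¹ c < s⁻¹ d := by
  have hc' := Fin.lt_def.1 hc
  have hcd' := Fin.lt_def.1 hcd
  rw [Fin.lt_def]
  rcases le_or_gt (d : ℕ) (m : ℕ) with hd | hd
  · rw [sinv_val hs hc (Fin.le_def.2 (by omega)),
      sinv_val hs (lt_trans hc hcd) (Fin.le_def.2 hd)]
    omega
  · rw [sinv_fix hs hd]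
    rcases le_or_gt (c : ℕ) (m : ℕ) with hcm | hcm
    · have := sinv_val hs hc (Fin.le_def.2 hcm); omega
    · rw [sinv_fix hs hcm]; omega

lemma mem_invSet_tcycle (hkm : k ≤ m) (hs : IsTCycle k m s) {a b : Fin n} :
    (a, b) ∈ invSet s ↔ k ≤ a ∧ a < m ∧ b = m := by
  rw [mem_invSet]
  show a < b ∧ s b < s a ↔ _
  constructor
  · rintro ⟨hab, hinv⟩
    have hab' := Fin.lt_def.1 hab
    have hinv' := Fin.lt_def.1 hinv
    have hbm : (b : ℕ) ≤ m := by
      by_contra hb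
      push_neg at hb
      rw [tfix hs (Or.inr hb)] at hinv'
      rcases le_or_gt (a : ℕ) (m : ℕ) with ha | ha
      · have := sval_le hkm hs ha; omega
      · rw [tfix hs (Or.inr ha)] at hinv'; omega
    have hkb : (k : ℕ) ≤ b := by
      by_contra hb
      push_neg at hb
      rw [tfix hs (Or.inl hb), tfix hs (Or.inl (by omega))] at hinv'
      omega
    have hbm' : b = m := by
      by_contra hb
      have hblt : (b : ℕ) < m := lt_of_le_of_ne hbm (fun h => hb (Fin.ext h))
      rw [hs.1 b (Fin.le_def.2 hkb) (Fin.lt_def.2 hblt)] at hinv'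
      rcases lt_or_ge (a : ℕ) (k : ℕ) with ha | ha
      · rw [tfix hs (Or.inl ha)] at hinv'; omega
      · rw [hs.1 a (Fin.le_def.2 ha) (Fin.lt_def.2 (by omega))] at hinv'; omega
    subst hbm'
    rw [hs.2.1] at hinv'
    have hka : (k : ℕ) ≤ a := by
      by_contra ha
      push_neg at ha
      rw [tfix hs (Or.inl ha)] at hinv'; omega
    exact ⟨Fin.le_def.2 hka, hab, rfl⟩
  · rintro ⟨hka, ham, rfl⟩
    refine ⟨ham, ?_⟩
    rw [hs.2.1, Fin.lt_def, hs.1 a hka ham]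
    have := Fin.le_def.1 hka
    omega

lemma fix_iff (hg' : ∀ i : Fin n, i ≤ k → g' i = i) {i : Fin n} (h : g' i ≤ k) : i ≤ k := by
  have h2 : g' (g' i) = g' i := hg' (g' i) h
  have h3 : g' i = i := g'.injective h2
  rwa [h3] at h

lemma inv_mem_gt (hg' : ∀ i : Fin n, i ≤ k → g' i = i) {a b : Fin n}
    (h : (a, b) ∈ invSet g') : k < a ∧ k < b := by
  rw [mem_invSet] at h
  obtain ⟨hab, hinv⟩ := h
  by_cases hbk : b ≤ k
  · have hak : a ≤ k := le_of_lt (lt_of_lt_of_le hab hbk)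
    rw [hg' a hak, hg' b hbk] at hinv
    exact absurd hinv (not_lt.2 hab.le)
  · by_cases hak : a ≤ k
    · rw [hg' a hak] at hinv
      have h1 : g' b ≤ k := le_of_lt (lt_of_lt_of_le hinv hak)
      exact absurd (fix_iff hg' h1) hbk
    · exact ⟨not_le.1 hak, not_le.1 hbk⟩

lemma invSet_mul (hkm : k ≤ m) (hs : IsTCycle k m s)
    (hg' : ∀ i : Fin n, i ≤ k → g' i = i) :
    invSet (g' * s) = invSet s ∪ (invSet g').image (fun p => (s⁻¹ p.1, s⁻¹ p.2)) := by
  ext ⟨a, b⟩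
  rw [Finset.mem_union, Finset.mem_image]
  constructor
  · intro h
    obtain ⟨hab, hinv⟩ := mem_invSet.1 h
    rw [Equiv.Perm.mul_apply, Equiv.Perm.mul_apply] at hinv
    rcases lt_trichotomy (s a) (s b) with h' | h' | h'
    · right
      exact ⟨(s a, s b), mem_invSet.2 ⟨h', hinv⟩, by simp⟩
    · exact absurd (s.injective h') (ne_of_lt hab)
    · exact Or.inl (mem_invSet.2 ⟨hab, h'⟩)
  · intro h
    rw [mem_invSet]
    simp only [Equiv.Perm.mul_apply]
    rcases h with hmem | ⟨⟨c, d⟩, hcd, heq⟩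
    · obtain ⟨hka, ham, rfl⟩ := (mem_invSet_tcycle hkm hs).1 hmem
      refine ⟨ham, ?_⟩
      rw [hs.2.1, hg' k le_rfl]
      have hsa : k < s a := by
        rw [Fin.lt_def, hs.1 a hka ham]
        have := Fin.le_def.1 hka; omega
      by_contra hcon
      push_neg at hcon
      exact absurd (fix_iff hg' hcon) (not_le.2 hsa)
    · have hgt := inv_mem_gt hg' hcd
      obtain ⟨hcd', hinv'⟩ := mem_invSet.1 hcd
      have ha : s⁻¹ c = a := congrArg Prod.fst heq
      have hb : s⁻¹ d = b := congrArg Prod.snd heq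
      subst ha hb
      refine ⟨sinv_mono hs hgt.1 hcd', ?_⟩
      rw [Equiv.Perm.apply_inv_self, Equiv.Perm.apply_inv_self]
      exact hinv'

lemma invSet_mul_disjoint (hkm : k ≤ m) (hs : IsTCycle k m s)
    (hg' : ∀ i : Fin n, i ≤ k → g' i = i) :
    Disjoint (invSet s) ((invSet g').image (fun p => (s⁻¹ p.1, s⁻¹ p.2))) := by
  rw [Finset.disjoint_left]
  rintro ⟨a, b⟩ h1 h2
  obtain ⟨-, -, hbm'⟩ := (mem_invSet_tcycle hkm hs).1 h1
  simp only [Finset.mem_image, Prod.exists] at h2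
  obtain ⟨c, d, hcd, heq⟩ := h2
  have hd : k < d := (inv_mem_gt hg' hcd).2
  have hb : s⁻¹ d = b := congrArg Prod.snd heq
  rw [hbm', ← sinv_k hs] at hb
  have hdk : d = k := s⁻¹.injective hb
  rw [hdk] at hd
  exact lt_irrefl _ hd

lemma twistMat_mul (hkm : k ≤ m) (hs : IsTCycle k m s)
    (hg' : ∀ i : Fin n, i ≤ k → g' i = i) (q : Fin n → Fin n → ℂ) :
    twistMat n q g' * twistMat n q s = twistMat n q (g' * s) := by
  ext σ τ
  rw [Matrix.mul_apply]
  rw [Finset.sum_eq_single (τ * s⁻¹)]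
  · simp only [twistMat]
    have h1 : τ * s⁻¹ * g'⁻¹ = τ * (g' * s)⁻¹ := by
      rw [mul_inv_rev, mul_assoc]
    rw [h1]
    by_cases hστ : σ = τ * (g' * s)⁻¹
    · simp only [hστ, if_pos rfl]
      rw [invSet_mul hkm hs hg', Finset.prod_union (invSet_mul_disjoint hkm hs hg'),
        Finset.prod_image]
      · rw [mul_comm]
        congr 1
      · intro p _ p' _ hpp'
        have h1' : s⁻¹ p.1 = s⁻¹ p'.1 := congrArg Prod.fst hpp'
        have h2' : s⁻¹ p.2 = s⁻¹ p'.2 := congrArg Prod.snd hpp'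
        exact Prod.ext (s⁻¹.injective h1') (s⁻¹.injective h2')
    · rw [if_neg hστ, if_neg hστ, zero_mul]
  · intro ρ _ hρ
    simp only [twistMat, if_neg hρ, mul_zero]
  · intro h
    exact absurd (Finset.mem_univ _) h


variable (q : Fin n → Fin n → ℂ) (t : Fin n → Fin n → Equiv.Perm (Fin n))
  (ht : ∀ a b : Fin n, a ≤ b → IsTCycle a b (t b a))

/-- The permutations fixing all points with value `< c`. -/
def FixF (n : ℕ) (c : ℕ) : Finset (Equiv.Perm (Fin n)) :=
  Finset.univ.filter fun g => ∀ i : Fin n, (i : ℕ) < c → g i = i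

lemma mem_FixF {c : ℕ} {g : Equiv.Perm (Fin n)} :
    g ∈ FixF n c ↔ ∀ i : Fin n, (i : ℕ) < c → g i = i := by
  simp [FixF]

include ht in
lemma step (k : Fin n) :
    (∑ g ∈ FixF n ((k : ℕ) + 1), twistMat n q g) * (∑ m ∈ Finset.Ici k, twistMat n q (t m k)) =
      ∑ g ∈ FixF n (k : ℕ), twistMat n q g := by
  rw [Finset.sum_mul_sum, ← Finset.sum_product']
  apply Finset.sum_nbij' (i := fun p => p.1 * t p.2 k)
    (j := fun g => (g * (t (g⁻¹ k) k)⁻¹, g⁻¹ k))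
  · -- membership forward
    rintro ⟨g', m⟩ hp
    simp only [Finset.mem_product, mem_FixF, Finset.mem_Ici] at hp
    obtain ⟨hg', hm⟩ := hp
    rw [mem_FixF]
    intro i hi
    have hti : t m k i = i := by
      refine (ht k m hm).2.2 i ?_
      rintro ⟨h1, -⟩
      exact absurd (Fin.le_def.1 h1) (by omega)
    rw [Equiv.Perm.mul_apply, hti]
    exact hg' i (by omega)
  · -- membership backward
    intro g hg
    rw [mem_FixF] at hg
    have hfixinv : ∀ i : Fin n, (i : ℕ) < k → g⁻¹ i = i := by
      intro i hi
      rw [← hg i hi, Equiv.Perm.inv_apply_self, hg i hi]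
    have hm : k ≤ g⁻¹ k := by
      by_contra h
      push_neg at h
      have h2 : g (g⁻¹ k) = g⁻¹ k := hg _ (Fin.lt_def.1 h)
      rw [Equiv.Perm.apply_inv_self] at h2
      rw [← h2] at h
      exact lt_irrefl _ h
    simp only [Finset.mem_product, mem_FixF, Finset.mem_Ici]
    refine ⟨?_, hm⟩
    intro i hi
    have hts := ht k (g⁻¹ k) hm
    rcases lt_or_ge (i : ℕ) (k : ℕ) with h | h
    · have hti : t (g⁻¹ k) k i = i := tfix hts (Or.inl h)
      rw [Equiv.Perm.mul_apply, inv_fix hti]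
      exact hg i h
    · have hik : i = k := Fin.ext (by omega)
      subst hik
      rw [Equiv.Perm.mul_apply, sinv_k hts, Equiv.Perm.apply_inv_self]
  · -- left inverse
    rintro ⟨g', m⟩ hp
    simp only [Finset.mem_product, mem_FixF, Finset.mem_Ici] at hp
    obtain ⟨hg', hm⟩ := hp
    have hinvk : (g' * t m k)⁻¹ k = m := by
      have h1 : g'⁻¹ k = k := by
        rw [← hg' k (by omega), Equiv.Perm.inv_apply_self, hg' k (by omega)]
      rw [mul_inv_rev, Equiv.Perm.mul_apply, h1, sinv_k (ht k m hm)]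
    rw [hinvk]
    simp [mul_assoc]
  · -- right inverse
    intro g hg
    simp [mul_assoc]
  · -- values
    rintro ⟨g', m⟩ hp
    simp only [Finset.mem_product, mem_FixF, Finset.mem_Ici] at hp
    obtain ⟨hg', hm⟩ := hp
    exact twistMat_mul hm (ht k m hm) (fun i hi => hg' i (by have := Fin.le_def.1 hi; omega)) q

include ht in
lemma main_induction : ∀ j : ℕ, j ≤ n →
    (∑ g ∈ FixF n (n - j), twistMat n q g) =
      (((List.finRange n).reverse.take j).map fun k =>
        ∑ m ∈ Finset.Ici k, twistMat n q (t m k)).prod := by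
  intro j
  induction j with
  | zero =>
    intro _
    have hFix : FixF n n = {1} := by
      ext g
      simp only [mem_FixF, Finset.mem_singleton]
      constructor
      · intro h
        ext i
        simp [h i (by omega)]
      · rintro rfl
        simp
    rw [Nat.sub_zero, hFix]
    simp [twistMat_one]
  | succ j ih =>
    intro hj
    have hj' : j ≤ n := by omega
    have hjn : j < n := by omega
    have hlen : ((List.finRange n).reverse).length = n := by simp
    have hget : ((List.finRange n).reverse)[j]'(by omega) = ⟨n - 1 - j, by omega⟩ := by
      rw [List.getElem_reverse]
      rw [List.getElem_finRange]
      simp [hlen]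
    rw [List.take_succ]
    rw [List.getElem?_eq_getElem (by omega), hget]
    rw [List.map_append, List.prod_append]
    simp only [Option.toList_some, List.map_cons, List.map_nil, List.prod_cons, List.prod_nil,
      mul_one]
    rw [← ih hj']
    set k : Fin n := ⟨n - 1 - j, by omega⟩ with hk
    have h1 : n - j = (k : ℕ) + 1 := by simp [hk]; omega
    have h2 : n - (j + 1) = (k : ℕ) := by simp [hk]; omega
    rw [h1, h2]
    exact (step q t ht k).symm

end TwistAux

/-- The matrix form of the factorization `α*_n = β*_1 · β*_2 ⋯ β*_n` in `A(S_n)`: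
with `F_k := ∑_{m=k}^{n} M_q(t_{m,k})`, the sum of the matrices `M_q(g)` over all
permutations factors as the ordered product `∑_{g ∈ S_n} M_q(g) = F_n · F_{n-1} ⋯ F_1`,
the factor `F_k` standing to the left of `F_k'` whenever `k > k'`. -/
theorem sum_twistMat_factorization (n : ℕ) (hn : 1 ≤ n) (q : Fin n → Fin n → ℂ)
    (t : Fin n → Fin n → Equiv.Perm (Fin n))
    (ht : ∀ a b : Fin n, a ≤ b → IsTCycle a b (t b a)) :
    (∑ g : Equiv.Perm (Fin n), twistMat n q g) =
      ((List.finRange n).reverse.map fun k =>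
        ∑ m ∈ Finset.Ici k, twistMat n q (t m k)).prod := by
  have := TwistAux.main_induction q t ht n le_rfl
  rw [Nat.sub_self] at this
  rw [List.take_of_length_le (by simp)] at this
  rw [← this]
  congr 1
  rw [TwistAux.FixF]
  exact (Finset.filter_true_of_mem fun g _ i hi => absurd hi (Nat.not_lt_zero _)).symm
end

section
/- For all a < b in Fin n with a ≥ 2, the (b−a+1)-st power of the matrix D_{a-1}·M_q(t_{b,a}) is the diagonal matrix whose diagonal entry at τ ∈ S_n equals σ_T, where T = {τ(a−1), τ(a), …, τ(b)} is the image under τ of the interval [a−1,b]. -/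
/-- The successor `a + 1` in `Fin n` (computed mod `n`; in all uses below one has
`a + 1 < n`, so no wraparound occurs). -/
def finSucc {n : ℕ} (a : Fin n) : Fin n :=
  ⟨((a : ℕ) + 1) % n, Nat.mod_lt _ a.pos⟩

/-- The diagonal matrix `D_a = M_q(t_{a+1,a})²` whose diagonal entry at `τ` is
`q (τ a) (τ (a+1)) · q (τ (a+1)) (τ a)`. -/
def Dmat (n : ℕ) (q : Fin n → Fin n → ℂ) (a : Fin n) : PermMatrix n :=
  Matrix.diagonal fun τ => q (τ a) (τ (finSucc a)) * q (τ (finSucc a)) (τ a)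

/-- `σ_T = ∏_{i,j ∈ T, i ≠ j} q i j`, the product over all ordered pairs of distinct
elements of `T`. -/
def sigmaT {n : ℕ} (q : Fin n → Fin n → ℂ) (T : Finset (Fin n)) : ℂ :=
  ∏ p ∈ (T ×ˢ T).filter fun p => p.1 ≠ p.2, q p.1 p.2

/-- The predecessor `a - 1` in `Fin n` (truncated at `0`; in all uses below one has
`1 ≤ a`, so it is the genuine predecessor). -/
def finPred {n : ℕ} (a : Fin n) : Fin n :=
  ⟨(a : ℕ) - 1, lt_of_le_of_lt (Nat.sub_le _ _) a.isLt⟩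

/-! ### Auxiliary lemmas -/

/-- Powers of a "shift by `g`" generalized-permutation matrix. -/
lemma matpow_of_shift {n : ℕ} (g : Equiv.Perm (Fin n)) (F : Equiv.Perm (Fin n) → ℂ)
    (A : PermMatrix n) (hA : ∀ σ τ, A σ τ = if σ = τ * g then F τ else 0) (k : ℕ) :
    ∀ σ τ, (A ^ k) σ τ =
      if σ = τ * g ^ k then ∏ j ∈ Finset.range k, F (τ * g ^ j) else 0 := by
  induction k with
  | zero => intro σ τ; simp [Matrix.one_apply]
  | succ k ih =>
    intro σ τ
    rw [pow_succ, Matrix.mul_apply]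
    have step : ∀ ρ, (A ^ k) σ ρ * A ρ τ
        = if ρ = τ * g then (A ^ k) σ (τ * g) * F τ else 0 := by
      intro ρ; rw [hA]; split_ifs with h <;> simp [h]
    rw [Finset.sum_congr rfl fun ρ _ => step ρ, Finset.sum_ite_eq' Finset.univ]
    simp only [Finset.mem_univ, if_true]
    rw [ih]
    have hcond : (σ = τ * g * g ^ k) ↔ (σ = τ * g ^ (k + 1)) := by
      rw [pow_succ', ← mul_assoc]
    split_ifs with h1 h2 h2
    · rw [Finset.prod_range_succ', pow_zero, mul_one]
      exact congrArg (· * F τ) (Finset.prod_congr rfl fun j _ => by rw [mul_assoc, ← pow_succ'])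
    · exact absurd (hcond.mp h1) h2
    · exact absurd (hcond.mpr h2) h1
    · exact (zero_mul _)

section cyc
variable {n : ℕ} {a b : Fin n} {s : Equiv.Perm (Fin n)}

lemma tc_fix (hs : IsTCycle a b s) {i : Fin n} (h : (i:ℕ) < a ∨ (b:ℕ) < i) : s i = i := by
  refine hs.2.2 i ?_; simp only [Fin.le_def, not_and, not_le]; omega

lemma tc_step (hs : IsTCycle a b s) {i : Fin n} (h1 : (a:ℕ) ≤ i) (h2 : (i:ℕ) < b) :
    s i = ⟨(i:ℕ) + 1, by omega⟩ :=
  Fin.ext (hs.1 i (Fin.le_def.mpr h1) (Fin.lt_def.mpr h2))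

lemma tc_spow (hs : IsTCycle a b s) : ∀ (j : ℕ) (i : Fin n), (a:ℕ) ≤ i →
    ∀ hj : (i:ℕ) + j ≤ b, (s ^ j) i = ⟨(i:ℕ) + j, by omega⟩ := by
  intro j
  induction j with
  | zero => intro i _ _; simp
  | succ j ih =>
    intro i hai hib
    rw [pow_succ', Equiv.Perm.mul_apply, ih i hai (by omega)]
    rw [tc_step hs (i := ⟨(i:ℕ)+j, by omega⟩) (by simp; omega) (by simp; omega)]
    apply Fin.ext
    simp
    omega

lemma tc_pow_order (hs : IsTCycle a b s) (hab : a < b) : s ^ ((b:ℕ) - a + 1) = 1 := by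
  have hab' : (a:ℕ) < b := hab
  ext i
  simp only [Equiv.Perm.coe_one, id_eq]
  rcases lt_or_ge (i:ℕ) (a:ℕ) with h | h
  · rw [Equiv.Perm.pow_apply_eq_self_of_apply_eq_self (tc_fix hs (Or.inl h))]
  rcases lt_or_ge (b:ℕ) (i:ℕ) with h' | h'
  · rw [Equiv.Perm.pow_apply_eq_self_of_apply_eq_self (tc_fix hs (Or.inr h'))]
  have hk : (b:ℕ) - a + 1 = ((i:ℕ) - a) + (1 + ((b:ℕ) - i)) := by omega
  rw [hk, pow_add, pow_add, Equiv.Perm.mul_apply, Equiv.Perm.mul_apply,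
    tc_spow hs ((b:ℕ) - i) i h (by omega), pow_one]
  have hb : (⟨(i:ℕ) + ((b:ℕ) - i), by omega⟩ : Fin n) = b := Fin.ext (by simp; omega)
  rw [hb, hs.2.1, tc_spow hs ((i:ℕ) - a) a le_rfl (by omega)]
  simp
  omega

lemma tc_inv_fix (hs : IsTCycle a b s) {i : Fin n} (h : (i:ℕ) < a ∨ (b:ℕ) < i) :
    s⁻¹ i = i := by
  rw [Equiv.Perm.inv_eq_iff_eq, tc_fix hs h]

lemma tc_inv_a (hs : IsTCycle a b s) : s⁻¹ a = b := by
  rw [Equiv.Perm.inv_eq_iff_eq, hs.2.1]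

lemma tc_inv_step (hs : IsTCycle a b s) {i : Fin n} (h1 : (a:ℕ) < i) (h2 : (i:ℕ) ≤ b) :
    s⁻¹ i = ⟨(i:ℕ) - 1, by omega⟩ := by
  rw [Equiv.Perm.inv_eq_iff_eq, tc_step hs (by simp; omega) (by simp; omega)]
  exact Fin.ext (by simp; omega)

lemma tc_inv_pow_b (hs : IsTCycle a b s) (hab : a < b) :
    ∀ j ≤ (b:ℕ) - a, (s⁻¹ ^ j) b = ⟨(b:ℕ) - j, by omega⟩ := by
  have hab' : (a:ℕ) < b := hab
  intro j
  induction j with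
  | zero => intro _; simp
  | succ j ih =>
    intro hj
    rw [pow_succ', Equiv.Perm.mul_apply, ih (by omega),
      tc_inv_step hs (by simp; omega) (by simp)]
    apply Fin.ext
    simp
    omega

lemma tc_inv_maps (hs : IsTCycle a b s) (hab : a ≤ b) {i : Fin n}
    (hi : i ∈ Finset.Icc a b) : s⁻¹ i ∈ Finset.Icc a b := by
  simp only [Finset.mem_Icc, Fin.le_def] at hi ⊢
  rcases eq_or_lt_of_le hi.1 with h | h
  · have hia : i = a := (Fin.ext h.symm : i = a)
    have hb : s⁻¹ a = b := by rw [Equiv.Perm.inv_eq_iff_eq, hs.2.1]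
    rw [hia, hb]
    exact ⟨Fin.le_def.mp hab, le_refl _⟩
  · have : s⁻¹ i = ⟨(i:ℕ) - 1, by omega⟩ := by
      rw [Equiv.Perm.inv_eq_iff_eq, tc_step hs (by simp; omega) (by simp; omega)]
      exact Fin.ext (by simp; omega)
    rw [this]; simp; omega

lemma tc_image_inv_pow (hs : IsTCycle a b s) (hab : a ≤ b) (j : ℕ) :
    (Finset.Icc a b).image (⇑(s⁻¹ ^ j)) = Finset.Icc a b := by
  induction j with
  | zero => simp
  | succ j ih =>
    have h1 : (Finset.Icc a b).image (⇑s⁻¹) = Finset.Icc a b := by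
      apply Finset.eq_of_subset_of_card_le
      · intro x hx
        obtain ⟨y, hy, rfl⟩ := Finset.mem_image.mp hx
        exact tc_inv_maps hs hab hy
      · rw [Finset.card_image_of_injective _ (Equiv.injective _)]
    calc (Finset.Icc a b).image (⇑(s⁻¹ ^ (j+1)))
        = ((Finset.Icc a b).image (⇑s⁻¹)).image (⇑(s⁻¹ ^ j)) := by
          rw [Finset.image_image]
          apply Finset.image_congr
          intro x _
          simp [pow_succ, Equiv.Perm.mul_apply]
      _ = Finset.Icc a b := by rw [h1, ih]

lemma tc_invSet (hs : IsTCycle a b s) (hab : a < b) :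
    invSet s = (Finset.Ico a b).image (fun x => (x, b)) := by
  have hab' : (a:ℕ) < b := hab
  have sval : ∀ i : Fin n, ((s i : Fin n) : ℕ) =
      if (i:ℕ) < a then (i:ℕ) else if (i:ℕ) < b then (i:ℕ)+1
      else if (i:ℕ) = b then (a:ℕ) else (i:ℕ) := by
    intro i
    split_ifs with c1 c2 c3
    · rw [tc_fix hs (Or.inl c1)]
    · rw [tc_step hs (by omega) c2]
    · have : i = b := Fin.ext c3
      rw [this, hs.2.1]
    · rw [tc_fix hs (Or.inr (by omega))]
  ext p
  simp only [invSet, Finset.mem_filter, Finset.mem_univ, true_and, Finset.mem_image,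
    Finset.mem_Ico, Fin.lt_def, Fin.le_def]
  constructor
  · rintro ⟨hlt, hinv⟩
    have v1 := sval p.1
    have v2 := sval p.2
    refine ⟨p.1, ⟨?_, ?_⟩, ?_⟩
    · by_contra hc
      push_neg at hc
      split_ifs at v1 v2 <;> omega
    · by_contra hc
      push_neg at hc
      split_ifs at v1 v2 <;> omega
    · have h2b : (p.2:ℕ) = b := by
        by_contra hc
        split_ifs at v1 v2 <;> omega
      have : p.2 = b := Fin.ext h2b
      rw [← this]
  · rintro ⟨x, ⟨hx1, hx2⟩, rfl⟩
    refine ⟨hx2, ?_⟩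
    simp only [Fin.lt_def]
    rw [sval, sval]
    split_ifs <;> omega

end cyc

lemma sigmaT_image {n : ℕ} (q : Fin n → Fin n → ℂ) (τ : Equiv.Perm (Fin n))
    (S : Finset (Fin n)) :
    sigmaT q (S.image τ) = ∏ x ∈ S, ∏ y ∈ S.erase x, q (τ x) (τ y) := by
  have hset : ((S.image τ) ×ˢ (S.image τ)).filter (fun p => p.1 ≠ p.2)
      = ((S ×ˢ S).filter fun p => p.1 ≠ p.2).image (Prod.map τ τ) := by
    ext ⟨x, y⟩
    simp only [Finset.mem_filter, Finset.mem_product, Finset.mem_image, Prod.map,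
      Prod.ext_iff, Prod.exists]
    constructor
    · rintro ⟨⟨⟨u, hu, rfl⟩, ⟨v, hv, rfl⟩⟩, hne⟩
      exact ⟨u, v, ⟨⟨hu, hv⟩, fun h => hne (by rw [h])⟩, rfl, rfl⟩
    · rintro ⟨u, v, ⟨⟨hu, hv⟩, hne⟩, rfl, rfl⟩
      exact ⟨⟨⟨u, hu, rfl⟩, ⟨v, hv, rfl⟩⟩, fun h => hne (τ.injective h)⟩
  have hinj : Function.Injective (Prod.map τ τ) :=
    Function.Injective.prodMap τ.injective τ.injective
  rw [sigmaT, hset, Finset.prod_image (fun p _ p' _ h => hinj h)]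
  rw [Finset.prod_filter, Finset.prod_product]
  refine Finset.prod_congr rfl fun x _ => ?_
  rw [← Finset.prod_filter, Finset.filter_ne]
  simp [Prod.map]

lemma sigmaT_insert {n : ℕ} (q : Fin n → Fin n → ℂ) (τ : Equiv.Perm (Fin n))
    (c : Fin n) (S : Finset (Fin n)) (hc : c ∉ S) :
    sigmaT q ((insert c S).image τ) =
      ∏ z ∈ S, (q (τ c) (τ z) * q (τ z) (τ c) * ∏ y ∈ S.erase z, q (τ z) (τ y)) := by
  rw [sigmaT_image, Finset.prod_insert hc, Finset.erase_insert hc]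
  have hx : ∀ x ∈ S, ∏ y ∈ (insert c S).erase x, q (τ x) (τ y)
      = q (τ x) (τ c) * ∏ y ∈ S.erase x, q (τ x) (τ y) := by
    intro x hx
    have hxc : x ≠ c := fun h => hc (h ▸ hx)
    rw [Finset.erase_insert_of_ne (Ne.symm hxc),
      Finset.prod_insert (fun h => hc (Finset.mem_of_mem_erase h))]
  rw [Finset.prod_congr rfl hx]
  simp only [Finset.prod_mul_distrib, mul_assoc]

/-- The entry function for `D_c · M_q(s)` viewed as a generalized permutation matrix. -/
def shiftF (n : ℕ) (q : Fin n → Fin n → ℂ) (s : Equiv.Perm (Fin n)) (c : Fin n)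
    (τ : Equiv.Perm (Fin n)) : ℂ :=
  q ((τ * s⁻¹) c) ((τ * s⁻¹) (finSucc c)) * q ((τ * s⁻¹) (finSucc c)) ((τ * s⁻¹) c) *
    ∏ p ∈ invSet s, q (τ p.2) (τ p.1)

/-- For `a < b` in `Fin n` with `a ≥ 2` (so `a ≥ 1` in 0-indexed terms), the
`(b−a+1)`-st power of `D_{a-1} · M_q(t_{b,a})` is the diagonal matrix whose diagonal
entry at `τ` equals `σ_T`, where `T = τ([a−1,b])` is the image under `τ` of the
interval `[a−1,b]`. -/
theorem Dmat_mul_twistMat_pow_cycle (n : ℕ) (hn : 1 ≤ n) (q : Fin n → Fin n → ℂ)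
    (a b : Fin n) (hab : a < b) (ha : 1 ≤ (a : ℕ))
    (s : Equiv.Perm (Fin n)) (hs : IsTCycle a b s) :
    (Dmat n q (finPred a) * twistMat n q s) ^ ((b : ℕ) - (a : ℕ) + 1) =
      Matrix.diagonal fun τ : Equiv.Perm (Fin n) =>
        sigmaT q ((Finset.Icc (finPred a) b).image τ) := by
  have hab' : (a:ℕ) < b := hab
  set c := finPred a with hcdef
  have hbj : ∀ j : ℕ, (b:ℕ) - j < n := fun j => by omega
  have hcv : (c:ℕ) = (a:ℕ) - 1 := rfl
  have hca : (c:ℕ) < a := by omega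
  have hsucc : finSucc c = a := by
    apply Fin.ext
    simp only [finSucc, hcv]
    have : (a:ℕ) - 1 + 1 = a := by omega
    rw [this, Nat.mod_eq_of_lt a.isLt]
  have hA : ∀ σ τ, (Dmat n q c * twistMat n q s) σ τ
      = if σ = τ * s⁻¹ then shiftF n q s c τ else 0 := by
    intro σ τ
    simp only [Dmat, Matrix.diagonal_mul, twistMat]
    split_ifs with h
    · rw [h]; rfl
    · exact mul_zero _
  have hord : s⁻¹ ^ ((b:ℕ) - (a:ℕ) + 1) = 1 := by
    rw [inv_pow, tc_pow_order hs hab, inv_one]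
  have key : ∀ τ : Equiv.Perm (Fin n),
      ∏ j ∈ Finset.range ((b:ℕ) - (a:ℕ) + 1), shiftF n q s c (τ * s⁻¹ ^ j) =
        sigmaT q ((Finset.Icc c b).image τ) := by
    intro τ
    have hIcc : Finset.Icc c b = insert c (Finset.Icc a b) := by
      ext x
      simp only [Finset.mem_Icc, Finset.mem_insert, Fin.le_def, Fin.ext_iff]
      omega
    have hcnot : c ∉ Finset.Icc a b := by
      simp only [Finset.mem_Icc, Fin.le_def]
      omega
    rw [hIcc, sigmaT_insert q τ c _ hcnot]
    refine Finset.prod_bij' (fun j _ => (⟨(b:ℕ) - j, hbj j⟩ : Fin n))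
      (fun z _ => (b:ℕ) - (z:ℕ)) ?_ ?_ ?_ ?_ ?_
    · intro j hj
      have hj' : j < (b:ℕ) - (a:ℕ) + 1 := Finset.mem_range.mp hj
      simp only [Finset.mem_Icc, Fin.le_def]
      omega
    · intro z hz
      simp only [Finset.mem_Icc, Fin.le_def] at hz
      rw [Finset.mem_range]
      show (b:ℕ) - (z:ℕ) < (b:ℕ) - (a:ℕ) + 1
      omega
    · intro j hj
      have hj' : j < (b:ℕ) - (a:ℕ) + 1 := Finset.mem_range.mp hj
      show (b:ℕ) - (((⟨(b:ℕ) - j, hbj j⟩ : Fin n)) : ℕ) = j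
      simp
      omega
    · intro z hz
      simp only [Finset.mem_Icc, Fin.le_def] at hz
      show (⟨(b:ℕ) - ((b:ℕ) - (z:ℕ)), hbj _⟩ : Fin n) = z
      exact Fin.ext (by simp; omega)
    · intro j hj
      have hj' : j ≤ (b:ℕ) - a := by have := Finset.mem_range.mp hj; omega
      have hzfix : ∀ m : ℕ, (s⁻¹ ^ m) c = c :=
        Equiv.Perm.pow_apply_eq_self_of_apply_eq_self (tc_inv_fix hs (Or.inl hca))
      have hzb : (s⁻¹ ^ j) b = ⟨(b:ℕ) - j, hbj j⟩ := by
        rw [tc_inv_pow_b hs hab j hj']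
      have hρc : (τ * s⁻¹ ^ j * s⁻¹) c = τ c := by
        rw [mul_assoc, Equiv.Perm.mul_apply, Equiv.Perm.mul_apply,
          tc_inv_fix hs (Or.inl hca), hzfix]
      have hρa : (τ * s⁻¹ ^ j * s⁻¹) a = τ ⟨(b:ℕ) - j, hbj j⟩ := by
        rw [mul_assoc, Equiv.Perm.mul_apply, Equiv.Perm.mul_apply, tc_inv_a hs, hzb]
      rw [shiftF]
      simp only [← mul_assoc, hsucc, hρc, hρa]
      congr 1
      -- remaining: inversion-set product
      rw [tc_invSet hs hab,
        Finset.prod_image (fun x _ y _ h => (Prod.ext_iff.mp h).1)]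
      simp only [Equiv.Perm.mul_apply, hzb]
      have himg : (Finset.Ico a b).image ⇑(s⁻¹ ^ j)
          = (Finset.Icc a b).erase ⟨(b:ℕ) - j, hbj j⟩ := by
        rw [← Finset.Icc_erase_right, Finset.image_erase (Equiv.injective _),
          tc_image_inv_pow hs hab.le j, hzb]
      rw [← himg, Finset.prod_image (fun x _ y _ h => Equiv.injective (s⁻¹ ^ j) h)]
  ext σ τ
  rw [matpow_of_shift s⁻¹ (shiftF n q s c) _ hA ((b:ℕ) - (a:ℕ) + 1) σ τ, hord, mul_one,
    Matrix.diagonal_apply]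
  by_cases h : σ = τ
  · rw [if_pos h, if_pos h, h, key τ]
  · rw [if_neg h, if_neg h]
end

section
/- For all a < b in Fin n, the determinant of I − M_q(t_{b,a}) factors as det(I − M_q(t_{b,a})) = ∏_{T} (1 − σ_T)^{(b−a)!·(n−b+a−1)!}, where the product runs over all subsets T ⊆ Fin n of cardinality b−a+1. -/
/- ======================= Auxiliary lemmas ======================== -/

namespace DetTwistAux

lemma zmod_shift_cases {m : ℕ} (hm : 2 ≤ m) (σ : Equiv.Perm (ZMod m))
    (h : ∀ i, σ i = i ∨ σ i = i - 1) : σ = 1 ∨ σ = Equiv.addRight (-1 : ZMod m) := by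
  haveI : NeZero m := ⟨by omega⟩
  haveI : Fact (1 < m) := ⟨by omega⟩
  by_cases h1 : σ = 1
  · exact Or.inl h1
  right
  obtain ⟨j, hj⟩ : ∃ j, σ j ≠ j := by
    by_contra hc
    push_neg at hc
    exact h1 (Equiv.ext fun x => hc x)
  have hj' : σ j = j - 1 := (h j).resolve_left hj
  have key : ∀ k : ℕ, σ (j - k) = j - k - 1 := by
    intro k
    induction k with
    | zero => simpa using hj'
    | succ k ih =>
      have hik : ((k+1 : ℕ) : ZMod m) = (k : ZMod m) + 1 := by push_cast; ring
      rcases h (j - (k+1 : ℕ)) with h' | h'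
      · exfalso
        rw [hik] at h'
        have heq : j - ((k:ZMod m) + 1) = j - k - 1 := by ring
        rw [heq] at h'
        rw [← ih] at h'
        have h2 := σ.injective h'
        rw [ih] at h2
        exact one_ne_zero (sub_eq_self.mp h2)
      · exact h'
  ext x
  have hx : x = j - ((j - x).val : ℕ) := by
    rw [ZMod.natCast_val, ZMod.cast_id]
    ring
  rw [hx]
  rw [key ((j - x).val)]
  simp [Equiv.addRight]
  ring

lemma sign_sh {m : ℕ} [NeZero m] (hm : 2 ≤ m) :
    Equiv.Perm.sign (Equiv.addRight (-1 : ZMod m)) = (-1:ℤˣ)^(m-1) := by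
  haveI : Fact (1 < m) := ⟨hm⟩
  set sh := Equiv.addRight (-1 : ZMod m) with hsh
  have happ : ∀ y : ZMod m, sh y = y + (-1) := fun y => rfl
  have hfix : ∀ y : ZMod m, sh y ≠ y := by
    intro y hcon
    rw [happ] at hcon
    exact one_ne_zero (neg_eq_zero.mp (add_eq_left.mp hcon))
  have hcyc : sh.IsCycle := by
    refine ⟨0, hfix 0, ?_⟩
    intro y _
    refine ⟨(-(y.val : ℤ)), ?_⟩
    rw [hsh, Equiv.zsmul_addRight]
    show (0 : ZMod m) + (-(y.val : ℤ)) • (-1 : ZMod m) = y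
    rw [zsmul_eq_mul]
    push_cast
    rw [ZMod.natCast_val, ZMod.cast_id]
    ring
  have hsupp : sh.support = Finset.univ := by
    ext y
    simp [Equiv.Perm.mem_support, hfix y]
  rw [hcyc.sign, hsupp, Finset.card_univ, ZMod.card]
  obtain ⟨k, rfl⟩ : ∃ k, m = k + 2 := ⟨m - 2, by omega⟩
  have h1 : k + 2 - 1 = k + 1 := by omega
  rw [h1, pow_succ]
  simp

lemma det_one_sub_cycleShift {m : ℕ} [NeZero m] (hm : 2 ≤ m) (c : ZMod m → ℂ) :
    (Matrix.det ((1 : Matrix (ZMod m) (ZMod m) ℂ) -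
      Matrix.of fun i j => if j = i + 1 then c j else 0)) = 1 - ∏ j, c j := by
  haveI : Fact (1 < m) := ⟨hm⟩
  set sh : Equiv.Perm (ZMod m) := Equiv.addRight (-1 : ZMod m) with hsh
  set A : Matrix (ZMod m) (ZMod m) ℂ := (1 : Matrix (ZMod m) (ZMod m) ℂ) -
      Matrix.of fun i j => if j = i + 1 then c j else 0 with hA
  have hAij : ∀ i j, A i j = (if i = j then 1 else 0) - (if j = i + 1 then c j else 0) := by
    intro i j
    simp [hA, Matrix.one_apply]
  have h10 : (1 : ZMod m) ≠ 0 := one_ne_zero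
  have hne : (1 : Equiv.Perm (ZMod m)) ≠ sh := by
    intro hcon
    have h0 := DFunLike.congr_fun hcon (0 : ZMod m)
    have h0' : (0 : ZMod m) = 0 + (-1) := h0
    exact h10 (by linear_combination h0')
  have vanish : ∀ σ : Equiv.Perm (ZMod m), σ ∉ ({1, sh} : Finset (Equiv.Perm (ZMod m))) →
      (Equiv.Perm.sign σ) • ∏ i, A (σ i) i = 0 := by
    intro σ hσ
    have hnall : ¬ (∀ i, σ i = i ∨ σ i = i - 1) := by
      intro hall
      rcases zmod_shift_cases hm σ hall with h | h <;>
        simp [h, hsh] at hσ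
    push_neg at hnall
    obtain ⟨i, hi1, hi2⟩ := hnall
    have hz : A (σ i) i = 0 := by
      rw [hAij]
      have e2 : ¬ (i = σ i + 1) := by
        intro hcon
        exact hi2 (by linear_combination -hcon)
      simp [hi1, e2]
    rw [show (∏ i, A (σ i) i) = 0 from Finset.prod_eq_zero (Finset.mem_univ i) hz, smul_zero]
  have hsum : ∑ σ ∈ ({1, sh} : Finset (Equiv.Perm (ZMod m))),
        (Equiv.Perm.sign σ) • ∏ i, A (σ i) i
      = ∑ σ : Equiv.Perm (ZMod m), (Equiv.Perm.sign σ) • ∏ i, A (σ i) i :=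
    Finset.sum_subset (Finset.subset_univ _) (fun σ _ hσ => vanish σ hσ)
  rw [Matrix.det_apply, ← hsum, Finset.sum_pair hne]
  have t1 : ∏ i, A ((1 : Equiv.Perm (ZMod m)) i) i = 1 := by
    apply Finset.prod_eq_one
    intro i _
    rw [show ((1 : Equiv.Perm (ZMod m)) i) = i from rfl, hAij]
    have hii : ¬ (i = i + 1) := by
      intro hcon
      exact h10 (by linear_combination -hcon)
    simp [hii]
  have t2 : ∏ i, A (sh i) i = (-1:ℂ)^m * ∏ j, c j := by
    have hterm : ∀ i : ZMod m, A (sh i) i = (-1 : ℂ) * c i := by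
      intro i
      rw [hAij]
      have h1 : sh i = i + (-1) := rfl
      have h2 : ¬ (sh i = i) := by
        rw [h1]; intro hcon
        exact h10 (neg_eq_zero.mp (add_eq_left.mp hcon))
      have h3 : i = sh i + 1 := by rw [h1]; ring
      simp [h2, ← h3]
    rw [Finset.prod_congr rfl (fun i _ => hterm i), Finset.prod_mul_distrib,
      Finset.prod_const, Finset.card_univ, ZMod.card]
  rw [t1, t2, Equiv.Perm.sign_one, one_smul, hsh, sign_sh hm]
  rw [Units.smul_def, zsmul_eq_mul]
  have hcast : ((((-1:ℤˣ)^(m-1) : ℤˣ) : ℤ) : ℂ) = (-1:ℂ)^(m-1) := by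
    push_cast
    ring
  rw [hcast]
  have hpow : (-1:ℂ)^(m-1) * ((-1:ℂ)^m * ∏ j, c j) = - ∏ j, c j := by
    obtain ⟨k, rfl⟩ : ∃ k, m = k + 2 := ⟨m - 2, by omega⟩
    have h1 : (k + 2 - 1) = k + 1 := by omega
    rw [h1, ← mul_assoc, ← pow_add]
    have hodd : Odd (k + 1 + (k + 2)) := ⟨k + 1, by ring⟩
    rw [hodd.neg_one_pow]
    ring
  rw [hpow]
  ring

variable {n : ℕ} {a b : Fin n} {s : Equiv.Perm (Fin n)}

lemma tCycle_val (hab : a ≤ b) (hs : IsTCycle a b s) (i : Fin n) :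
    (s i : ℕ) = if (i:ℕ) < (a:ℕ) ∨ (b:ℕ) < (i:ℕ) then (i:ℕ)
      else if (i:ℕ) = (b:ℕ) then (a:ℕ) else (i:ℕ) + 1 := by
  obtain ⟨h1, h2, h3⟩ := hs
  split_ifs with hc1 hc2
  · rw [h3 i]
    intro ⟨ha, hb⟩
    rw [Fin.le_def] at ha hb
    omega
  · have hib : i = b := Fin.ext hc2
    rw [hib, h2]
  · push_neg at hc1
    exact h1 i (by rw [Fin.le_def]; omega) (by rw [Fin.lt_def]; omega)

lemma pow_b_val (hab : a < b) (hs : IsTCycle a b s) :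
    ∀ k, 1 ≤ k → k ≤ (b:ℕ) - (a:ℕ) + 1 → (((s^k) b : Fin n) : ℕ) = (a:ℕ) + k - 1 := by
  have habv : (a:ℕ) < (b:ℕ) := hab
  intro k
  induction k with
  | zero => omega
  | succ k ih =>
    intro _ hk2
    rcases Nat.eq_zero_or_pos k with hk0 | hk0
    · subst hk0
      simp only [zero_add, pow_one]
      rw [hs.2.1]
      omega
    · have ihv := ih hk0 (by omega)
      have hpow : s ^ (k+1) = s * s ^ k := by
        rw [pow_succ, pow_mul_comm']
      rw [hpow, Equiv.Perm.mul_apply]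
      rw [tCycle_val hab.le hs]
      split_ifs with hc1 hc2 <;> omega

lemma spow_fix (hs : IsTCycle a b s) (k : ℕ) (i : Fin n)
    (hi : ¬(a ≤ i ∧ i ≤ b)) : (s^k) i = i := by
  induction k with
  | zero => rfl
  | succ k ih =>
    rw [pow_succ, Equiv.Perm.mul_apply, hs.2.2 i hi, ih]

lemma spow_b_m (hab : a < b) (hs : IsTCycle a b s) :
    (s ^ ((b:ℕ) - (a:ℕ) + 1)) b = b := by
  have habv : (a:ℕ) < (b:ℕ) := hab
  apply Fin.ext
  rw [pow_b_val hab hs _ (by omega) le_rfl]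
  omega

lemma s_pow_m (hab : a < b) (hs : IsTCycle a b s) :
    s ^ ((b:ℕ) - (a:ℕ) + 1) = 1 := by
  have habv : (a:ℕ) < (b:ℕ) := hab
  set m := (b:ℕ) - (a:ℕ) + 1 with hm
  apply Equiv.ext
  intro i
  simp only [Equiv.Perm.coe_one, id_eq]
  by_cases hi : a ≤ i ∧ i ≤ b
  · have hile : (a:ℕ) ≤ (i:ℕ) := hi.1
    have hige : (i:ℕ) ≤ (b:ℕ) := hi.2
    set k := (i:ℕ) - (a:ℕ) + 1 with hk
    have hkb : (s^k) b = i := by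
      apply Fin.ext
      rw [pow_b_val hab hs k (by omega) (by omega)]
      omega
    calc (s^m) i = (s^m) ((s^k) b) := by rw [hkb]
    _ = (s^k) ((s^m) b) := by
        rw [← Equiv.Perm.mul_apply, ← Equiv.Perm.mul_apply, ← pow_add, ← pow_add, Nat.add_comm]
    _ = (s^k) b := by rw [spow_b_m hab hs]
    _ = i := hkb
  · exact spow_fix hs m i hi

lemma pow_mod (hab : a < b) (hs : IsTCycle a b s) (x : ℕ) :
    s ^ (x % ((b:ℕ) - (a:ℕ) + 1)) = s ^ x := by
  set m := (b:ℕ) - (a:ℕ) + 1 with hm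
  conv_rhs => rw [← Nat.div_add_mod x m]
  rw [pow_add, pow_mul, s_pow_m hab hs, one_pow, one_mul]

lemma spow_b_inj (hab : a < b) (hs : IsTCycle a b s) :
    ∀ k l, k < (b:ℕ) - (a:ℕ) + 1 → l < (b:ℕ) - (a:ℕ) + 1 →
      (s^k) b = (s^l) b → k = l := by
  have habv : (a:ℕ) < (b:ℕ) := hab
  have key : ∀ k l, k < (b:ℕ) - (a:ℕ) + 1 → l < (b:ℕ) - (a:ℕ) + 1 → k ≤ l →
      (s^k) b = (s^l) b → k = l := by
    intro k l hk hl hkl heq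
    rcases Nat.eq_zero_or_pos k with hk0 | hk0
    · subst hk0
      rcases Nat.eq_zero_or_pos l with hl0 | hl0
      · omega
      · exfalso
        have := pow_b_val hab hs l hl0 (by omega)
        simp only [pow_zero, Equiv.Perm.coe_one, id_eq] at heq
        rw [← heq] at this
        omega
    · have h1 := pow_b_val hab hs k hk0 (by omega)
      have h2 := pow_b_val hab hs l (by omega) (by omega)
      rw [heq] at h1
      omega
  intro k l hk hl heq
  rcases Nat.le_total k l with h | h
  · exact key k l hk hl h heq
  · exact (key l k hl hk h heq.symm).symm

lemma s_mem_Icc (hab : a < b) (hs : IsTCycle a b s) (i : Fin n)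
    (hi : i ∈ Finset.Icc a b) : s i ∈ Finset.Icc a b := by
  rw [Finset.mem_Icc] at *
  obtain ⟨h1, h2⟩ := hi
  simp only [Fin.le_def] at h1 h2 ⊢
  have := tCycle_val hab.le hs i
  have habv : (a:ℕ) < (b:ℕ) := hab
  constructor <;> (rw [this]; split_ifs <;> omega)

lemma spow_mem_Icc (hab : a < b) (hs : IsTCycle a b s) (k : ℕ) (i : Fin n)
    (hi : i ∈ Finset.Icc a b) : (s^k) i ∈ Finset.Icc a b := by
  induction k with
  | zero => simpa using hi
  | succ k ih =>
    rw [pow_succ', Equiv.Perm.mul_apply]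
    exact s_mem_Icc hab hs _ ih

lemma image_spow_Icc (hab : a < b) (hs : IsTCycle a b s) (k : ℕ) :
    (Finset.Icc a b).image ⇑(s^k) = Finset.Icc a b := by
  apply Finset.eq_of_subset_of_card_le
  · intro x hx
    rw [Finset.mem_image] at hx
    obtain ⟨i, hi, rfl⟩ := hx
    exact spow_mem_Icc hab hs k i hi
  · rw [Finset.card_image_of_injective _ (s^k).injective]

lemma exists_spow_b (hab : a < b) (hs : IsTCycle a b s) (w : Fin n)
    (hw : w ∈ Finset.Icc a b) :
    ∃ k, k < (b:ℕ) - (a:ℕ) + 1 ∧ (s^k) b = w := by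
  have habv : (a:ℕ) < (b:ℕ) := hab
  rw [Finset.mem_Icc, Fin.le_def, Fin.le_def] at hw
  by_cases hwb : (w:ℕ) = (b:ℕ)
  · exact ⟨0, by omega, by simpa using (Fin.ext hwb).symm⟩
  · refine ⟨(w:ℕ) - (a:ℕ) + 1, by omega, ?_⟩
    apply Fin.ext
    rw [pow_b_val hab hs _ (by omega) (by omega)]
    omega

lemma invSet_tCycle (hab : a < b) (hs : IsTCycle a b s) :
    invSet s = (Finset.Ico a b).map
      ⟨fun x => (x, b), fun x y h => (Prod.ext_iff.mp h).1⟩ := by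
  have habv : (a:ℕ) < (b:ℕ) := hab
  ext p
  simp only [invSet, Finset.mem_filter, Finset.mem_univ, true_and, Finset.mem_map,
    Finset.mem_Ico, Function.Embedding.coeFn_mk]
  constructor
  · rintro ⟨hlt, hgt⟩
    rw [Fin.lt_def] at hlt hgt
    rw [tCycle_val hab.le hs p.1, tCycle_val hab.le hs p.2] at hgt
    have hb2 : (p.2 : ℕ) = (b : ℕ) ∧ (a:ℕ) ≤ (p.1:ℕ) ∧ (p.1:ℕ) < (b:ℕ) := by
      split_ifs at hgt <;> omega
    refine ⟨p.1, ⟨by rw [Fin.le_def]; omega, by rw [Fin.lt_def]; omega⟩, ?_⟩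
    have h2b : p.2 = b := Fin.ext hb2.1
    rw [← h2b]
    rfl
  · rintro ⟨x, ⟨hax, hxb⟩, rfl⟩
    rw [Fin.le_def] at hax
    rw [Fin.lt_def] at hxb
    refine ⟨by rw [Fin.lt_def]; exact hxb, ?_⟩
    rw [Fin.lt_def]
    show ((s b : Fin n) : ℕ) < ((s x : Fin n) : ℕ)
    rw [tCycle_val hab.le hs x, hs.2.1]
    split_ifs <;> omega

lemma prod_invSet (hab : a < b) (hs : IsTCycle a b s) (f : Fin n × Fin n → ℂ) :
    ∏ p ∈ invSet s, f p = ∏ x ∈ Finset.Ico a b, f (x, b) := by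
  rw [invSet_tCycle hab hs, Finset.prod_map]
  rfl

end DetTwistAux

open DetTwistAux in
/-- For `a < b` in `Fin n`, the determinant of `I − M_q(t_{b,a})` factors as
`∏_T (1 − σ_T)^{(b−a)!·(n−b+a−1)!}`, the product being over all subsets
`T ⊆ Fin n` of cardinality `b − a + 1`. -/
theorem det_one_sub_twistMat (n : ℕ) (hn : 1 ≤ n) (q : Fin n → Fin n → ℂ)
    (a b : Fin n) (hab : a < b) (s : Equiv.Perm (Fin n)) (hs : IsTCycle a b s) :
    ((1 : PermMatrix n) - twistMat n q s).det =
      ∏ T ∈ Finset.powersetCard ((b : ℕ) - (a : ℕ) + 1) (Finset.univ : Finset (Fin n)),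
        (1 - sigmaT q T) ^
          (Nat.factorial ((b : ℕ) - (a : ℕ)) *
            Nat.factorial (n - (b : ℕ) + (a : ℕ) - 1)) := by
  classical
  have habv : (a:ℕ) < (b:ℕ) := hab
  have hbn : (b:ℕ) < n := b.isLt
  set m : ℕ := (b:ℕ) - (a:ℕ) + 1 with hm
  have hm2 : 2 ≤ m := by omega
  have hmn : m ≤ n := by omega
  haveI : NeZero m := ⟨by omega⟩
  haveI : Fact (1 < m) := ⟨hm2⟩
  have hbIcc : b ∈ Finset.Icc a b := Finset.mem_Icc.mpr ⟨hab.le, le_rfl⟩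
  -- local versions of cycle lemmas with `m`
  have pow_mod' : ∀ x, s ^ (x % m) = s ^ x := fun x => pow_mod hab hs x
  have spow_b_inj' : ∀ k l, k < m → l < m → (s^k) b = (s^l) b → k = l :=
    spow_b_inj hab hs
  have spow_mem_Icc' : ∀ (k : ℕ) (i : Fin n), i ∈ Finset.Icc a b →
      (s^k) i ∈ Finset.Icc a b := spow_mem_Icc hab hs
  have image_spow_Icc' : ∀ k : ℕ, (Finset.Icc a b).image ⇑(s^k) = Finset.Icc a b :=
    image_spow_Icc hab hs
  have exists_spow_b' : ∀ w ∈ Finset.Icc a b, ∃ k, k < m ∧ (s^k) b = w :=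
    fun w hw => exists_spow_b hab hs w hw
  -- the coefficient function
  set d : Equiv.Perm (Fin n) → ℂ := fun τ => ∏ p ∈ invSet s, q (τ p.2) (τ p.1) with hd
  -- the canonical representatives
  let K := {τ : Equiv.Perm (Fin n) // ∀ i ∈ Finset.Icc a b, τ i ≤ τ b}
  let F : ZMod m × K → Equiv.Perm (Fin n) := fun p => p.2.1 * s ^ (p.1.val)
  have hFinj : Function.Injective F := by
    have key : ∀ (i j : ZMod m) (τ1 τ2 : K), i.val ≤ j.val →
        τ1.1 * s ^ i.val = τ2.1 * s ^ j.val → i = j ∧ τ1 = τ2 := by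
      intro i j τ1 τ2 hij heq
      have hjlt : j.val < m := ZMod.val_lt j
      set e := j.val - i.val with he
      have hsj : s ^ j.val = s ^ e * s ^ i.val := by
        rw [← pow_add]
        congr 1
        omega
      rw [hsj, ← mul_assoc] at heq
      have heq2 : τ1.1 = τ2.1 * s ^ e := mul_right_cancel heq
      have hsb : (s ^ e) b ∈ Finset.Icc a b := spow_mem_Icc' e b hbIcc
      have h1 : τ1.1 b = τ2.1 ((s ^ e) b) := by
        rw [heq2, Equiv.Perm.mul_apply]
      have hle1 : τ1.1 b ≤ τ2.1 b := by
        rw [h1]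
        exact τ2.2 _ hsb
      obtain ⟨x0, hx0, hx0e⟩ : ∃ x0 ∈ Finset.Icc a b, (s^e) x0 = b := by
        have hb2 : b ∈ (Finset.Icc a b).image ⇑(s^e) := by
          rw [image_spow_Icc' e]
          exact hbIcc
        rw [Finset.mem_image] at hb2
        exact hb2
      have h2 : τ2.1 b = τ1.1 x0 := by
        rw [heq2, Equiv.Perm.mul_apply, hx0e]
      have hle2 : τ2.1 b ≤ τ1.1 b := by
        rw [h2]
        exact τ1.2 x0 hx0
      have hbb : τ1.1 b = τ2.1 b := le_antisymm hle1 hle2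
      have hsbb : (s^e) b = b := by
        apply τ2.1.injective
        rw [← h1, hbb]
      have he0 : e = 0 := spow_b_inj' e 0 (by omega) (by omega) (by simpa using hsbb)
      have hij' : i.val = j.val := by omega
      have hieq : i = j := ZMod.val_injective m hij'
      refine ⟨hieq, ?_⟩
      apply Subtype.ext
      rw [heq2, he0, pow_zero, mul_one]
    rintro ⟨i, τ1⟩ ⟨j, τ2⟩ heq
    rcases Nat.le_total i.val j.val with h | h
    · obtain ⟨h1, h2⟩ := key i j τ1 τ2 h heq
      rw [h1, h2]
    · obtain ⟨h1, h2⟩ := key j i τ2 τ1 h heq.symm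
      rw [h1, h2]
  have hFsurj : Function.Surjective F := by
    intro ρ
    obtain ⟨w, hw, hwmax⟩ := Finset.exists_max_image (Finset.Icc a b) ⇑ρ ⟨b, hbIcc⟩
    obtain ⟨k, hk, hkb⟩ := exists_spow_b' w hw
    have hcan : ∀ i ∈ Finset.Icc a b, (ρ * s ^ k) i ≤ (ρ * s ^ k) b := by
      intro x hx
      simp only [Equiv.Perm.mul_apply]
      rw [hkb]
      exact hwmax _ (spow_mem_Icc' k x hx)
    refine ⟨⟨(-(k : ZMod m)), ⟨ρ * s ^ k, hcan⟩⟩, ?_⟩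
    show ρ * s ^ k * s ^ ((-(k : ZMod m)).val) = ρ
    rw [mul_assoc, ← pow_add]
    have hzero : (k + (-(k : ZMod m)).val) % m = 0 := by
      rw [ZMod.neg_val', ZMod.val_cast_of_lt hk]
      rcases Nat.eq_zero_or_pos k with h0 | h0
      · subst h0
        simp [Nat.mod_self]
      · rw [Nat.mod_eq_of_lt (by omega : m - k < m)]
        rw [show k + (m - k) = m from by omega, Nat.mod_self]
    rw [← pow_mod', hzero, pow_zero, mul_one]
  let E : (ZMod m × K) ≃ Equiv.Perm (Fin n) := Equiv.ofBijective F ⟨hFinj, hFsurj⟩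
  have hpow_succ : ∀ j : ZMod m, s ^ ((j+1 : ZMod m).val) = s ^ j.val * s := by
    intro j
    rw [ZMod.val_add, ZMod.val_one, pow_mod', pow_succ]
  -- canonical rep maps b to the max of its interval image
  have hcanmax : ∀ (k : K) (S : Finset (Fin n)) (hS : S.Nonempty),
      (Finset.Icc a b).image ⇑k.1 = S → k.1 b = S.max' hS := by
    intro k S hS hTS
    subst hTS
    apply le_antisymm
    · exact Finset.le_max' _ _ (Finset.mem_image_of_mem _ hbIcc)
    · have hmem := Finset.max'_mem _ hS
      rw [Finset.mem_image] at hmem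
      obtain ⟨x, hx, hxe⟩ := hmem
      rw [← hxe]
      exact k.2 x hx
  -- the block-diagonal structure
  have hblock : ((1 : PermMatrix n) - twistMat n q s).submatrix F F =
      Matrix.blockDiagonal (fun k : K => (1 : Matrix (ZMod m) (ZMod m) ℂ) -
        Matrix.of fun i j => if j = i + 1 then d (k.1 * s ^ (j.val)) else 0) := by
    have hdF : ∀ (j : ZMod m) (l : K),
        (∏ p ∈ invSet s, q ((F (j,l)) p.2) ((F (j,l)) p.1)) = d ((l.1 * s ^ (j.val))) :=
      fun _ _ => rfl
    ext ⟨i, k⟩ ⟨j, l⟩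
    have c1 : (F (i,k) = F (j,l)) ↔ (i = j ∧ k = l) := by
      constructor
      · intro h
        have h2 := hFinj h
        exact ⟨congrArg Prod.fst h2, congrArg Prod.snd h2⟩
      · rintro ⟨rfl, rfl⟩
        rfl
    have hmul : F (i,k) * s = F (i+1, k) := by
      show k.1 * s ^ i.val * s = k.1 * s ^ ((i+1 : ZMod m).val)
      rw [hpow_succ, mul_assoc]
    have c2 : (F (i,k) = F (j,l) * s⁻¹) ↔ (j = i + 1 ∧ k = l) := by
      rw [eq_mul_inv_iff_mul_eq, hmul]
      constructor
      · intro h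
        have h2 := hFinj h
        exact ⟨(congrArg Prod.fst h2).symm, congrArg Prod.snd h2⟩
      · rintro ⟨rfl, rfl⟩
        rfl
    simp only [Matrix.submatrix_apply, Matrix.sub_apply, Matrix.one_apply,
      Matrix.blockDiagonal_apply, Matrix.of_apply, twistMat, hdF]
    rw [if_congr c1 rfl rfl, if_congr c2 rfl rfl]
    by_cases hkl : k = l
    · subst hkl
      by_cases hij : i = j
      · subst hij
        have hne1 : ¬ (i = i + 1) := by
          intro hcon
          exact one_ne_zero (left_eq_add.mp hcon)
        simp [hne1]
      · by_cases hj1 : j = i + 1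
        · subst hj1
          simp [hij]
        · simp [hij, hj1]
    · simp [hkl]
  -- per-coset product equals sigmaT
  have hprod : ∀ k : K, ∏ j : ZMod m, d (k.1 * s ^ (j.val)) =
      sigmaT q ((Finset.Icc a b).image ⇑k.1) := by
    intro k
    set τ := k.1 with hτ
    set T0 := (Finset.Icc a b).image ⇑τ with hT0
    have hd2 : ∀ (p : ℕ), d (τ * s ^ p) =
        ∏ x ∈ Finset.Ico a b, q (τ ((s^p) b)) (τ ((s^p) x)) := by
      intro p
      rw [hd]
      simp only
      rw [prod_invSet hab hs (fun pr => q ((τ * s ^ p) pr.2) ((τ * s ^ p) pr.1))]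
      simp only [Equiv.Perm.mul_apply]
    have step1 : ∏ j : ZMod m, d (τ * s ^ (j.val)) =
        ∏ p ∈ ((Finset.univ : Finset (ZMod m)) ×ˢ Finset.Ico a b),
          q (τ ((s^(p.1.val)) b)) (τ ((s^(p.1.val)) p.2)) := by
      calc ∏ j : ZMod m, d (τ * s ^ (j.val))
          = ∏ j : ZMod m, ∏ x ∈ Finset.Ico a b,
              q (τ ((s^(j.val)) b)) (τ ((s^(j.val)) x)) :=
            Finset.prod_congr rfl fun j _ => hd2 j.val
        _ = ∏ p ∈ ((Finset.univ : Finset (ZMod m)) ×ˢ Finset.Ico a b),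
              q (τ ((s^(p.1.val)) b)) (τ ((s^(p.1.val)) p.2)) :=
            (Finset.prod_product (s := (Finset.univ : Finset (ZMod m)))
              (t := Finset.Ico a b)
              (f := fun p => q (τ ((s^(p.1.val)) b)) (τ ((s^(p.1.val)) p.2)))).symm
    rw [step1]
    have step2 : ∏ p ∈ ((T0 ×ˢ T0).filter fun p => p.1 ≠ p.2), q p.1 p.2 = sigmaT q T0 := rfl
    rw [← step2]
    apply Finset.prod_bij (fun (p : ZMod m × Fin n)
      (_ : p ∈ (Finset.univ : Finset (ZMod m)) ×ˢ Finset.Ico a b) =>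
      (τ ((s^(p.1.val)) b), τ ((s^(p.1.val)) p.2)))
    · rintro ⟨j, x⟩ hp
      rw [Finset.mem_product, Finset.mem_Ico] at hp
      have hx : x ∈ Finset.Icc a b := Finset.mem_Icc.mpr ⟨hp.2.1, hp.2.2.le⟩
      rw [Finset.mem_filter, Finset.mem_product]
      refine ⟨⟨?_, ?_⟩, ?_⟩
      · rw [hT0]
        exact Finset.mem_image_of_mem _ (spow_mem_Icc' _ _ hbIcc)
      · rw [hT0]
        exact Finset.mem_image_of_mem _ (spow_mem_Icc' _ _ hx)
      · intro hcon
        have hbx : b = x := (s^(j.val)).injective (τ.injective hcon)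
        rw [← hbx] at hp
        exact absurd hp.2.2 (lt_irrefl b)
    · rintro ⟨j1, x1⟩ hp1 ⟨j2, x2⟩ hp2 heq
      rw [Prod.mk.injEq] at heq
      obtain ⟨he1, he2⟩ := heq
      have hb12 : (s^(j1.val)) b = (s^(j2.val)) b := τ.injective he1
      have hj : j1.val = j2.val := spow_b_inj' _ _ (ZMod.val_lt j1) (ZMod.val_lt j2) hb12
      have hjeq : j1 = j2 := ZMod.val_injective m hj
      subst hjeq
      have hx12 : x1 = x2 := (s^(j1.val)).injective (τ.injective he2)
      rw [hx12]
    · rintro ⟨u, v⟩ hp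
      rw [Finset.mem_filter, Finset.mem_product] at hp
      obtain ⟨⟨hu, hv⟩, huv⟩ := hp
      rw [hT0, Finset.mem_image] at hu hv
      obtain ⟨w, hw, hwu⟩ := hu
      obtain ⟨w', hw', hw'v⟩ := hv
      obtain ⟨kk, hkk, hkkb⟩ := exists_spow_b' w hw
      obtain ⟨x0, hx0, hx0e⟩ : ∃ x0 ∈ Finset.Icc a b, (s^kk) x0 = w' := by
        have h2 : w' ∈ (Finset.Icc a b).image ⇑(s^kk) := by
          rw [image_spow_Icc' kk]
          exact hw'
        rw [Finset.mem_image] at h2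
        exact h2
      have hx0b : x0 ≠ b := by
        intro hcon
        rw [hcon, hkkb] at hx0e
        rw [← hx0e, hwu] at hw'v
        exact huv hw'v
      have hkv : ((kk : ZMod m)).val = kk := ZMod.val_cast_of_lt hkk
      refine ⟨((kk : ZMod m), x0), ?_, ?_⟩
      · rw [Finset.mem_product]
        refine ⟨Finset.mem_univ _, Finset.mem_Ico.mpr ⟨(Finset.mem_Icc.mp hx0).1,
          lt_of_le_of_ne (Finset.mem_Icc.mp hx0).2 hx0b⟩⟩
      · rw [Prod.mk.injEq]
        rw [hkv, hkkb, hx0e, hwu, hw'v]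
        exact ⟨rfl, rfl⟩
    · rintro ⟨j, x⟩ hp
      rfl
  -- determinant computation
  have hdet : ((1 : PermMatrix n) - twistMat n q s).det =
      ∏ k : K, (1 - sigmaT q ((Finset.Icc a b).image ⇑k.1)) := by
    rw [← Matrix.det_submatrix_equiv_self E]
    have hEF : ((1 : PermMatrix n) - twistMat n q s).submatrix ⇑E ⇑E =
        ((1 : PermMatrix n) - twistMat n q s).submatrix F F := rfl
    rw [hEF, hblock, Matrix.det_blockDiagonal]
    exact Finset.prod_congr rfl fun k _ => by
      rw [det_one_sub_cycleShift hm2, hprod k]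
  rw [hdet]
  -- group the product by the image set
  set T : K → Finset (Fin n) := fun k => (Finset.Icc a b).image ⇑k.1 with hT
  have hmaps : ∀ k : K, T k ∈ Finset.powersetCard m Finset.univ := by
    intro k
    rw [Finset.mem_powersetCard_univ, hT]
    rw [Finset.card_image_of_injective _ k.1.injective, Fin.card_Icc]
    omega
  have hfib : ∀ S ∈ Finset.powersetCard m (Finset.univ : Finset (Fin n)),
      ∀ S' ∈ Finset.powersetCard m (Finset.univ : Finset (Fin n)),
      (Finset.univ.filter fun k : K => T k = S).card =
      (Finset.univ.filter fun k : K => T k = S').card := by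
    have hstep : ∀ (ρ' : Equiv.Perm (Fin n)) (S1 S2 : Finset (Fin n))
        (h1 : S1.Nonempty) (h2 : S2.Nonempty),
        S1.card = S2.card → (∀ x, x ∈ S1 ↔ ρ' x ∈ S2) → ρ' (S1.max' h1) = S2.max' h2 →
        ∀ k : K, T k = S1 → (∀ i ∈ Finset.Icc a b, (ρ' * k.1) i ≤ (ρ' * k.1) b)
          ∧ (Finset.Icc a b).image ⇑(ρ' * k.1) = S2 := by
      intro ρ' S1 S2 h1 h2 hc12 hmem12 hmax12 k hTk
      have hTk' : (Finset.Icc a b).image ⇑k.1 = S1 := hTk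
      have hmax : k.1 b = S1.max' h1 := hcanmax k S1 h1 hTk'
      constructor
      · intro i hi
        have hki : k.1 i ∈ S1 := by
          rw [← hTk']
          exact Finset.mem_image_of_mem _ hi
        simp only [Equiv.Perm.mul_apply]
        rw [hmax, hmax12]
        exact Finset.le_max' _ _ ((hmem12 _).mp hki)
      · have himg : (Finset.Icc a b).image ⇑(ρ' * k.1) = S1.image ⇑ρ' := by
          rw [Equiv.Perm.coe_mul, ← Finset.image_image, hTk']
        rw [himg]
        apply Finset.eq_of_subset_of_card_le
        · intro y hy
          rw [Finset.mem_image] at hy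
          obtain ⟨x, hx, rfl⟩ := hy
          exact (hmem12 x).mp hx
        · rw [Finset.card_image_of_injective _ ρ'.injective]
          omega
    intro S hS S' hS'
    rw [Finset.mem_powersetCard_univ] at hS hS'
    have hSne : S.Nonempty := Finset.card_pos.mp (by omega)
    have hS'ne : S'.Nonempty := Finset.card_pos.mp (by omega)
    have hcc : S.card = S'.card := by rw [hS, hS']
    obtain ⟨ρ, hρmem, hρmax⟩ : ∃ ρ : Equiv.Perm (Fin n),
        (∀ x, x ∈ S ↔ ρ x ∈ S') ∧ ρ (S.max' hSne) = S'.max' hS'ne := by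
      have hcompl : Fintype.card {x : Fin n // ¬ x ∈ S} =
          Fintype.card {x : Fin n // ¬ x ∈ S'} := by
        rw [Fintype.card_subtype_compl, Fintype.card_subtype_compl,
          Fintype.card_coe, Fintype.card_coe, hcc]
      let e0 : {x // x ∈ S} ≃ {x // x ∈ S'} := Finset.equivOfCardEq hcc
      let emax : {x // x ∈ S} := ⟨S.max' hSne, S.max'_mem hSne⟩
      let emax' : {x // x ∈ S'} := ⟨S'.max' hS'ne, S'.max'_mem hS'ne⟩
      let e1 := e0.trans (Equiv.swap (e0 emax) emax')
      let e2 : {x : Fin n // ¬ x ∈ S} ≃ {x : Fin n // ¬ x ∈ S'} :=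
        Fintype.equivOfCardEq hcompl
      have hpos : ∀ (x : Fin n) (hx : x ∈ S),
          Equiv.subtypeCongr e1 e2 x = (e1 ⟨x, hx⟩ : Fin n) := by
        intro x hx
        simp [Equiv.subtypeCongr, hx]
      have hneg : ∀ (x : Fin n) (hx : ¬ x ∈ S),
          Equiv.subtypeCongr e1 e2 x = (e2 ⟨x, hx⟩ : Fin n) := by
        intro x hx
        simp [Equiv.subtypeCongr, hx]
      refine ⟨Equiv.subtypeCongr e1 e2, ?_, ?_⟩
      · intro x
        constructor
        · intro hx
          rw [hpos x hx]
          exact (e1 ⟨x, hx⟩).2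
        · intro hx
          by_contra hc
          rw [hneg x hc] at hx
          exact (e2 ⟨x, hc⟩).2 hx
      · rw [hpos _ (S.max'_mem hSne)]
        have he1 : e1 emax = emax' := by
          show (Equiv.swap (e0 emax) emax') (e0 emax) = emax'
          exact Equiv.swap_apply_left _ _
        show ((e1 emax : {x // x ∈ S'}) : Fin n) = S'.max' hS'ne
        rw [he1]
    have hρmem' : ∀ x, x ∈ S' ↔ ρ⁻¹ x ∈ S := by
      intro x
      have := hρmem (ρ⁻¹ x)
      rw [show ρ (ρ⁻¹ x) = x from (Equiv.eq_symm_apply ρ).mp rfl] at this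
      exact this.symm
    have hρmax' : ρ⁻¹ (S'.max' hS'ne) = S.max' hSne := by
      rw [← hρmax, show ρ⁻¹ (ρ (S.max' hSne)) = S.max' hSne from Equiv.Perm.inv_eq_iff_eq.mpr rfl]
    apply Finset.card_bij'
      (fun k hk => (⟨ρ * k.1, (hstep ρ S S' hSne hS'ne hcc hρmem hρmax k
        ((Finset.mem_filter.mp hk).2)).1⟩ : K))
      (fun k hk => (⟨ρ⁻¹ * k.1, (hstep ρ⁻¹ S' S hS'ne hSne hcc.symm hρmem' hρmax' k
        ((Finset.mem_filter.mp hk).2)).1⟩ : K))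
    · intro k hk
      apply Subtype.ext
      show ρ⁻¹ * (ρ * k.1) = k.1
      rw [inv_mul_cancel_left]
    · intro k hk
      apply Subtype.ext
      show ρ * (ρ⁻¹ * k.1) = k.1
      rw [mul_inv_cancel_left]
    · intro k hk
      exact Finset.mem_filter.mpr ⟨Finset.mem_univ _,
        (hstep ρ S S' hSne hS'ne hcc hρmem hρmax k ((Finset.mem_filter.mp hk).2)).2⟩
    · intro k hk
      exact Finset.mem_filter.mpr ⟨Finset.mem_univ _,
        (hstep ρ⁻¹ S' S hS'ne hSne hcc.symm hρmem' hρmax' k ((Finset.mem_filter.mp hk).2)).2⟩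
  have hcardK : m * Fintype.card K = n.factorial := by
    have hc := Fintype.card_congr E
    rw [Fintype.card_prod, ZMod.card, Fintype.card_perm, Fintype.card_fin] at hc
    exact hc
  have hfibcard : ∀ S ∈ Finset.powersetCard m (Finset.univ : Finset (Fin n)),
      (Finset.univ.filter fun k : K => T k = S).card =
        (m-1).factorial * (n-m).factorial := by
    intro S hS
    have hsum := Finset.card_eq_sum_card_fiberwise (fun k (_ : k ∈ Finset.univ) => hmaps k)
    rw [Finset.sum_congr rfl (fun S' hS' => hfib S' hS' S hS), Finset.sum_const,
      smul_eq_mul, Finset.card_univ] at hsum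
    have hpcs : (Finset.powersetCard m (Finset.univ : Finset (Fin n))).card = n.choose m := by
      rw [Finset.card_powersetCard, Finset.card_univ, Fintype.card_fin]
    rw [hpcs] at hsum
    have hmf : m.factorial = m * (m-1).factorial := by
      conv_lhs => rw [show m = (m-1)+1 from by omega]
      rw [Nat.factorial_succ, show (m-1)+1 = m from by omega]
    have key : m * (n.choose m * (Finset.univ.filter fun k : K => T k = S).card) =
        m * (n.choose m * ((m-1).factorial * (n-m).factorial)) := by
      rw [← hsum, hcardK]
      have h2 : m * (n.choose m * ((m-1).factorial * (n-m).factorial)) =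
          n.choose m * m.factorial * (n-m).factorial := by
        rw [hmf]; ring
      rw [h2, Nat.choose_mul_factorial_mul_factorial hmn]
    have h3 := Nat.eq_of_mul_eq_mul_left (by omega : 0 < m) key
    exact Nat.eq_of_mul_eq_mul_left (Nat.choose_pos hmn) h3
  rw [← Finset.prod_fiberwise_of_maps_to (fun k (_ : k ∈ Finset.univ) => hmaps k)
    (fun k => (1 - sigmaT q (T k)))]
  apply Finset.prod_congr rfl
  intro S hS
  have hinner : ∏ k ∈ Finset.univ.filter (fun k : K => T k = S), (1 - sigmaT q (T k)) =
      (1 - sigmaT q S) ^ (Finset.univ.filter fun k : K => T k = S).card := by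
    rw [Finset.prod_congr rfl (fun k hk => by rw [(Finset.mem_filter.mp hk).2]),
      Finset.prod_const]
  rw [hinner, hfibcard S hS]
  congr 1
  have e1 : m - 1 = (b:ℕ) - (a:ℕ) := by omega
  have e2 : n - m = n - (b:ℕ) + (a:ℕ) - 1 := by omega
  rw [e1, e2]
end

section
/- For all a ≤ b in Fin n with a ≥ 2, the determinant of I − D_{a−1}·M_q(t_{b,a}) factors as det(I − D_{a−1}·M_q(t_{b,a})) = ∏_{T} (1 − σ_T)^{(b−a)!·(b−a+2)·(n−b+a−2)!}, where the product runs over all subsets T ⊆ Fin n of cardinality b−a+2. -/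
open Fin.NatCast Fin.CommRing in
lemma finRotate_pow_apply (m k : ℕ) (i : Fin (m+1)) :
    ((finRotate (m+1)) ^ k) i = i + (k : Fin (m+1)) := by
  induction k generalizing i with
  | zero => simp
  | succ k ih =>
      rw [pow_succ, Equiv.Perm.mul_apply, finRotate_succ_apply, ih (i+1)]
      push_cast
      ring

lemma finRotate_ne_fixed {m : ℕ} (i : Fin (m+2)) : finRotate (m+2) i ≠ i := by
  rw [finRotate_succ_apply]
  intro h
  have h1 : (1 : Fin (m+2)) = 0 := by
    have := congrArg (fun x => x - i) h
    simpa [add_comm, add_sub_cancel_right] using this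
  exact absurd h1 (by simp [Fin.ext_iff])

open Fin.NatCast Fin.CommRing in
lemma perm_eq_one_or_rotate {m : ℕ} (π : Equiv.Perm (Fin (m+1)))
    (hfix : ∀ i, π i = i ∨ π i = (finRotate (m+1))⁻¹ i) :
    π = 1 ∨ π = (finRotate (m+1))⁻¹ := by
  rcases m with _ | m'
  · left; ext i
    have : Subsingleton (Fin 1) := by infer_instance
    exact congrArg Fin.val (Subsingleton.elim _ _)
  · set ρ : Equiv.Perm (Fin (m'+2)) := (finRotate (m'+2))⁻¹ with hρ
    by_cases h1 : π = 1
    · exact Or.inl h1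
    right
    have hex : ∃ i, π i ≠ i := by
      by_contra hc
      push_neg at hc
      exact h1 (Equiv.ext hc)
    obtain ⟨i₀, hi₀⟩ := hex
    have hρfix : ∀ x : Fin (m'+2), ρ x ≠ x := by
      intro x hx
      have : finRotate (m'+2) x = x := by
        conv_lhs => rw [← hx]
        simp [hρ]
      exact finRotate_ne_fixed x this
    have claim : ∀ k : ℕ, π ((ρ ^ k) i₀) = ρ ((ρ ^ k) i₀) := by
      intro k
      induction k with
      | zero =>
          simpa using (hfix i₀).resolve_left hi₀
      | succ k ih =>
          set x := (ρ ^ k) i₀ with hx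
          have hrx : (ρ ^ (k+1)) i₀ = ρ x := by
            rw [pow_succ', Equiv.Perm.mul_apply]
          rw [hrx]
          rcases hfix (ρ x) with hc | hc
      -- if π (ρ x) = ρ x then π (ρ x) = π x so ρ x = x, contradiction
          · exfalso
            have : π (ρ x) = π x := by rw [hc, ih]
            exact hρfix x (π.injective this)
          · exact hc
    ext j
    -- choose k with ρ^k i₀ = j
    set k : ℕ := ((i₀ - j : Fin (m'+2)) : ℕ) with hk
    have hrot : ((finRotate (m'+2)) ^ k) j = i₀ := by
      rw [finRotate_pow_apply, hk, Fin.cast_val_eq_self]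
      simp [add_sub_cancel]
    have hj : (ρ ^ k) i₀ = j := by
      rw [hρ, inv_pow, ← hrot]
      simp
    have := claim k
    rw [hj] at this
    exact congrArg Fin.val this

lemma det_one_sub_rotate (m : ℕ) (w : Fin (m+1) → ℂ) :
    (Matrix.det fun i j : Fin (m+1) =>
        (if i = j then (1:ℂ) else 0) - (if j = finRotate (m+1) i then w j else 0))
      = 1 - ∏ j, w j := by
  rcases m with _ | m'
  · erw [Matrix.det_fin_one]
    simp [Finset.univ_unique]
  set ρ : Equiv.Perm (Fin (m'+2)) := (finRotate (m'+2))⁻¹ with hρ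
  set M : Matrix (Fin (m'+2)) (Fin (m'+2)) ℂ := fun i j =>
    (if i = j then (1:ℂ) else 0) - (if j = finRotate (m'+2) i then w j else 0) with hM
  have hρ1 : ρ ≠ 1 := by
    intro h
    have := finRotate_ne_fixed (0 : Fin (m'+2))
    apply this
    have : finRotate (m'+2) = 1 := by
      rw [← inv_inv (finRotate (m'+2)), ← hρ, h, inv_one]
    rw [this]; rfl
  have hvanish : ∀ π : Equiv.Perm (Fin (m'+2)), π ≠ 1 → π ≠ ρ →
      ∏ i, M (π i) i = 0 := by
    intro π h1 h2
    have : ∃ i, ¬(π i = i ∨ π i = ρ i) := by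
      by_contra hc
      push_neg at hc
      rcases perm_eq_one_or_rotate π (by
        intro i
        rcases Decidable.em (π i = i) with h | h
        · exact Or.inl h
        · exact (hc i)) with h | h
      · exact h1 h
      · exact h2 h
    obtain ⟨i, hi⟩ := this
    push_neg at hi
    obtain ⟨hi1, hi2⟩ := hi
    apply Finset.prod_eq_zero (Finset.mem_univ i)
    have h3 : ¬ (i = finRotate (m'+2) (π i)) := by
      intro h
      apply hi2
      rw [hρ]
      exact Equiv.Perm.eq_inv_iff_eq.mpr h.symm
    rw [hM]
    simp only
    rw [if_neg hi1, if_neg h3, sub_zero]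
  have hsmul : ∀ (u : ℤˣ) (x : ℂ), u • x = ((u : ℤ) : ℂ) * x := by
    intro u x
    rw [Units.smul_def, zsmul_eq_mul]
  rw [Matrix.det_apply]
  rw [← Finset.sum_subset (Finset.subset_univ ({1, ρ} : Finset (Equiv.Perm (Fin (m'+2)))))
    (by
      intro π _ hπ
      simp only [Finset.mem_insert, Finset.mem_singleton] at hπ
      push_neg at hπ
      rw [hvanish π hπ.1 hπ.2, smul_zero])]
  rw [Finset.sum_pair (Ne.symm hρ1)]
  have t1 : (Equiv.Perm.sign (1 : Equiv.Perm (Fin (m'+2)))) • ∏ i, M ((1 : Equiv.Perm (Fin (m'+2))) i) i = 1 := by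
    rw [Equiv.Perm.sign_one, one_smul]
    rw [Finset.prod_eq_one]
    intro i _
    have h2 : ¬ (i = finRotate (m'+2) i) := fun h => finRotate_ne_fixed i h.symm
    simp [hM, h2]
  have t2 : (Equiv.Perm.sign ρ) • ∏ i, M (ρ i) i = - ∏ j, w j := by
    have hprod : ∏ i, M (ρ i) i = (-1 : ℂ)^(m'+2) * ∏ j, w j := by
      have hentry : ∀ i, M (ρ i) i = - w i := by
        intro i
        rw [hM]
        simp only
        have h1 : ρ i ≠ i := by
          intro h
          exact finRotate_ne_fixed i (by conv_lhs => rw [← h]; simp [hρ])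
        have h2 : i = finRotate (m'+2) (ρ i) := by simp [hρ]
        rw [if_neg h1, if_pos h2, zero_sub]
      rw [Finset.prod_congr rfl (fun i _ => hentry i)]
      rw [show (fun i => -(w i)) = fun i => (-1:ℂ) * w i from funext fun i => by ring,
        Finset.prod_mul_distrib, Finset.prod_const, Finset.card_univ, Fintype.card_fin]
    have hsign : Equiv.Perm.sign ρ = (-1 : ℤˣ)^(m'+1) := by
      rw [hρ, Equiv.Perm.sign_inv, sign_finRotate]
      rfl
    rw [hprod, hsign, hsmul]
    push_cast
    rw [← mul_assoc, ← pow_add]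
    have : Odd (m' + 1 + (m' + 2)) := by
      refine ⟨m' + 1, by ring⟩
    rw [this.neg_one_pow]
    ring
  rw [t1, t2]
  ring


section CosetEquiv

variable {G : Type*} [Group G] [Fintype G] (g : G) (m : ℕ)

noncomputable def cosetFun : Fin m × (G ⧸ Subgroup.zpowers g) → G :=
  fun p => Quotient.out p.2 * g ^ (p.1 : ℕ)

lemma cosetFun_bijective (hm0 : 0 < m) (h1 : g ^ m = 1)
    (hinj : ∀ k j : ℕ, k < m → j < m → g ^ k = g ^ j → k = j) :
    Function.Bijective (cosetFun g m) := by
  constructor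
  · rintro ⟨k, C⟩ ⟨j, C'⟩ h
    simp only [cosetFun] at h
    have hCk : (QuotientGroup.mk (Quotient.out C * g ^ (k:ℕ)) : G ⧸ Subgroup.zpowers g) = C := by
      rw [QuotientGroup.mk_mul_of_mem _ (Subgroup.pow_mem _ (Subgroup.mem_zpowers g) _)]
      exact QuotientGroup.out_eq' C
    have hCj : (QuotientGroup.mk (Quotient.out C' * g ^ (j:ℕ)) : G ⧸ Subgroup.zpowers g) = C' := by
      rw [QuotientGroup.mk_mul_of_mem _ (Subgroup.pow_mem _ (Subgroup.mem_zpowers g) _)]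
      exact QuotientGroup.out_eq' C'
    have hC : C = C' := by rw [← hCk, ← hCj, h]
    subst hC
    have := mul_left_cancel h
    have := hinj k j k.isLt j.isLt this
    exact Prod.ext (Fin.ext this) rfl
  · intro τ
    set C : G ⧸ Subgroup.zpowers g := QuotientGroup.mk τ with hC
    have hmem : (Quotient.out C)⁻¹ * τ ∈ Subgroup.zpowers g := by
      rw [← QuotientGroup.eq, QuotientGroup.out_eq']
    obtain ⟨z, hz⟩ := Subgroup.mem_zpowers_iff.mp hmem
    have hmod : g ^ ((z % (m:ℤ)).toNat) = (Quotient.out C)⁻¹ * τ := by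
      rw [← hz]
      rw [← zpow_natCast, Int.toNat_of_nonneg (Int.emod_nonneg z (by exact_mod_cast hm0.ne'))]
      conv_rhs => rw [← Int.mul_ediv_add_emod z (m:ℤ), _root_.zpow_add, _root_.zpow_mul, zpow_natCast, h1,
        _root_.one_zpow, one_mul]
    have hlt : (z % (m:ℤ)).toNat < m := by
      have := Int.emod_lt_of_pos z (show (0:ℤ) < m by exact_mod_cast hm0)
      omega
    refine ⟨(⟨(z % (m:ℤ)).toNat, hlt⟩, C), ?_⟩
    simp only [cosetFun, hmod]
    group

noncomputable def cosetEquiv (hm0 : 0 < m) (h1 : g ^ m = 1)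
    (hinj : ∀ k j : ℕ, k < m → j < m → g ^ k = g ^ j → k = j) :
    Fin m × (G ⧸ Subgroup.zpowers g) ≃ G :=
  Equiv.ofBijective _ (cosetFun_bijective g m hm0 h1 hinj)

end CosetEquiv


section SFacts

variable {n : ℕ} {a b : Fin n} {s : Equiv.Perm (Fin n)}
  (hab : a ≤ b) (ha : 1 ≤ (a : ℕ)) (hs : IsTCycle a b s)

include hab ha hs

lemma s_fix_pred : s (finPred a) = finPred a := by
  apply hs.2.2
  rintro ⟨h1, -⟩
  rw [Fin.le_def] at h1
  simp only [finPred] at h1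
  omega

lemma s_mem_Icc {i : Fin n} (hi : i ∈ Finset.Icc a b) : s i ∈ Finset.Icc a b := by
  rw [Finset.mem_Icc] at hi ⊢
  rcases eq_or_lt_of_le hi.2 with h | h
  · have : s i = a := by rw [show i = b from Fin.ext (congrArg Fin.val h), hs.2.1]
    rw [this]
    exact ⟨le_refl a, hab⟩
  · have := hs.1 i hi.1 h
    rw [Fin.le_def, Fin.le_def, Fin.lt_def] at *
    omega

lemma s_image_Icc : (Finset.Icc a b).image s = Finset.Icc a b := by
  apply Finset.eq_of_subset_of_card_le
  · intro x hx
    obtain ⟨i, hi, rfl⟩ := Finset.mem_image.mp hx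
    exact s_mem_Icc hab ha hs hi
  · rw [Finset.card_image_of_injective _ s.injective]

lemma s_pow_b_val : ∀ d : ℕ, d ≤ (b : ℕ) - (a : ℕ) → (((s ^ (d+1)) b : Fin n) : ℕ) = (a : ℕ) + d := by
  intro d
  induction d with
  | zero => intro _; simpa using congrArg Fin.val hs.2.1
  | succ d ih =>
      intro hd
      have hd' : d ≤ (b : ℕ) - (a : ℕ) := by omega
      have hv := ih hd'
      have hab' : (a : ℕ) ≤ (b : ℕ) := hab
      set x := (s ^ (d+1)) b with hx
      have h1 : a ≤ x := by rw [Fin.le_def]; omega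
      have h2 : x < b := by rw [Fin.lt_def]; omega
      have : (s ^ (d+2)) b = s x := by
        rw [hx, ← Equiv.Perm.mul_apply, ← pow_succ']
      rw [this, hs.1 x h1 h2, hv]
      omega

lemma s_pow_m_b : (s ^ ((b : ℕ) - (a : ℕ) + 1)) b = b := by
  apply Fin.ext
  rw [s_pow_b_val hab ha hs ((b:ℕ) - a) (le_refl _)]
  have : (a : ℕ) ≤ b := hab
  omega

lemma s_pow_fix {i : Fin n} (hi : s i = i) : ∀ k : ℕ, (s ^ k) i = i := by
  intro k
  induction k with
  | zero => rfl
  | succ k ih => rw [pow_succ, Equiv.Perm.mul_apply, hi, ih]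

lemma s_phi_injOn : ∀ k j : ℕ, k ≤ (b:ℕ) - a → j ≤ (b:ℕ) - a →
    (s ^ k) b = (s ^ j) b → k = j := by
  have hab' : (a : ℕ) ≤ (b : ℕ) := hab
  have key : ∀ k : ℕ, k ≤ (b:ℕ) - a → (((s ^ k) b : Fin n) : ℕ) = if k = 0 then (b:ℕ) else (a:ℕ) + k - 1 := by
    intro k hk
    rcases k with _ | d
    · simp
    · rw [if_neg (Nat.succ_ne_zero d), s_pow_b_val hab ha hs d (by omega)]
      omega
  intro k j hk hj h
  have h1 := key k hk
  have h2 := key j hj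
  rw [h] at h1
  by_cases e1 : k = 0 <;> by_cases e2 : j = 0 <;> simp [e1, e2] at h1 h2 <;> omega

lemma s_phi_image : (Finset.univ : Finset (Fin ((b:ℕ) - (a:ℕ) + 1))).image
    (fun k : Fin ((b:ℕ) - (a:ℕ) + 1) => (s ^ (k : ℕ)) b) = Finset.Icc a b := by
  have hab' : (a : ℕ) ≤ (b : ℕ) := hab
  apply Finset.eq_of_subset_of_card_le
  · intro x hx
    obtain ⟨k, _, rfl⟩ := Finset.mem_image.mp hx
    have : ∀ j : ℕ, (s ^ j) b ∈ Finset.Icc a b := by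
      intro j
      induction j with
      | zero => simpa using And.intro hab (le_refl b)
      | succ j ih =>
          rw [pow_succ', Equiv.Perm.mul_apply]
          exact s_mem_Icc hab ha hs ih
    exact this k
  · rw [Fin.card_Icc, Finset.card_image_of_injOn, Finset.card_univ, Fintype.card_fin]
    · omega
    · intro k _ j _ h
      exact Fin.ext (s_phi_injOn hab ha hs k j (by omega) (by omega) h)

lemma s_pow_m : s ^ ((b : ℕ) - (a : ℕ) + 1) = 1 := by
  ext1 i
  rw [Equiv.Perm.one_apply]
  by_cases hi : i ∈ Finset.Icc a b
  · rw [← s_phi_image hab ha hs] at hi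
    obtain ⟨k, _, rfl⟩ := Finset.mem_image.mp hi
    rw [← Equiv.Perm.mul_apply, ← pow_add, add_comm, pow_add, Equiv.Perm.mul_apply,
      s_pow_m_b hab ha hs]
  · apply s_pow_fix hab ha hs
    apply hs.2.2
    rw [Finset.mem_Icc] at hi
    exact hi

end SFacts

noncomputable def cfun {n : ℕ} (q : Fin n → Fin n → ℂ) (a b : Fin n)
    (τ : Equiv.Perm (Fin n)) : ℂ :=
  q (τ (finPred a)) (τ b) * q (τ b) (τ (finPred a)) * ∏ i ∈ Finset.Ico a b, q (τ b) (τ i)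

lemma sigmaT_eq {n : ℕ} (q : Fin n → Fin n → ℂ) (T : Finset (Fin n)) :
    sigmaT q T = ∏ u ∈ T, ∏ w ∈ T.erase u, q u w := by
  rw [sigmaT, Finset.prod_filter, Finset.prod_product]
  apply Finset.prod_congr rfl
  intro u _
  rw [← Finset.prod_filter]
  congr 1
  ext w
  simp only [Finset.mem_filter, Finset.mem_erase, ne_comm]
  tauto

section Orbit

variable {n : ℕ} {a b : Fin n} {s : Equiv.Perm (Fin n)}
  (hab : a ≤ b) (ha : 1 ≤ (a : ℕ)) (hs : IsTCycle a b s)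
include hab ha hs

lemma Icc_pred_eq : Finset.Icc (finPred a) b = insert (finPred a) (Finset.Icc a b) := by
  have hab' : (a:ℕ) ≤ (b:ℕ) := hab
  ext x
  simp only [Finset.mem_Icc, Finset.mem_insert, Fin.le_def, finPred, Fin.ext_iff]
  omega

lemma pred_not_mem_Icc : finPred a ∉ Finset.Icc a b := by
  rw [Finset.mem_Icc, Fin.le_def, Fin.le_def]
  simp only [finPred]
  omega

lemma s_pow_image_Icc : ∀ k : ℕ, (Finset.Icc a b).image ⇑(s ^ k) = Finset.Icc a b := by
  intro k
  induction k with
  | zero => simp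
  | succ k ih =>
      rw [pow_succ', show ⇑(s * s ^ k) = ⇑s ∘ ⇑(s ^ k) from rfl, ← Finset.image_image,
        ih, s_image_Icc hab ha hs]

lemma s_pow_image_J (k : ℕ) :
    (Finset.Icc (finPred a) b).image ⇑(s ^ k) = Finset.Icc (finPred a) b := by
  rw [Icc_pred_eq hab ha hs, Finset.image_insert, s_pow_image_Icc hab ha hs,
    s_pow_fix hab ha hs (s_fix_pred hab ha hs) k]

lemma orbit_prod (q : Fin n → Fin n → ℂ) (ρ : Equiv.Perm (Fin n)) :
    ∏ k : Fin ((b:ℕ) - (a:ℕ) + 1), cfun q a b (ρ * s ^ (k:ℕ))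
      = sigmaT q ((Finset.Icc (finPred a) b).image ⇑ρ) := by
  classical
  set x : Fin n := ρ (finPred a) with hx
  have hxZ : x ∉ (Finset.Icc a b).image ⇑ρ := by
    intro hmem
    obtain ⟨y, hy, hxy⟩ := Finset.mem_image.mp hmem
    have : y = finPred a := ρ.injective hxy
    subst this
    exact pred_not_mem_Icc hab ha hs hy
  set g : Fin n → ℂ := fun v =>
    q x (ρ v) * q (ρ v) x * ∏ w ∈ (Finset.Icc a b).erase v, q (ρ v) (ρ w) with hg
  have hfac : ∀ k : ℕ, cfun q a b (ρ * s ^ k) = g ((s^k) b) := by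
    intro k
    have h1 : (ρ * s ^ k) (finPred a) = x := by
      rw [Equiv.Perm.mul_apply, s_pow_fix hab ha hs (s_fix_pred hab ha hs) k]
    have h2 : (ρ * s ^ k) b = ρ ((s^k) b) := Equiv.Perm.mul_apply _ _ _
    rw [cfun, h1, h2, hg]
    simp only
    congr 1
    have h3 : ∀ i : Fin n, (ρ * s ^ k) i = ρ ((s^k) i) := fun i => Equiv.Perm.mul_apply _ _ _
    rw [Finset.prod_congr rfl (fun i _ => by rw [h3 i])]
    conv_rhs => rw [← s_pow_image_Icc hab ha hs k, ← Finset.image_erase (s^k).injective,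
      Finset.Icc_erase_right]
    rw [Finset.prod_image (f := fun w => q (ρ ((s^k) b)) (ρ w)) (g := ⇑(s^k))
      (fun y (_ : y ∈ Finset.Ico a b) z (_ : z ∈ Finset.Ico a b) h => (s^k).injective h)]
  have hre : ∏ k : Fin ((b:ℕ) - (a:ℕ) + 1), cfun q a b (ρ * s ^ (k:ℕ))
      = ∏ v ∈ Finset.Icc a b, g v := by
    conv_rhs => rw [← s_phi_image hab ha hs]
    have hinj : ∀ y ∈ (Finset.univ : Finset (Fin ((b:ℕ)-(a:ℕ)+1))), ∀ z ∈ (Finset.univ : Finset (Fin ((b:ℕ)-(a:ℕ)+1))),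
        (s ^ (y:ℕ)) b = (s ^ (z:ℕ)) b → y = z := by
      intro y _ z _ h
      exact Fin.ext (s_phi_injOn hab ha hs (y:ℕ) (z:ℕ) (by omega) (by omega) h)
    rw [Finset.prod_image hinj]
    exact Finset.prod_congr rfl (fun k _ => hfac (k : ℕ))
  rw [hre]
  have hT : (Finset.Icc (finPred a) b).image ⇑ρ
      = insert x ((Finset.Icc a b).image ⇑ρ) := by
    rw [Icc_pred_eq hab ha hs, Finset.image_insert]
  rw [hT, sigmaT_eq, Finset.prod_insert hxZ, Finset.erase_insert hxZ]
  have hterm : ∀ u ∈ (Finset.Icc a b).image ⇑ρ,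
      ∏ w ∈ (insert x ((Finset.Icc a b).image ⇑ρ)).erase u, q u w
      = q u x * ∏ w ∈ ((Finset.Icc a b).image ⇑ρ).erase u, q u w := by
    intro u hu
    have hux : x ≠ u := fun h => hxZ (h ▸ hu)
    rw [Finset.erase_insert_of_ne hux,
      Finset.prod_insert (fun h => hxZ (Finset.erase_subset _ _ h))]
  rw [Finset.prod_congr rfl hterm, ← Finset.prod_mul_distrib,
    Finset.prod_image (fun y _ z _ h => ρ.injective h)]
  apply Finset.prod_congr rfl
  intro v hv
  rw [← Finset.image_erase ρ.injective,
    Finset.prod_image (fun y _ z _ h => ρ.injective h), hg]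
  simp only
  ring

end Orbit


section Inv
variable {n : ℕ} {a b : Fin n} {s : Equiv.Perm (Fin n)}
  (hab : a ≤ b) (ha : 1 ≤ (a : ℕ)) (hs : IsTCycle a b s)
include hab ha hs

lemma invSet_eq : invSet s = (Finset.Ico a b).image (fun i => (i, b)) := by
  have hab' : (a:ℕ) ≤ (b:ℕ) := hab
  have key : ∀ x : Fin n, ((s x : ℕ) = (x:ℕ) ∧ ((x:ℕ) < a ∨ (b:ℕ) < x)) ∨
      ((s x : ℕ) = (x:ℕ)+1 ∧ (a:ℕ) ≤ x ∧ (x:ℕ) < b) ∨ ((s x : ℕ) = (a:ℕ) ∧ (x:ℕ) = b) := by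
    intro x
    rcases (show ((x:ℕ) < a ∨ (b:ℕ) < x) ∨ ((a:ℕ) ≤ x ∧ (x:ℕ) < b) ∨ (x:ℕ) = (b:ℕ) by omega)
      with h | h | h
    · left
      refine ⟨?_, h⟩
      rw [hs.2.2 x]
      rintro ⟨h1, h2⟩
      rw [Fin.le_def] at h1 h2
      omega
    · right; left
      exact ⟨hs.1 x (by rw [Fin.le_def]; omega) (by rw [Fin.lt_def]; omega), h⟩
    · right; right
      have : x = b := Fin.ext h
      subst this
      exact ⟨congrArg Fin.val hs.2.1, rfl⟩
  ext ⟨i, j⟩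
  simp only [invSet, Finset.mem_filter, Finset.mem_univ, true_and, Finset.mem_image,
    Finset.mem_Ico, Fin.lt_def, Fin.le_def, Prod.mk.injEq]
  constructor
  · rintro ⟨hij, hinv⟩
    have hnum : (a:ℕ) ≤ i ∧ (i:ℕ) < b ∧ (j:ℕ) = (b:ℕ) := by
      rcases key i with ⟨e1, c1⟩ | ⟨e1, c1⟩ | ⟨e1, c1⟩ <;>
        rcases key j with ⟨e2, c2⟩ | ⟨e2, c2⟩ | ⟨e2, c2⟩ <;> omega
    exact ⟨i, ⟨hnum.1, hnum.2.1⟩, rfl, Fin.ext hnum.2.2 |>.symm ▸ rfl⟩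
  · rintro ⟨x, ⟨hx1, hx2⟩, rfl, rfl⟩
    have h2 := congrArg Fin.val hs.2.1
    rcases key x with ⟨e1, c1⟩ | ⟨e1, c1⟩ | ⟨e1, c1⟩ <;> (constructor <;> omega)


end Inv

lemma card_perm_image {α : Type*} [Fintype α] [DecidableEq α] (J T : Finset α)
    (h : J.card = T.card) :
    (Finset.univ.filter fun π : Equiv.Perm α => J.image ⇑π = T).card
      = (J.card).factorial * (Fintype.card α - J.card).factorial := by
  classical
  have h1 : ∀ (π : Equiv.Perm α), J.image ⇑π = T → ∀ x, x ∈ J ↔ π x ∈ T := by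
    intro π hπ x
    constructor
    · intro hx
      rw [← hπ]
      exact Finset.mem_image_of_mem _ hx
    · intro hx
      rw [← hπ] at hx
      obtain ⟨y, hy, hxy⟩ := Finset.mem_image.mp hx
      rwa [← π.injective hxy]
  have key : ∀ (e1 : {x // x ∈ J} ≃ {x // x ∈ T}) (e2 : {x // x ∉ J} ≃ {x // x ∉ T}),
      True := fun _ _ => trivial
  -- the equivalence
  let Φ : {π : Equiv.Perm α // J.image ⇑π = T} ≃
      ({x // x ∈ J} ≃ {x // x ∈ T}) × ({x // ¬ x ∈ J} ≃ {x // ¬ x ∈ T}) :=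
    { toFun := fun π => (Equiv.subtypeEquiv π.1 (h1 π.1 π.2),
        Equiv.subtypeEquiv π.1 (fun x => not_iff_not.mpr (h1 π.1 π.2 x))),
      invFun := fun p => ⟨(Equiv.sumCompl (· ∈ J)).symm.trans
          ((p.1.sumCongr p.2).trans (Equiv.sumCompl (· ∈ T))), by
        have hsub : J.image ⇑((Equiv.sumCompl (· ∈ J)).symm.trans
            ((p.1.sumCongr p.2).trans (Equiv.sumCompl (· ∈ T)))) ⊆ T := by
          intro y hy
          obtain ⟨x, hx, rfl⟩ := Finset.mem_image.mp hy
          simp only [Equiv.trans_apply, Equiv.sumCompl_symm_apply_of_pos hx,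
            Equiv.sumCongr_apply, Sum.map_inl, Equiv.sumCompl_apply_inl]
          exact (p.1 ⟨x, hx⟩).2
        apply Finset.eq_of_subset_of_card_le hsub
        rw [Finset.card_image_of_injective _ (Equiv.injective _), h]⟩,
      left_inv := by
        rintro ⟨π, hπ⟩
        apply Subtype.ext
        ext x
        by_cases hx : x ∈ J
        · simp only [Equiv.trans_apply, Equiv.sumCompl_symm_apply_of_pos hx,
            Equiv.sumCongr_apply, Sum.map_inl, Equiv.sumCompl_apply_inl,
            Equiv.subtypeEquiv_apply]
        · simp only [Equiv.trans_apply, Equiv.sumCompl_symm_apply_of_neg hx,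
            Equiv.sumCongr_apply, Sum.map_inr, Equiv.sumCompl_apply_inr,
            Equiv.subtypeEquiv_apply],
      right_inv := by
        rintro ⟨e1, e2⟩
        have hψ1 : ∀ (x : α) (hx : x ∈ J),
            ((Equiv.sumCompl (· ∈ J)).symm.trans
              ((e1.sumCongr e2).trans (Equiv.sumCompl (· ∈ T)))) x = (e1 ⟨x, hx⟩ : α) := by
          intro x hx
          simp only [Equiv.trans_apply, Equiv.sumCompl_symm_apply_of_pos hx,
            Equiv.sumCongr_apply, Sum.map_inl, Equiv.sumCompl_apply_inl]
        have hψ2 : ∀ (x : α) (hx : ¬ x ∈ J),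
            ((Equiv.sumCompl (· ∈ J)).symm.trans
              ((e1.sumCongr e2).trans (Equiv.sumCompl (· ∈ T)))) x = (e2 ⟨x, hx⟩ : α) := by
          intro x hx
          simp only [Equiv.trans_apply, Equiv.sumCompl_symm_apply_of_neg hx,
            Equiv.sumCongr_apply, Sum.map_inr, Equiv.sumCompl_apply_inr]
        refine Prod.ext ?_ ?_
        · ext x
          obtain ⟨x, hx⟩ := x
          simp only [Equiv.subtypeEquiv_apply]
          exact hψ1 x hx
        · ext x
          obtain ⟨x, hx⟩ := x
          simp only [Equiv.subtypeEquiv_apply]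
          exact hψ2 x hx }
  have hcard := Fintype.card_congr Φ
  rw [Fintype.card_subtype] at hcard
  rw [hcard, Fintype.card_prod]
  have c1 : Fintype.card ({x // x ∈ J} ≃ {x // x ∈ T}) = (J.card).factorial := by
    rw [Fintype.card_equiv (Fintype.equivOfCardEq (by simp [Fintype.card_coe, h]))]
    simp [Fintype.card_coe]
  have c2 : Fintype.card ({x // ¬ x ∈ J} ≃ {x // ¬ x ∈ T}) =
      (Fintype.card α - J.card).factorial := by
    rw [Fintype.card_equiv (Fintype.equivOfCardEq ?_)]
    · rw [Fintype.card_subtype_compl]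
      simp [Fintype.card_coe]
    · rw [Fintype.card_subtype_compl, Fintype.card_subtype_compl]
      simp [Fintype.card_coe, h]
  rw [c1, c2]


/-- For `a ≤ b` in `Fin n` with `a ≥ 2` (`a ≥ 1` in 0-indexed terms), the determinant of
`I − D_{a−1} · M_q(t_{b,a})` factors as `∏_T (1 − σ_T)^{(b−a)!·(b−a+2)·(n−b+a−2)!}`,
the product being over all subsets `T ⊆ Fin n` of cardinality `b − a + 2`. -/
theorem det_one_sub_Dmat_mul_twistMat (n : ℕ) (hn : 1 ≤ n) (q : Fin n → Fin n → ℂ)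
    (a b : Fin n) (hab : a ≤ b) (ha : 1 ≤ (a : ℕ))
    (s : Equiv.Perm (Fin n)) (hs : IsTCycle a b s) :
    ((1 : PermMatrix n) - Dmat n q (finPred a) * twistMat n q s).det =
      ∏ T ∈ Finset.powersetCard ((b : ℕ) - (a : ℕ) + 2) (Finset.univ : Finset (Fin n)),
        (1 - sigmaT q T) ^
          (Nat.factorial ((b : ℕ) - (a : ℕ)) * ((b : ℕ) - (a : ℕ) + 2) *
            Nat.factorial (n - (b : ℕ) + (a : ℕ) - 2)) := by
  classical
  have hbn : (b:ℕ) < n := b.isLt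
  have hab' : (a:ℕ) ≤ (b:ℕ) := hab
  set m' : ℕ := (b:ℕ) - (a:ℕ) with hm'
  have hm1 : s ^ (m' + 1) = 1 := s_pow_m hab ha hs
  have hinj : ∀ k j : ℕ, k < m' + 1 → j < m' + 1 → s ^ k = s ^ j → k = j := by
    intro k j hk hj h
    exact s_phi_injOn hab ha hs k j (by omega) (by omega) (by rw [h])
  letI : Fintype (Equiv.Perm (Fin n) ⧸ Subgroup.zpowers s) := Fintype.ofFinite _
  set Q := Equiv.Perm (Fin n) ⧸ Subgroup.zpowers s with hQ
  set e : Fin (m'+1) × Q ≃ Equiv.Perm (Fin n) :=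
    cosetEquiv s (m'+1) (Nat.succ_pos _) hm1 hinj with he
  have he_apply : ∀ p : Fin (m'+1) × Q, e p = Quotient.out p.2 * s ^ ((p.1 : ℕ)) :=
    fun p => rfl
  have hentry : ∀ σ τ, (Dmat n q (finPred a) * twistMat n q s) σ τ
      = if σ = τ * s⁻¹ then cfun q a b τ else 0 := by
    intro σ τ
    simp only [Dmat, twistMat, Matrix.diagonal_mul]
    by_cases h : σ = τ * s⁻¹
    · rw [if_pos h, if_pos h, h, cfun]
      have e2 : finSucc (finPred a) = a := by
        apply Fin.ext
        simp only [finSucc, finPred]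
        rw [Nat.mod_eq_of_lt (by omega)]
        omega
      have e3 : (τ * s⁻¹) (finPred a) = τ (finPred a) := by
        rw [Equiv.Perm.mul_apply]
        congr 1
        exact Equiv.Perm.inv_eq_iff_eq.mpr (s_fix_pred hab ha hs).symm
      have e4 : (τ * s⁻¹) a = τ b := by
        rw [Equiv.Perm.mul_apply]
        congr 1
        exact Equiv.Perm.inv_eq_iff_eq.mpr hs.2.1.symm
      rw [e2, e3, e4]
      congr 1
      rw [invSet_eq hab ha hs,
        Finset.prod_image (fun y (_ : y ∈ Finset.Ico a b) z (_ : z ∈ Finset.Ico a b) h =>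
          congrArg Prod.fst h)]
    · rw [if_neg h, if_neg h, mul_zero]
  have hrot : ∀ (i : Fin (m'+1)) (C : Q), e (i, C) * s = e (finRotate (m'+1) i, C) := by
    intro i C
    rw [he_apply, he_apply]
    simp only
    rw [mul_assoc, ← pow_succ]
    congr 1
    have hval : ((finRotate (m'+1) i : Fin (m'+1)) : ℕ) = ((i:ℕ)+1) % (m'+1) := by
      rw [finRotate_succ_apply, Fin.val_add, Fin.val_one', Nat.add_mod,
        Nat.mod_mod_of_dvd _ (dvd_refl _), ← Nat.add_mod]
    rw [hval]
    conv_lhs => rw [← Nat.div_add_mod ((i:ℕ)+1) (m'+1), pow_add, pow_mul, hm1,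
      one_pow, one_mul]
  have hmat : ((1 : PermMatrix n) - Dmat n q (finPred a) * twistMat n q s)
      = (Matrix.blockDiagonal (fun C : Q => fun i j : Fin (m'+1) =>
          (if i = j then (1:ℂ) else 0) -
            (if j = finRotate (m'+1) i then cfun q a b (e (j, C)) else 0))).submatrix
          ⇑e.symm ⇑e.symm := by
    ext σ τ
    obtain ⟨⟨i, C⟩, rfl⟩ := e.surjective σ
    obtain ⟨⟨j, C'⟩, rfl⟩ := e.surjective τ
    rw [Matrix.submatrix_apply, Equiv.symm_apply_apply, Equiv.symm_apply_apply,
      Matrix.sub_apply, Matrix.one_apply, hentry]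
    have hcond1 : (e (i, C) = e (j, C')) ↔ (i = j ∧ C = C') := by
      rw [EmbeddingLike.apply_eq_iff_eq, Prod.mk.injEq]
    have hcond2 : (e (i, C) = e (j, C') * s⁻¹) ↔ (j = finRotate (m'+1) i ∧ C = C') := by
      rw [eq_mul_inv_iff_mul_eq, hrot, EmbeddingLike.apply_eq_iff_eq, Prod.mk.injEq]
      rw [eq_comm (a := finRotate (m'+1) i)]
    erw [Matrix.blockDiagonal_apply]
    by_cases hC : C = C'
    · subst hC
      rw [if_pos rfl]
      congr 1
      · exact if_congr (by rw [hcond1]; simp) rfl rfl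
      · exact if_congr (by rw [hcond2]; simp) rfl rfl
    · rw [if_neg hC, if_neg (fun h => hC (hcond1.mp h).2),
        if_neg (fun h => hC (hcond2.mp h).2), sub_zero]
  rw [hmat, Matrix.det_submatrix_equiv_self e.symm]
  erw [Matrix.det_blockDiagonal]
  have hblock : ∀ C : Q, (Matrix.det fun i j : Fin (m'+1) =>
      (if i = j then (1:ℂ) else 0) -
        (if j = finRotate (m'+1) i then cfun q a b (e (j, C)) else 0))
      = 1 - ∏ j : Fin (m'+1), cfun q a b (e (j, C)) :=
    fun C => det_one_sub_rotate m' (fun j => cfun q a b (e (j, C)))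
  rw [Finset.prod_congr rfl (fun C _ => hblock C)]
  have horb : ∀ C : Q, ∏ j : Fin (m'+1), cfun q a b (e (j, C))
      = sigmaT q ((Finset.Icc (finPred a) b).image ⇑(Quotient.out C)) := by
    intro C
    rw [Finset.prod_congr rfl (fun j (_ : j ∈ Finset.univ) => by rw [he_apply (j, C)])]
    exact orbit_prod hab ha hs q (Quotient.out C)
  rw [Finset.prod_congr rfl (fun C (_ : C ∈ Finset.univ) => by rw [horb C])]
  set Tof : Q → Finset (Fin n) :=
    fun C => (Finset.Icc (finPred a) b).image ⇑(Quotient.out C) with hTof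
  have hJcard : (Finset.Icc (finPred a) b).card = m' + 2 := by
    rw [Fin.card_Icc]
    simp only [finPred]
    omega
  have hTcard : ∀ C, (Tof C).card = m' + 2 := fun C => by
    rw [hTof]
    simp only
    rw [Finset.card_image_of_injective _ (Equiv.injective _), hJcard]
  rw [← Finset.prod_fiberwise_of_maps_to
    (fun C (_ : C ∈ Finset.univ) => Finset.mem_powersetCard_univ.mpr (hTcard C))
    (fun C => 1 - sigmaT q (Tof C))]
  apply Finset.prod_congr rfl
  intro T hT
  have hTc : T.card = m' + 2 := Finset.mem_powersetCard_univ.mp hT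
  rw [Finset.prod_congr rfl
    (fun C hC => by rw [(Finset.mem_filter.mp hC).2]), Finset.prod_const]
  congr 1
  -- counting
  have hfilter_prod : (Finset.univ.filter (fun p : Fin (m'+1) × Q => Tof p.2 = T))
      = Finset.univ ×ˢ (Finset.univ.filter fun C => Tof C = T) := by
    ext p
    simp [Finset.mem_product]
  have himageJ : ∀ p : Fin (m'+1) × Q,
      (Finset.Icc (finPred a) b).image ⇑(e p) = Tof p.2 := by
    intro p
    rw [he_apply p, hTof]
    simp only
    rw [show ⇑(Quotient.out p.2 * s ^ ((p.1:ℕ))) = ⇑(Quotient.out p.2) ∘ ⇑(s ^ ((p.1:ℕ)))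
      from rfl, ← Finset.image_image, s_pow_image_J hab ha hs]
  have hstepA : (Finset.univ.filter fun τ : Equiv.Perm (Fin n) =>
      (Finset.Icc (finPred a) b).image ⇑τ = T).card
      = (m'+1) * (Finset.univ.filter fun C : Q => Tof C = T).card := by
    have hbij : (Finset.univ.filter (fun p : Fin (m'+1) × Q => Tof p.2 = T)).card
        = (Finset.univ.filter fun τ : Equiv.Perm (Fin n) =>
            (Finset.Icc (finPred a) b).image ⇑τ = T).card := by
      apply Finset.card_bij (fun p _ => e p)
      · intro p hp
        rw [Finset.mem_filter]
        refine ⟨Finset.mem_univ _, ?_⟩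
        rw [himageJ p]
        exact (Finset.mem_filter.mp hp).2
      · intro p1 _ p2 _ h
        exact e.injective h
      · intro τ hτ
        refine ⟨e.symm τ, ?_, e.apply_symm_apply τ⟩
        rw [Finset.mem_filter]
        refine ⟨Finset.mem_univ _, ?_⟩
        rw [← himageJ (e.symm τ), e.apply_symm_apply]
        exact (Finset.mem_filter.mp hτ).2
    rw [← hbij, hfilter_prod, Finset.card_product, Finset.card_univ, Fintype.card_fin]
  have hstepB := card_perm_image (Finset.Icc (finPred a) b) T (by rw [hJcard, hTc])
  rw [hJcard, Fintype.card_fin] at hstepB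
  apply Nat.eq_of_mul_eq_mul_left (show 0 < m' + 1 by omega)
  rw [← hstepA, hstepB]
  have h1 : n - (m' + 2) = n - (b:ℕ) + (a:ℕ) - 2 := by omega
  rw [h1, show m' + 2 = (m'+1)+1 from rfl, Nat.factorial_succ (m'+1), Nat.factorial_succ m']
  ring
end

section
/- For every k with 1 ≤ k ≤ n−1, the determinant of the ordered product C_{Q,n−k+1} := (I − M_q(t_{n,k}))·(I − M_q(t_{n−1,k}))⋯(I − M_q(t_{k+1,k})) factors as det C_{Q,n−k+1} = ∏_{m=2}^{n−k+1} ∏_{T} (1 − σ_T)^{(m−1)!·(n−m)!}, where the inner product runs over all subsets T ⊆ Fin n of cardinality m. -/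
open Finset

lemma det_cycleMat : ∀ (d : ℕ), 0 < d → ∀ (v : Fin d → ℂ),
    (Matrix.of fun i j : Fin d =>
      (if i = j then (1:ℂ) else 0) - (if ((i:ℕ)+1) % d = (j:ℕ) then v j else 0)).det
      = 1 - ∏ j, v j
  | 1, _, v => by
      rw [Matrix.det_fin_one]
      simp [Fin.prod_univ_one]
  | (e+2), _, v => by
      set M : Matrix (Fin (e+2)) (Fin (e+2)) ℂ := Matrix.of fun i j : Fin (e+2) =>
        (if i = j then (1:ℂ) else 0) - (if ((i:ℕ)+1) % (e+2) = (j:ℕ) then v j else 0) with hM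
      have hM00 : M 0 0 = 1 := by
        simp only [hM, Matrix.of_apply, if_pos rfl, if_true]
        have h : (0+1) % (e+2) ≠ (0:ℕ) := by
          rw [Nat.mod_eq_of_lt (by omega)]; omega
        simp only [Fin.val_zero, h, if_false]
        ring
      have hMl0 : M (Fin.last (e+1)) 0 = -(v 0) := by
        simp only [hM, Matrix.of_apply]
        have h1 : (Fin.last (e+1)) ≠ (0 : Fin (e+2)) := by
          intro h; have := congrArg Fin.val h
          simp only [Fin.val_last, Fin.val_zero] at this; omega
        have h2 : ((Fin.last (e+1) : Fin (e+2)) : ℕ) + 1 = e + 2 := rfl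
        rw [if_neg h1, h2]
        simp
      have hzero : ∀ i : Fin (e+2), i ≠ 0 → i ≠ Fin.last (e+1) → M i 0 = 0 := by
        intro i h0 hl
        have hv0 : (i:ℕ) ≠ 0 := fun h => h0 (Fin.ext (by simpa using h))
        have hvl : (i:ℕ) ≠ e+1 := fun h => hl (Fin.ext (by simpa [Fin.val_last] using h))
        have hlt := i.isLt
        simp only [hM, Matrix.of_apply, if_neg h0]
        have : ((i:ℕ)+1) % (e+2) ≠ ((0 : Fin (e+2)):ℕ) := by
          simp only [Fin.val_zero]
          rw [Nat.mod_eq_of_lt (by omega)]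
          omega
        rw [if_neg this]
        ring
      have hminor0 : (M.submatrix (Fin.succAbove 0) Fin.succ).det = 1 := by
        have htri : (M.submatrix (Fin.succAbove 0) Fin.succ).BlockTriangular id := by
          intro i j hij
          have hij' : (j:ℕ) < (i:ℕ) := hij
          simp only [Matrix.submatrix_apply, Fin.succAbove_zero, hM, Matrix.of_apply]
          have h1 : i.succ ≠ j.succ := by
            intro h; have := congrArg Fin.val h
            simp only [Fin.val_succ] at this; omega
          have h2 : ((i.succ : ℕ)+1) % (e+2) ≠ (j.succ : ℕ) := by
            simp only [Fin.val_succ]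
            have hi := i.isLt
            rcases Nat.lt_or_ge ((i:ℕ)+2) (e+2) with h | h
            · rw [Nat.mod_eq_of_lt h]; omega
            · have heq : ((i:ℕ)+1+1) % (e+2) = 0 := by
                have : (i:ℕ) + 1 + 1 = e + 2 := by omega
                simp [this]
              rw [heq]; omega
          rw [if_neg h1, if_neg h2]; ring
        rw [Matrix.det_of_upperTriangular htri]
        apply Finset.prod_eq_one
        intro i _
        simp only [Matrix.submatrix_apply, Fin.succAbove_zero, hM, Matrix.of_apply, if_pos rfl,
          if_true]
        have h2 : ((i.succ : ℕ)+1) % (e+2) ≠ (i.succ : ℕ) := by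
          simp only [Fin.val_succ]
          have hi := i.isLt
          rcases Nat.lt_or_ge ((i:ℕ)+2) (e+2) with h | h
          · rw [Nat.mod_eq_of_lt h]; omega
          · have heq : ((i:ℕ)+1+1) % (e+2) = 0 := by
              have : (i:ℕ) + 1 + 1 = e + 2 := by omega
              simp [this]
            rw [heq]; omega
        rw [if_neg h2]; ring
      have hminorl : (M.submatrix (Fin.succAbove (Fin.last (e+1))) Fin.succ).det
          = ∏ j : Fin (e+1), -(v j.succ) := by
        have htri : (M.submatrix (Fin.succAbove (Fin.last (e+1))) Fin.succ).BlockTriangular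
            OrderDual.toDual := by
          intro i j hij
          have hij' : (i:ℕ) < (j:ℕ) := hij
          simp only [Matrix.submatrix_apply, Fin.succAbove_last, hM, Matrix.of_apply]
          have h1 : i.castSucc ≠ j.succ := by
            intro h; have := congrArg Fin.val h
            simp only [Fin.coe_castSucc, Fin.val_succ] at this; omega
          have h2 : ((i.castSucc : ℕ)+1) % (e+2) ≠ (j.succ : ℕ) := by
            simp only [Fin.coe_castSucc, Fin.val_succ]
            have hi := i.isLt
            rw [Nat.mod_eq_of_lt (by omega)]
            omega
          rw [if_neg h1, if_neg h2]; ring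
        rw [Matrix.det_of_lowerTriangular _ htri]
        apply Finset.prod_congr rfl
        intro i _
        simp only [Matrix.submatrix_apply, Fin.succAbove_last, hM, Matrix.of_apply]
        have h1 : i.castSucc ≠ i.succ := by
          intro h; have := congrArg Fin.val h
          simp only [Fin.coe_castSucc, Fin.val_succ] at this; omega
        have h2 : ((i.castSucc : ℕ)+1) % (e+2) = (i.succ : ℕ) := by
          simp only [Fin.coe_castSucc, Fin.val_succ]
          have hi := i.isLt
          rw [Nat.mod_eq_of_lt (by omega)]
        rw [if_neg h1, if_pos h2]; ring
      rw [Matrix.det_succ_column_zero]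
      rw [← Finset.sum_erase_add _ _ (Finset.mem_univ (Fin.last (e+1)))]
      rw [Finset.sum_eq_single_of_mem (0 : Fin (e+2))
          (Finset.mem_erase.2 ⟨by simp [Fin.ext_iff], Finset.mem_univ _⟩)
          (fun i hi h0 => by rw [hzero i h0 (Finset.ne_of_mem_erase hi)]; ring)]
      rw [hM00, hMl0, hminor0, hminorl]
      have hprodneg : ∏ j : Fin (e+1), -(v j.succ) = (-1)^(e+1) * ∏ j : Fin (e+1), v j.succ := by
        have h : ∀ j : Fin (e+1), -(v j.succ) = (-1) * v j.succ := fun j => by ring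
        simp_rw [h]
        rw [Finset.prod_mul_distrib, Finset.prod_const]
        simp
      rw [hprodneg, Fin.prod_univ_succ v]
      have hlv : ((Fin.last (e+1) : Fin (e+2)) : ℕ) = e + 1 := rfl
      rw [hlv, Fin.val_zero, pow_zero]
      have hsq : ((-1:ℂ))^(e+1) * ((-1:ℂ))^(e+1) = 1 := by
        rw [← pow_add, show (e+1)+(e+1) = 2*(e+1) by ring, pow_mul]
        norm_num
      linear_combination (-(v 0) * ∏ j : Fin (e+1), v j.succ) * hsq


noncomputable local instance myFintypeQuot {G : Type*} [Group G] [Finite G] (H : Subgroup G) :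
    Fintype (G ⧸ H) := Fintype.ofFinite _

lemma det_one_sub_transMat {G : Type*} [Group G] [Fintype G] [DecidableEq G]
    (g : G) (c : G → ℂ) :
    (Matrix.det (1 - Matrix.of fun σ τ : G => if σ = τ * g⁻¹ then c τ else 0)) =
      ∏ o : G ⧸ Subgroup.zpowers g,
        (1 - ∏ j ∈ Finset.range (orderOf g), c (o.out * g ^ j)) := by
  classical
  have hd0 : 0 < orderOf g := orderOf_pos g
  have hmem : ∀ j : ℕ, g ^ j ∈ Subgroup.zpowers g :=
    fun j => Subgroup.pow_mem _ (Subgroup.mem_zpowers g) j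
  have hcoset : ∀ (o : G ⧸ Subgroup.zpowers g) (j : ℕ),
      ((o.out * g ^ j : G) : G ⧸ Subgroup.zpowers g) = o := by
    intro o j
    rw [QuotientGroup.mk_mul_of_mem _ (hmem j), QuotientGroup.out_eq']
  have hinj : Function.Injective
      (fun p : Fin (orderOf g) × (G ⧸ Subgroup.zpowers g) => p.2.out * g ^ (p.1 : ℕ)) := by
    rintro ⟨i, o⟩ ⟨j, o'⟩ h
    simp only at h
    have ho : o = o' := by
      have h1 := congrArg (QuotientGroup.mk (s := Subgroup.zpowers g)) h
      rwa [hcoset, hcoset] at h1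
    subst ho
    have h2 : g ^ (i:ℕ) = g ^ (j:ℕ) := mul_left_cancel h
    have h3 := pow_injOn_Iio_orderOf (Set.mem_Iio.2 i.isLt) (Set.mem_Iio.2 j.isLt) h2
    exact Prod.ext (Fin.ext h3) rfl
  have hsurj : Function.Surjective
      (fun p : Fin (orderOf g) × (G ⧸ Subgroup.zpowers g) => p.2.out * g ^ (p.1 : ℕ)) := by
    intro τ
    have h0 : (((↑τ : G ⧸ Subgroup.zpowers g).out : G) : G ⧸ Subgroup.zpowers g)
        = (↑τ : G ⧸ Subgroup.zpowers g) := QuotientGroup.out_eq' _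
    have h1 : ((↑τ : G ⧸ Subgroup.zpowers g).out)⁻¹ * τ ∈ Subgroup.zpowers g :=
      QuotientGroup.eq.mp h0
    obtain ⟨jn, hj⟩ := (Submonoid.mem_powers_iff _ _).1 (mem_powers_iff_mem_zpowers.2 h1)
    refine ⟨⟨⟨jn % orderOf g, Nat.mod_lt _ hd0⟩, ↑τ⟩, ?_⟩
    simp only
    rw [pow_mod_orderOf, hj, mul_inv_cancel_left]
  set e : (Fin (orderOf g) × (G ⧸ Subgroup.zpowers g)) ≃ G :=
    Equiv.ofBijective _ ⟨hinj, hsurj⟩ with he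
  have heapp : ∀ (i : Fin (orderOf g)) (o : G ⧸ Subgroup.zpowers g),
      e (i, o) = o.out * g ^ (i : ℕ) := fun i o => rfl
  rw [← Matrix.det_submatrix_equiv_self e]
  have hblock : ((1 : Matrix G G ℂ) -
        Matrix.of fun σ τ : G => if σ = τ * g⁻¹ then c τ else 0).submatrix e e
      = Matrix.blockDiagonal (fun o : G ⧸ Subgroup.zpowers g =>
          Matrix.of fun i j : Fin (orderOf g) =>
            (if i = j then (1:ℂ) else 0) -
              (if ((i:ℕ)+1) % (orderOf g) = (j:ℕ) then c (o.out * g ^ (j:ℕ)) else 0)) := by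
    ext ⟨i, o⟩ ⟨j, o'⟩
    simp only [Matrix.submatrix_apply, Matrix.sub_apply, Matrix.one_apply, Matrix.of_apply,
      Matrix.blockDiagonal_apply, heapp]
    by_cases ho : o = o'
    · subst ho
      rw [if_pos rfl]
      congr 1
      · by_cases hij : i = j
        · subst hij; rw [if_pos rfl, if_pos rfl]
        · rw [if_neg hij, if_neg (fun h => hij (Fin.ext (pow_injOn_Iio_orderOf
            (Set.mem_Iio.2 i.isLt) (Set.mem_Iio.2 j.isLt) (mul_left_cancel h))))]
      · have key : (g ^ (i:ℕ) = g ^ (j:ℕ) * g⁻¹) ↔ (((i:ℕ)+1) % (orderOf g) = (j:ℕ)) := by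
          rw [eq_mul_inv_iff_mul_eq, ← pow_succ]
          constructor
          · intro h
            have h' : g ^ (((i:ℕ)+1) % orderOf g) = g ^ (j:ℕ) := by
              rw [pow_mod_orderOf]; exact h
            exact pow_injOn_Iio_orderOf (Set.mem_Iio.2 (Nat.mod_lt _ hd0))
              (Set.mem_Iio.2 j.isLt) h'
          · intro h
            rw [← h]
            exact (pow_mod_orderOf _ _).symm
        have hiff : (o.out * g ^ (i:ℕ) = o.out * g ^ (j:ℕ) * g⁻¹)
            ↔ (((i:ℕ)+1) % (orderOf g) = (j:ℕ)) := by
          rw [mul_assoc, mul_right_inj]; exact key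
        by_cases hc : ((i:ℕ)+1) % (orderOf g) = (j:ℕ)
        · rw [if_pos (hiff.2 hc), if_pos hc]
        · rw [if_neg (fun h => hc (hiff.1 h)), if_neg hc]
    · rw [if_neg ho]
      have h1 : o.out * g ^ (i:ℕ) ≠ o'.out * g ^ (j:ℕ) := by
        intro h
        exact ho (by simpa [hcoset] using congrArg (QuotientGroup.mk (s := Subgroup.zpowers g)) h)
      have h2 : o.out * g ^ (i:ℕ) ≠ o'.out * g ^ (j:ℕ) * g⁻¹ := by
        intro h
        have h3 := congrArg (QuotientGroup.mk (s := Subgroup.zpowers g)) h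
        rw [hcoset, mul_assoc,
          QuotientGroup.mk_mul_of_mem _
            (Subgroup.mul_mem _ (hmem (j:ℕ)) (Subgroup.inv_mem _ (Subgroup.mem_zpowers g))),
          QuotientGroup.out_eq'] at h3
        exact ho h3
      rw [if_neg h1, if_neg h2]
      ring
  rw [hblock, Matrix.det_blockDiagonal]
  apply Finset.prod_congr rfl
  intro o _
  rw [det_cycleMat _ hd0]
  congr 1
  exact Fin.prod_univ_eq_prod_range (fun j => c (o.out * g ^ j)) (orderOf g)

section TCycle
variable {n : ℕ} {k m : Fin n} {g : Equiv.Perm (Fin n)}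
  (hkm : k < m) (hg : IsTCycle k m g)

include hkm hg

lemma tc_fix_s13 : ∀ i : Fin n, ((i:ℕ) < k ∨ (m:ℕ) < i) → g i = i := by
  intro i hi
  exact hg.2.2 i (by
    rw [not_and_or]
    rcases hi with h | h
    · exact Or.inl (by rw [Fin.le_def]; omega)
    · exact Or.inr (by rw [Fin.le_def]; omega))

lemma tc_invSet_s13 : invSet g = (Finset.Ico k m) ×ˢ {m} := by
  obtain ⟨h1, h2, h3⟩ := hg
  have hfix : ∀ i : Fin n, ((i:ℕ) < k ∨ (m:ℕ) < i) → g i = i := tc_fix_s13 hkm ⟨h1, h2, h3⟩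
  ext ⟨a, b⟩
  simp only [invSet, Finset.mem_filter, Finset.mem_univ, true_and, Finset.mem_product,
    Finset.mem_Ico, Finset.mem_singleton]
  rw [Fin.lt_def, Fin.lt_def, Fin.le_def, Fin.lt_def]
  constructor
  · rintro ⟨hab, hgba⟩
    have hbm : b = m := by
      by_contra hbm
      have hbm' : (b:ℕ) ≠ (m:ℕ) := fun h => hbm (Fin.ext h)
      rcases Nat.lt_or_ge (b:ℕ) (k:ℕ) with hbk | hbk
      · rw [hfix b (Or.inl hbk), hfix a (Or.inl (by omega))] at hgba; omega
      · rcases Nat.lt_or_ge (b:ℕ) (m:ℕ) with hbm2 | hbm2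
        · have hb := h1 b (by rw [Fin.le_def]; omega) (by rw [Fin.lt_def]; omega)
          rcases Nat.lt_or_ge (a:ℕ) (k:ℕ) with hak | hak
          · rw [hfix a (Or.inl hak)] at hgba; omega
          · have ha := h1 a (by rw [Fin.le_def]; omega) (by rw [Fin.lt_def]; omega)
            omega
        · -- b > m
          have hbm3 : (m:ℕ) < (b:ℕ) := by omega
          rw [hfix b (Or.inr hbm3)] at hgba
          rcases Nat.lt_or_ge (a:ℕ) (k:ℕ) with hak | hak
          · rw [hfix a (Or.inl hak)] at hgba; omega
          · rcases Nat.lt_or_ge (a:ℕ) (m:ℕ) with ham | ham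
            · have ha := h1 a (by rw [Fin.le_def]; omega) (by rw [Fin.lt_def]; omega)
              omega
            · rcases Nat.eq_or_lt_of_le ham with ham2 | ham2
              · have : a = m := Fin.ext ham2.symm
                rw [this, h2] at hgba
                have := hkm; rw [Fin.lt_def] at this
                omega
              · rw [hfix a (Or.inr ham2)] at hgba; omega
    subst hbm
    rw [h2] at hgba
    refine ⟨⟨?_, hab⟩, rfl⟩
    rcases Nat.lt_or_ge (a:ℕ) (k:ℕ) with hak | hak
    · rw [hfix a (Or.inl hak)] at hgba; omega
    · omega
  · rintro ⟨⟨hka, ham⟩, hbm⟩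
    subst hbm
    rw [h2]
    have ha := h1 a (by rw [Fin.le_def]; omega) (by rw [Fin.lt_def]; omega)
    exact ⟨ham, by omega⟩

lemma tc_gpow_m : ∀ j : ℕ, j ≤ (m:ℕ) - (k:ℕ) → ((g^(j+1)) m : ℕ) = (k:ℕ) + j := by
  obtain ⟨h1, h2, h3⟩ := hg
  have hkm' : (k:ℕ) < (m:ℕ) := hkm
  intro j
  induction j with
  | zero => intro _; rw [pow_one, h2]; simp
  | succ j ih =>
      intro hj
      have hij := ih (by omega)
      have hx1 : k ≤ (g^(j+1)) m := by rw [Fin.le_def]; omega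
      have hx2 : (g^(j+1)) m < m := by rw [Fin.lt_def]; omega
      have hstep := h1 _ hx1 hx2
      rw [pow_succ', Equiv.Perm.mul_apply]
      omega

lemma tc_gpow_d : (g^((m:ℕ) - (k:ℕ) + 1)) m = m := by
  have := tc_gpow_m hkm hg ((m:ℕ) - (k:ℕ)) le_rfl
  have hkm' : (k:ℕ) < (m:ℕ) := hkm
  exact Fin.ext (by omega)

lemma tc_orbit : ∀ x : Fin n, (k:ℕ) ≤ (x:ℕ) → (x:ℕ) ≤ (m:ℕ) →
    ∃ j : ℕ, j < (m:ℕ) - (k:ℕ) + 1 ∧ (g^j) m = x := by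
  intro x hkx hxm
  rcases Nat.eq_or_lt_of_le hxm with hxm2 | hxm2
  · exact ⟨0, by omega, by simpa using (Fin.ext hxm2).symm⟩
  · refine ⟨(x:ℕ) - (k:ℕ) + 1, by omega, ?_⟩
    have := tc_gpow_m hkm hg ((x:ℕ) - (k:ℕ)) (by omega)
    exact Fin.ext (by omega)

lemma tc_pow_one : g^((m:ℕ) - (k:ℕ) + 1) = 1 := by
  have hd := tc_gpow_d hkm hg
  set d := (m:ℕ) - (k:ℕ) + 1 with hdd
  apply Equiv.ext
  intro x
  simp only [Equiv.Perm.coe_one, id_eq]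
  show (g^d) x = x
  by_cases hx : (k:ℕ) ≤ (x:ℕ) ∧ (x:ℕ) ≤ (m:ℕ)
  · obtain ⟨j, _, hj⟩ := tc_orbit hkm hg x hx.1 hx.2
    rw [← hj, ← Equiv.Perm.mul_apply, ← pow_add, Nat.add_comm, pow_add,
      Equiv.Perm.mul_apply, hd]
  · have hfix : g x = x := tc_fix_s13 hkm hg x (by omega)
    clear hd hdd
    induction d with
    | zero => simp
    | succ p ih => rw [pow_succ, Equiv.Perm.mul_apply, hfix, ih]

lemma tc_orderOf : orderOf g = (m:ℕ) - (k:ℕ) + 1 := by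
  have hkm' : (k:ℕ) < (m:ℕ) := hkm
  rw [orderOf_eq_iff (by omega)]
  refine ⟨tc_pow_one hkm hg, ?_⟩
  intro p hp hp0 hone
  have := tc_gpow_m hkm hg (p-1) (by omega)
  rw [show p - 1 + 1 = p from by omega, hone] at this
  simp at this
  omega

lemma tc_mapsTo : ∀ x : Fin n, x ∈ Finset.Icc k m → g x ∈ Finset.Icc k m := by
  obtain ⟨h1, h2, h3⟩ := hg
  have hkm' : (k:ℕ) < (m:ℕ) := hkm
  intro x hx
  rw [Finset.mem_Icc, Fin.le_def, Fin.le_def] at hx ⊢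
  rcases Nat.lt_or_ge (x:ℕ) (m:ℕ) with hxm | hxm
  · have := h1 x (by rw [Fin.le_def]; omega) (by rw [Fin.lt_def]; omega)
    omega
  · have : x = m := Fin.ext (by omega)
    rw [this, h2]
    omega

lemma tc_image_pow : ∀ j : ℕ, Finset.image (⇑(g^j)) (Finset.Icc k m) = Finset.Icc k m := by
  intro j
  induction j with
  | zero => simp
  | succ p ih =>
      have h1 : Finset.image (⇑g) (Finset.Icc k m) = Finset.Icc k m := by
        apply Finset.eq_of_subset_of_card_le
        · intro y hy
          rw [Finset.mem_image] at hy
          obtain ⟨x, hx, rfl⟩ := hy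
          exact tc_mapsTo hkm hg x hx
        · rw [Finset.card_image_of_injective _ (Equiv.injective g)]
      rw [pow_succ', Equiv.Perm.coe_mul, ← Finset.image_image, ih, h1]

end TCycle


lemma card_perm_image_eq {α : Type*} [Fintype α] [DecidableEq α] (S T : Finset α)
    (hST : S.card = T.card) :
    ((univ : Finset (Equiv.Perm α)).filter fun τ : Equiv.Perm α => S.image ⇑τ = T).card
      = (Nat.factorial S.card) * (Nat.factorial (Fintype.card α - S.card)) := by
  classical
  have e0 : {x // x ∈ S} ≃ {x // x ∈ T} :=
    Fintype.equivOfCardEq (by simp [Fintype.card_coe, hST])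
  have e1 : {x // ¬ x ∈ S} ≃ {x // ¬ x ∈ T} :=
    Fintype.equivOfCardEq (by
      rw [Fintype.card_subtype_compl, Fintype.card_subtype_compl]
      simp [Fintype.card_coe, hST])
  set τ₀ : Equiv.Perm α :=
    (Equiv.sumCompl (· ∈ S)).symm.trans ((e0.sumCongr e1).trans (Equiv.sumCompl (· ∈ T)))
    with hτ₀def
  have hτ₀pos : ∀ x (hx : x ∈ S), τ₀ x = (e0 ⟨x, hx⟩ : {x // x ∈ T}).1 := by
    intro x hx
    simp [hτ₀def, Equiv.sumCompl_symm_apply_of_pos (p := (· ∈ S)) hx]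
  have hτ₀mem : ∀ x, x ∈ S → τ₀ x ∈ T := fun x hx => by
    rw [hτ₀pos x hx]; exact (e0 ⟨x, hx⟩).2
  have hτ₀ : S.image τ₀ = T := by
    apply Finset.eq_of_subset_of_card_le
    · intro y hy
      obtain ⟨x, hx, rfl⟩ := Finset.mem_image.1 hy
      exact hτ₀mem x hx
    · rw [Finset.card_image_of_injective _ (Equiv.injective τ₀), hST]
  -- preserved sets under subtypeCongr
  have hpres : ∀ (ρ1 : Equiv.Perm {x // x ∈ S}) (ρ2 : Equiv.Perm {x // ¬ x ∈ S}),
      S.image (Equiv.Perm.subtypeCongr ρ1 ρ2) = S := by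
    intro ρ1 ρ2
    apply Finset.eq_of_subset_of_card_le
    · intro y hy
      obtain ⟨x, hx, rfl⟩ := Finset.mem_image.1 hy
      rw [Equiv.Perm.subtypeCongr.left_apply _ _ hx]
      exact (ρ1 ⟨x, hx⟩).2
    · rw [Finset.card_image_of_injective _ (Equiv.injective _)]
  have himg : (univ : Finset (Equiv.Perm α)).filter (fun τ : Equiv.Perm α => S.image ⇑τ = T)
      = Finset.image (fun ρ : Equiv.Perm {x // x ∈ S} × Equiv.Perm {x // ¬ x ∈ S} =>
          τ₀ * Equiv.Perm.subtypeCongr ρ.1 ρ.2) univ := by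
    ext τ
    simp only [Finset.mem_filter, Finset.mem_univ, true_and, Finset.mem_image]
    constructor
    · intro hτ
      set π := τ₀⁻¹ * τ with hπ
      have hpim : S.image π = S := by
        have h1 : S.image ⇑τ = T := hτ
        have : ⇑π = ⇑τ₀⁻¹ ∘ ⇑τ := by
          funext x; simp [hπ, Equiv.Perm.mul_apply]
        rw [this, ← Finset.image_image, h1]
        -- image τ₀⁻¹ T = S
        rw [← hτ₀, Finset.image_image]
        have : (⇑τ₀⁻¹ ∘ ⇑τ₀) = id := by
          funext x; simp
        rw [this, Finset.image_id]
      have hiff : ∀ x, x ∈ S ↔ π x ∈ S := by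
        intro x
        constructor
        · intro hx; rw [← hpim]; exact Finset.mem_image_of_mem _ hx
        · intro hx
          rw [← hpim] at hx
          obtain ⟨y, hy, hyx⟩ := Finset.mem_image.1 hx
          rwa [← π.injective hyx]
      refine ⟨(π.subtypePerm (fun x => (hiff x).symm), π.subtypePerm (fun x => not_congr (hiff x).symm)), ?_⟩
      have hcongr : Equiv.Perm.subtypeCongr (π.subtypePerm (fun x => (hiff x).symm))
          (π.subtypePerm (fun x => not_congr (hiff x).symm)) = π := by
        apply Equiv.ext
        intro x
        by_cases hx : x ∈ S
        · rw [Equiv.Perm.subtypeCongr.left_apply _ _ hx]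
          rfl
        · rw [Equiv.Perm.subtypeCongr.right_apply _ _ hx]
          rfl
      rw [hcongr, hπ, mul_inv_cancel_left]
    · rintro ⟨ρ, rfl⟩
      have : ⇑(τ₀ * Equiv.Perm.subtypeCongr ρ.1 ρ.2) = ⇑τ₀ ∘ ⇑(Equiv.Perm.subtypeCongr ρ.1 ρ.2) := by
        funext x; simp [Equiv.Perm.mul_apply]
      rw [this, ← Finset.image_image, hpres, hτ₀]
  rw [himg]
  have hinj : Function.Injective
      (fun ρ : Equiv.Perm {x // x ∈ S} × Equiv.Perm {x // ¬ x ∈ S} =>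
        τ₀ * Equiv.Perm.subtypeCongr ρ.1 ρ.2) := by
    rintro ⟨ρ1, ρ2⟩ ⟨ρ1', ρ2'⟩ h
    simp only at h
    have h2 : Equiv.Perm.subtypeCongr ρ1 ρ2 = Equiv.Perm.subtypeCongr ρ1' ρ2' :=
      mul_left_cancel h
    have hfst : ρ1 = ρ1' := by
      apply Equiv.ext
      rintro ⟨x, hx⟩
      have := congrArg (fun σ : Equiv.Perm α => σ x) h2
      simp only [Equiv.Perm.subtypeCongr.left_apply _ _ hx] at this
      exact Subtype.ext this
    have hsnd : ρ2 = ρ2' := by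
      apply Equiv.ext
      rintro ⟨x, hx⟩
      have := congrArg (fun σ : Equiv.Perm α => σ x) h2
      simp only [Equiv.Perm.subtypeCongr.right_apply _ _ hx] at this
      exact Subtype.ext this
    rw [Prod.ext_iff]; exact ⟨hfst, hsnd⟩
  rw [Finset.card_image_of_injective _ hinj, Finset.card_univ, Fintype.card_prod,
    Fintype.card_perm, Fintype.card_perm, Fintype.card_coe, Fintype.card_subtype_compl,
    Fintype.card_coe]


lemma det_factor {n : ℕ} (q : Fin n → Fin n → ℂ) {k m : Fin n} (hkm : k < m)
    {g : Equiv.Perm (Fin n)} (hg : IsTCycle k m g) :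
    ((1 : PermMatrix n) - twistMat n q g).det
      = ∏ T ∈ Finset.powersetCard ((m:ℕ) - (k:ℕ) + 1) (univ : Finset (Fin n)),
          (1 - sigmaT q T) ^
            (Nat.factorial ((m:ℕ) - (k:ℕ)) * Nat.factorial (n - ((m:ℕ) - (k:ℕ) + 1))) := by
  classical
  have hkm' : (k:ℕ) < (m:ℕ) := hkm
  set d : ℕ := (m:ℕ) - (k:ℕ) + 1 with hdd
  set S : Finset (Fin n) := Finset.Icc k m with hS
  have hSd : S.card = d := by rw [hS, Fin.card_Icc]; omega
  have hmS : m ∈ S := Finset.mem_Icc.2 ⟨le_of_lt hkm, le_rfl⟩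
  -- the weight function
  set c : Equiv.Perm (Fin n) → ℂ :=
    fun τ => ∏ x ∈ Finset.Ico k m, q (τ m) (τ x) with hc
  have htwist : twistMat n q g = Matrix.of fun σ τ => if σ = τ * g⁻¹ then c τ else 0 := by
    funext σ τ
    simp only [twistMat, Matrix.of_apply, hc]
    congr 1
    rw [tc_invSet_s13 hkm hg, Finset.prod_product]
    simp
  -- the orbit product
  have horb : ∀ τ : Equiv.Perm (Fin n),
      ∏ j ∈ Finset.range d, c (τ * g ^ j) = sigmaT q (S.image ⇑τ) := by
    intro τ
    have herase : Finset.Ico k m = S.erase m := (Finset.Icc_erase_right k m).symm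
    have hstep1 : ∀ j : ℕ, c (τ * g ^ j)
        = ∏ x ∈ S.erase ((g^j) m), q (τ ((g^j) m)) (τ x) := by
      intro j
      rw [hc]
      have h1 : ∀ x : Fin n, (τ * g ^ j) x = τ ((g^j) x) := fun x => rfl
      simp only [h1]
      have h2 : S.erase ((g^j) m) = Finset.image (⇑(g^j)) (Finset.Ico k m) := by
        rw [herase, Finset.image_erase (Equiv.injective _), tc_image_pow hkm hg j]
      rw [h2, Finset.prod_image (fun x _ y _ h => Equiv.injective _ h)]
    simp only [hstep1]
    -- reindex j ↦ g^j m
    have hval : ∀ p : ℕ, 0 < p → p < d → (((g^p) m : Fin n) : ℕ) = (k:ℕ) + p - 1 := by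
      intro p hp0 hpd
      have := tc_gpow_m hkm hg (p-1) (by omega)
      rw [show p - 1 + 1 = p from by omega] at this
      omega
    have hbij : ∏ j ∈ Finset.range d,
        (∏ x ∈ S.erase ((g^j) m), q (τ ((g^j) m)) (τ x))
        = ∏ b ∈ S, ∏ x ∈ S.erase b, q (τ b) (τ x) := by
      apply Finset.prod_bij (i := fun j _ => (g^j) m)
      · intro j _
        rw [hS, ← tc_image_pow hkm hg j]
        exact Finset.mem_image_of_mem _ hmS
      · intro j1 hj1 j2 hj2 h
        rw [Finset.mem_range] at hj1 hj2
        rcases Nat.eq_zero_or_pos j1 with h1 | h1 <;> rcases Nat.eq_zero_or_pos j2 with h2 | h2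
        · omega
        · exfalso
          subst h1
          have := hval j2 h2 hj2
          simp only [pow_zero, Equiv.Perm.coe_one, id_eq] at h
          rw [← h] at this
          omega
        · exfalso
          subst h2
          have := hval j1 h1 hj1
          simp only [pow_zero, Equiv.Perm.coe_one, id_eq] at h
          rw [h] at this
          omega
        · have e1 := hval j1 h1 hj1
          have e2 := hval j2 h2 hj2
          rw [h] at e1
          omega
      · intro b hb
        rw [hS, Finset.mem_Icc, Fin.le_def, Fin.le_def] at hb
        obtain ⟨j, hj, hjb⟩ := tc_orbit hkm hg b hb.1 hb.2
        exact ⟨j, Finset.mem_range.2 hj, hjb⟩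
      · intro j _
        rfl
    rw [hbij]
    -- now to sigmaT
    rw [sigmaT]
    rw [show ((S.image ⇑τ) ×ˢ (S.image ⇑τ)).filter (fun p => p.1 ≠ p.2)
        = Finset.image (fun p : Fin n × Fin n => (τ p.1, τ p.2))
            ((S ×ˢ S).filter fun p => p.1 ≠ p.2) from ?_]
    · rw [Finset.prod_image]
      · rw [Finset.prod_filter, Finset.prod_product]
        apply Finset.prod_congr rfl
        intro b _
        rw [← Finset.prod_filter, Finset.filter_ne]
      · intro p _ p' _ h
        have h1 := congrArg Prod.fst h
        have h2 := congrArg Prod.snd h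
        simp only at h1 h2
        exact Prod.ext (τ.injective h1) (τ.injective h2)
    · ext p
      simp only [Finset.mem_filter, Finset.mem_product, Finset.mem_image, Finset.mem_product]
      constructor
      · rintro ⟨⟨h1, h2⟩, h3⟩
        obtain ⟨a, ha, hap⟩ := h1
        obtain ⟨b, hb, hbp⟩ := h2
        refine ⟨(a, b), ⟨⟨ha, hb⟩, ?_⟩, ?_⟩
        · intro hab
          apply h3
          rw [← hap, ← hbp]
          exact congrArg τ hab
        · exact Prod.ext hap hbp
      · rintro ⟨⟨a, b⟩, hab, rfl⟩
        obtain ⟨⟨ha, hb⟩, hab2⟩ := hab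
        exact ⟨⟨⟨a, ha, rfl⟩, ⟨b, hb, rfl⟩⟩, fun h => hab2 (τ.injective h)⟩
  -- apply the determinant lemma
  rw [htwist, det_one_sub_transMat g c, tc_orderOf hkm hg, ← hdd]
  simp only [horb]
  -- group by image
  have hmaps : ∀ o : Equiv.Perm (Fin n) ⧸ Subgroup.zpowers g, o ∈ (univ : Finset _) →
      S.image ⇑(o.out) ∈ Finset.powersetCard d (univ : Finset (Fin n)) := by
    intro o _
    rw [Finset.mem_powersetCard]
    exact ⟨Finset.subset_univ _, by
      rw [Finset.card_image_of_injective _ (Equiv.injective _), hSd]⟩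
  have himgS : ∀ j : ℕ, Finset.image ⇑(g^j) S = S := by
    intro j; rw [hS]; exact tc_image_pow hkm hg j
  have horder : orderOf g = d := tc_orderOf hkm hg
  have hmemz : ∀ j : ℕ, g ^ j ∈ Subgroup.zpowers g :=
    fun j => Subgroup.pow_mem _ (Subgroup.mem_zpowers g) j
  have hcoset : ∀ (o : Equiv.Perm (Fin n) ⧸ Subgroup.zpowers g) (j : ℕ),
      ((Quotient.out o * g ^ j : Equiv.Perm (Fin n)) :
        Equiv.Perm (Fin n) ⧸ Subgroup.zpowers g) = o := by
    intro o j
    rw [QuotientGroup.mk_mul_of_mem _ (hmemz j), QuotientGroup.out_eq']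
  rw [← Finset.prod_fiberwise_of_maps_to hmaps
    (fun o => 1 - sigmaT q (Finset.image ⇑(Quotient.out o) S))]
  apply Finset.prod_congr rfl
  intro T hT
  have hTcard : T.card = d := (Finset.mem_powersetCard.1 hT).2
  have hconst : ∀ o ∈ Finset.filter
      (fun o : Equiv.Perm (Fin n) ⧸ Subgroup.zpowers g => Finset.image ⇑(Quotient.out o) S = T) univ,
      (1 - sigmaT q (Finset.image ⇑(Quotient.out o) S)) = 1 - sigmaT q T := by
    intro o ho; rw [(Finset.mem_filter.1 ho).2]
  rw [Finset.prod_congr rfl hconst, Finset.prod_const]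
  congr 1
  -- cardinality of the fiber
  have hPcard := card_perm_image_eq S T (by rw [hSd, hTcard])
  have hcard : ((univ : Finset (Fin d)) ×ˢ
      (Finset.filter (fun o : Equiv.Perm (Fin n) ⧸ Subgroup.zpowers g => Finset.image ⇑(Quotient.out o) S = T) univ)).card
      = ((univ : Finset (Equiv.Perm (Fin n))).filter
          fun τ : Equiv.Perm (Fin n) => S.image ⇑τ = T).card := by
    apply Finset.card_bij (i := fun p _ => (Quotient.out p.2) * g ^ ((p.1 : Fin d) : ℕ))
    · rintro ⟨j, o⟩ hp
      have ho := (Finset.mem_filter.1 (Finset.mem_product.1 hp).2).2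
      refine Finset.mem_filter.2 ⟨Finset.mem_univ _, ?_⟩
      rw [Equiv.Perm.coe_mul, ← Finset.image_image, himgS, ho]
    · rintro ⟨i, o⟩ hp ⟨i', o'⟩ hp' h
      simp only at h
      have ho : o = o' := by
        have h1 := congrArg (QuotientGroup.mk (s := Subgroup.zpowers g)) h
        rwa [hcoset, hcoset] at h1
      subst ho
      have h2 : g ^ (i:ℕ) = g ^ (i':ℕ) := mul_left_cancel h
      have h3 := pow_injOn_Iio_orderOf
        (Set.mem_Iio.2 (by rw [horder]; exact i.isLt))
        (Set.mem_Iio.2 (by rw [horder]; exact i'.isLt)) h2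
      exact Prod.ext (Fin.ext h3) rfl
    · intro τ hτ
      have hτ2 := (Finset.mem_filter.1 hτ).2
      have h0 : (((↑τ : Equiv.Perm (Fin n) ⧸ Subgroup.zpowers g).out :
          Equiv.Perm (Fin n)) : Equiv.Perm (Fin n) ⧸ Subgroup.zpowers g)
          = (↑τ : Equiv.Perm (Fin n) ⧸ Subgroup.zpowers g) := QuotientGroup.out_eq' _
      have h1 : ((↑τ : Equiv.Perm (Fin n) ⧸ Subgroup.zpowers g).out)⁻¹ * τ
          ∈ Subgroup.zpowers g := QuotientGroup.eq.mp h0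
      obtain ⟨jn, hj⟩ := (Submonoid.mem_powers_iff _ _).1 (mem_powers_iff_mem_zpowers.2 h1)
      have hlt : jn % orderOf g < d := by rw [horder] at *; exact Nat.mod_lt _ (by omega)
      have heq : (↑τ : Equiv.Perm (Fin n) ⧸ Subgroup.zpowers g).out
          * g ^ (jn % orderOf g) = τ := by
        rw [pow_mod_orderOf, hj, mul_inv_cancel_left]
      have hout : (↑τ : Equiv.Perm (Fin n) ⧸ Subgroup.zpowers g).out
          = τ * (g ^ (jn % orderOf g))⁻¹ := by
        rw [eq_mul_inv_iff_mul_eq]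
        exact heq
      have himinv : Finset.image ⇑((g ^ (jn % orderOf g))⁻¹) S = S := by
        conv_lhs => rw [← himgS (jn % orderOf g)]
        rw [Finset.image_image]
        have hcomp : (⇑((g ^ (jn % orderOf g))⁻¹) ∘ ⇑(g ^ (jn % orderOf g))) = id := by
          funext x; simp
        rw [hcomp, Finset.image_id]
      refine ⟨(⟨jn % orderOf g, hlt⟩, (↑τ : Equiv.Perm (Fin n) ⧸ Subgroup.zpowers g)),
        Finset.mem_product.2 ⟨Finset.mem_univ _, Finset.mem_filter.2 ⟨Finset.mem_univ _, ?_⟩⟩,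
        heq⟩
      rw [hout, Equiv.Perm.coe_mul, ← Finset.image_image, himinv, hτ2]
  rw [Finset.card_product, Finset.card_univ, Fintype.card_fin] at hcard
  rw [hPcard, hSd, Fintype.card_fin] at hcard
  have hdfac : Nat.factorial d = d * Nat.factorial ((m:ℕ) - (k:ℕ)) := by
    rw [hdd]; exact Nat.factorial_succ _
  apply Nat.eq_of_mul_eq_mul_left (show 0 < d by omega)
  rw [hcard, hdfac]
  ring

/-- For `1 ≤ k ≤ n−1`, the determinant of the ordered product
`C_{Q,n−k+1} = (I − M_q(t_{n,k})) · (I − M_q(t_{n−1,k})) ⋯ (I − M_q(t_{k+1,k}))`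
factors as `∏_{m=2}^{n−k+1} ∏_T (1 − σ_T)^{(m−1)!·(n−m)!}`, the inner product being
over all subsets `T ⊆ Fin n` of cardinality `m`. -/
theorem det_C_factorization (n : ℕ) (hn : 1 ≤ n) (q : Fin n → Fin n → ℂ)
    (t : Fin n → Fin n → Equiv.Perm (Fin n))
    (ht : ∀ a b : Fin n, a ≤ b → IsTCycle a b (t b a))
    (k : Fin n) (hk : (k : ℕ) + 1 < n) :
    ((((List.finRange n).filter fun m => decide (k < m)).reverse.map
        fun m => (1 : PermMatrix n) - twistMat n q (t m k)).prod).det =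
      ∏ m ∈ Finset.Icc 2 (n - (k : ℕ)),
        ∏ T ∈ Finset.powersetCard m (Finset.univ : Finset (Fin n)),
          (1 - sigmaT q T) ^ (Nat.factorial (m - 1) * Nat.factorial (n - m)) := by
  classical
  have hn0 : 0 < n := hn
  have h1 : ∀ L : List (PermMatrix n), (L.prod).det = (L.map Matrix.det).prod := by
    intro L
    rw [← Matrix.coe_detMonoidHom]
    exact MonoidHom.map_list_prod Matrix.detMonoidHom L
  rw [h1]
  simp only [List.map_reverse, List.prod_reverse, List.map_map]
  have hnodup : ((List.finRange n).filter (fun m => decide (k < m))).Nodup :=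
    (List.nodup_finRange n).filter _
  rw [← List.prod_toFinset _ hnodup, List.toFinset_filter, List.toFinset_finRange]
  have hset : Finset.filter (fun x => (fun m => decide (k < m)) x = true) Finset.univ
      = Finset.filter (fun x => k < x) (Finset.univ : Finset (Fin n)) := by
    apply Finset.filter_congr; intro x _; simp
  rw [hset]
  apply Finset.prod_nbij' (i := fun m : Fin n => (m:ℕ) - (k:ℕ) + 1)
    (j := fun a : ℕ => (⟨((k:ℕ) + a - 1) % n, Nat.mod_lt _ hn0⟩ : Fin n))
  · intro m hm
    have hkm : k < m := (Finset.mem_filter.1 hm).2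
    have hkm' : (k:ℕ) < (m:ℕ) := hkm
    have hmn := m.isLt
    rw [Finset.mem_Icc]
    omega
  · intro a ha
    rw [Finset.mem_Icc] at ha
    refine Finset.mem_filter.2 ⟨Finset.mem_univ _, ?_⟩
    rw [Fin.lt_def]
    simp only
    rw [Nat.mod_eq_of_lt (by omega)]
    omega
  · intro m hm
    have hkm : k < m := (Finset.mem_filter.1 hm).2
    have hkm' : (k:ℕ) < (m:ℕ) := hkm
    have hmn := m.isLt
    apply Fin.ext
    simp only
    rw [Nat.mod_eq_of_lt (by omega)]
    omega
  · intro a ha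
    rw [Finset.mem_Icc] at ha
    simp only
    rw [Nat.mod_eq_of_lt (by omega)]
    omega
  · intro m hm
    have hkm : k < m := (Finset.mem_filter.1 hm).2
    have hkm' : (k:ℕ) < (m:ℕ) := hkm
    simp only [Function.comp_apply]
    rw [det_factor q hkm (ht k m (le_of_lt hkm))]
    apply Finset.prod_congr rfl
    intro T _
    congr 2
end

section
/- For every i ∈ Fin N, every word x = x₁x₂⋯x_m ∈ FreeMonoid (Fin N), and every element y of the free algebra B, the twisted Leibniz rule holds: ∂_i(x·y) = ∂_i(x)·y + (∏_{k=1}^{m} q(i, x_k)) · x·∂_i(y), where x·y denotes the product in B of the basis element corresponding to x with y. -/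
/-- The free unital associative ℂ-algebra `B` on `N` generators, realized as the monoid
algebra of the free monoid on `Fin N`. -/
abbrev FreeAlg (N : ℕ) := MonoidAlgebra ℂ (FreeMonoid (Fin N))

/-- The value of the multiparametric partial derivative `∂_i` on the basis word
`w = w₁w₂⋯w_m`:  `∂_i(w) = ∑_{k : w_k = i} (∏_{l=1}^{k−1} q(i, w_l)) · (w with its
k-th letter deleted)`. -/
noncomputable def qDerivWord (N : ℕ) (q : Fin N → Fin N → ℂ) (i : Fin N)
    (w : FreeMonoid (Fin N)) : FreeAlg N :=
  ∑ k : Fin (FreeMonoid.toList w).length,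
    if (FreeMonoid.toList w).get k = i then
      MonoidAlgebra.single
        (FreeMonoid.ofList
          ((FreeMonoid.toList w).take (k : ℕ) ++ (FreeMonoid.toList w).drop ((k : ℕ) + 1)))
        (((FreeMonoid.toList w).take (k : ℕ)).map (q i)).prod
    else 0

/-- The multiparametric partial derivative `∂_i`, the ℂ-linear endomorphism of `B`
acting on basis words by `qDerivWord`. -/
noncomputable def qDeriv (N : ℕ) (q : Fin N → Fin N → ℂ) (i : Fin N) :
    FreeAlg N →ₗ[ℂ] FreeAlg N :=
  (Finsupp.lsum ℂ fun w => LinearMap.toSpanSingleton ℂ (FreeAlg N) (qDerivWord N q i w)) ∘ₗ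
    (MonoidAlgebra.coeffLinearEquiv ℂ : FreeAlg N ≃ₗ[ℂ] (FreeMonoid (Fin N) →₀ ℂ)).toLinearMap

noncomputable def qD (N : ℕ) (q : Fin N → Fin N → ℂ) (i : Fin N) :
    List (Fin N) → FreeAlg N
  | [] => 0
  | a :: t => (if a = i then MonoidAlgebra.single (FreeMonoid.ofList t) (1 : ℂ) else 0)
      + q i a • (MonoidAlgebra.single (FreeMonoid.ofList [a]) (1 : ℂ) * qD N q i t)

lemma qDerivWord_eq (N : ℕ) (q : Fin N → Fin N → ℂ) (i : Fin N) (l : List (Fin N)) :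
    qDerivWord N q i (FreeMonoid.ofList l) = qD N q i l := by
  have hw : ∀ l : List (Fin N), qDerivWord N q i (FreeMonoid.ofList l) =
      ∑ k : Fin l.length, if l.get k = i then
        MonoidAlgebra.single (FreeMonoid.ofList (l.take (k : ℕ) ++ l.drop ((k : ℕ) + 1)))
          ((l.take (k : ℕ)).map (q i)).prod else 0 := fun l => rfl
  induction l with
  | nil => rw [hw]; simp [qD]
  | cons a t ih =>
    rw [qD, ← ih, hw, hw]
    simp only [List.length_cons]
    erw [Fin.sum_univ_succ]
    simp only [Fin.val_zero, List.take_zero, List.map_nil, List.prod_nil, List.get_eq_getElem,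
      Fin.val_succ, List.getElem_cons_succ, List.getElem_cons_zero, List.drop_succ_cons,
      List.take_succ_cons, List.nil_append, List.drop_zero, List.map_cons, List.prod_cons]
    congr 1
    rw [Finset.mul_sum, Finset.smul_sum]
    refine Finset.sum_congr rfl fun k _ => ?_
    split_ifs with h
    · rw [MonoidAlgebra.single_mul_single, ← FreeMonoid.ofList_append,
        MonoidAlgebra.smul_single']
      simp [mul_comm]
    · simp

lemma single_ofList_mul (N : ℕ) (l₁ l₂ : List (Fin N)) :
    (MonoidAlgebra.single (FreeMonoid.ofList (l₁ ++ l₂)) (1 : ℂ) : FreeAlg N) =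
      MonoidAlgebra.single (FreeMonoid.ofList l₁) (1 : ℂ) *
        MonoidAlgebra.single (FreeMonoid.ofList l₂) (1 : ℂ) := by
  rw [MonoidAlgebra.single_mul_single, ← FreeMonoid.ofList_append, one_mul]

lemma qD_append (N : ℕ) (q : Fin N → Fin N → ℂ) (i : Fin N) (l₁ l₂ : List (Fin N)) :
    qD N q i (l₁ ++ l₂) =
      qD N q i l₁ * MonoidAlgebra.single (FreeMonoid.ofList l₂) (1 : ℂ) +
        ((l₁.map (q i)).prod) •
          (MonoidAlgebra.single (FreeMonoid.ofList l₁) (1 : ℂ) * qD N q i l₂) := by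
  induction l₁ with
  | nil => simp [qD, ← MonoidAlgebra.one_def]
  | cons a t ih =>
    have h1 : (a :: t) ++ l₂ = a :: (t ++ l₂) := rfl
    rw [h1, qD, qD, ih, single_ofList_mul N t l₂,
      show (a :: t) = [a] ++ t from rfl, single_ofList_mul N [a] t]
    simp only [List.map_cons, List.map_append, List.map_nil, List.prod_cons, List.prod_nil,
      List.prod_append, mul_one, add_mul, mul_add, smul_add, smul_mul_assoc,
      mul_smul_comm, ite_mul, zero_mul, mul_assoc, smul_smul]
    rw [add_assoc]

lemma qDeriv_single (N : ℕ) (q : Fin N → Fin N → ℂ) (i : Fin N)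
    (w : FreeMonoid (Fin N)) (c : ℂ) :
    qDeriv N q i (MonoidAlgebra.single w c) = c • qDerivWord N q i w := by
  classical
  simp only [qDeriv, LinearMap.coe_comp, Function.comp_apply, LinearEquiv.coe_coe,
    MonoidAlgebra.coeffLinearEquiv_apply, MonoidAlgebra.coeff_single, Finsupp.lsum_single,
    LinearMap.toSpanSingleton_apply]

lemma qDerivWord_toList (N : ℕ) (q : Fin N → Fin N → ℂ) (i : Fin N)
    (z : FreeMonoid (Fin N)) :
    qDerivWord N q i z = qD N q i (FreeMonoid.toList z) := by
  conv_lhs => rw [← FreeMonoid.ofList_toList z]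
  rw [qDerivWord_eq]

/-- The twisted Leibniz rule: for every word `x = x₁⋯x_m` and every `y ∈ B`,
`∂_i(x·y) = ∂_i(x)·y + (∏_{k=1}^{m} q(i, x_k)) · x·∂_i(y)`. -/
theorem qDeriv_twisted_leibniz (N : ℕ) (hN : 1 ≤ N) (q : Fin N → Fin N → ℂ)
    (i : Fin N) (x : FreeMonoid (Fin N)) (y : FreeAlg N) :
    qDeriv N q i (MonoidAlgebra.of ℂ (FreeMonoid (Fin N)) x * y) =
      qDeriv N q i (MonoidAlgebra.of ℂ (FreeMonoid (Fin N)) x) * y +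
        ((FreeMonoid.toList x).map (q i)).prod •
          (MonoidAlgebra.of ℂ (FreeMonoid (Fin N)) x * qDeriv N q i y) := by
  induction y using MonoidAlgebra.induction_linear with
  | zero => simp
  | add f g hf hg =>
    simp only [mul_add, map_add, smul_add, hf, hg]
    abel
  | single w c =>
    have hx : (MonoidAlgebra.of ℂ (FreeMonoid (Fin N)) x : FreeAlg N)
        = MonoidAlgebra.single x 1 := rfl
    rw [hx, MonoidAlgebra.single_mul_single, one_mul, qDeriv_single, qDeriv_single,
      qDeriv_single, qDerivWord_toList, qDerivWord_toList, qDerivWord_toList,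
      FreeMonoid.toList_mul, qD_append]
    rw [show (MonoidAlgebra.single w c : FreeAlg N) = c • MonoidAlgebra.single w (1:ℂ) from by
      simp [MonoidAlgebra.smul_single']]
    rw [FreeMonoid.ofList_toList, FreeMonoid.ofList_toList]
    simp only [one_smul, smul_add, smul_smul, mul_smul_comm, smul_mul_assoc]
    rw [mul_comm]
end
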